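/- arXiv:1612.04571 — 9 statements merged into one kernel-verified Lean document; each statement's English description precedes it below -/
import Mathlib

section
/- For every finite undirected simple graph G = (V, E) there exist a subset T ⊆ V and a map φ : V → T such that: (i) φ(u) = u for every u ∈ T, and for every v ∈ V \ T the vertices v and φ(v) are adjacent in G; (ii) no two vertices of T are adjacent in G (T is an independent set); and (iii) writing n_u = |{v ∈ V : φ(v) = u}| for u ∈ T, one has Σ_{u ∈ T} C(n_u, 2) ≤ |E|, where C(m,2) = m(m−1)/2. -/
open Finset

private theorem graph_shrink_aux {V : Type*} [Fintype V] [DecidableEq V]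
    (G : SimpleGraph V) [DecidableRel G.Adj] :
    ∀ n (S : Finset V), S.card ≤ n → ∃ (T : Finset V) (φ : V → V),
      T ⊆ S ∧ (∀ v ∈ S, φ v ∈ T) ∧ (∀ u ∈ T, φ u = u) ∧
      (∀ v ∈ S, v ∉ T → G.Adj v (φ v)) ∧
      (∀ u ∈ T, ∀ v ∈ T, ¬ G.Adj u v) ∧
      2 * ∑ u ∈ T, ((S.filter fun v => φ v = u).card).choose 2 ≤
        ((S ×ˢ S).filter fun p => G.Adj p.1 p.2).card := by
  intro n
  induction n with
  | zero =>
    intro S hS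
    have : S = ∅ := Finset.card_eq_zero.mp (Nat.le_zero.mp hS)
    subst this
    exact ⟨∅, id, by simp⟩
  | succ n ih =>
    intro S hS
    rcases S.eq_empty_or_nonempty with rfl | hne
    · exact ⟨∅, id, by simp⟩
    obtain ⟨u, huS, hmin⟩ := S.exists_min_image (fun x => (G.neighborFinset x ∩ S).card) hne
    set d := (G.neighborFinset u ∩ S).card with hd
    set C : Finset V := insert u (G.neighborFinset u ∩ S) with hCdef
    have hCS : C ⊆ S := by
      intro x hx
      rcases Finset.mem_insert.mp hx with rfl | hx
      · exact huS
      · exact (Finset.mem_inter.mp hx).2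
    have huC : u ∈ C := Finset.mem_insert_self _ _
    set S' : Finset V := S \ C with hS'def
    have hS'S : S' ⊆ S := Finset.sdiff_subset
    have huS' : u ∉ S' := fun h => (Finset.mem_sdiff.mp h).2 huC
    have hcard' : S'.card ≤ n := by
      have : S'.card < S.card := Finset.card_lt_card (Finset.ssubset_iff_of_subset hS'S |>.mpr ⟨u, huS, huS'⟩)
      omega
    obtain ⟨T', φ', hT'S', hφ'T', hφ'fix, hφ'adj, hT'ind, hsum'⟩ := ih S' hcard'
    have huT' : u ∉ T' := fun h => huS' (hT'S' h)
    set φ : V → V := fun v => if v ∈ S' then φ' v else u with hφdef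
    refine ⟨insert u T', φ, ?_, ?_, ?_, ?_, ?_, ?_⟩
    · intro x hx
      rcases Finset.mem_insert.mp hx with rfl | hx
      · exact huS
      · exact hS'S (hT'S' hx)
    · intro v hv
      by_cases h : v ∈ S'
      · simp only [hφdef, if_pos h]
        exact Finset.mem_insert_of_mem (hφ'T' v h)
      · simp only [hφdef, if_neg h]
        exact Finset.mem_insert_self _ _
    · intro t ht
      rcases Finset.mem_insert.mp ht with rfl | ht
      · simp [hφdef, huS']
      · have : t ∈ S' := hT'S' ht
        simp [hφdef, this, hφ'fix t ht]
    · intro v hv hvT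
      by_cases h : v ∈ S'
      · simp only [hφdef, if_pos h]
        exact hφ'adj v h (fun hh => hvT (Finset.mem_insert_of_mem hh))
      · simp only [hφdef, if_neg h]
        have hvC : v ∈ C := by
          by_contra hvC
          exact h (Finset.mem_sdiff.mpr ⟨hv, hvC⟩)
        rcases Finset.mem_insert.mp hvC with rfl | hvN
        · exact absurd (Finset.mem_insert_self _ _) hvT
        · exact (G.mem_neighborFinset u v).mp (Finset.mem_inter.mp hvN).1 |>.symm
    · intro a ha b hb hadj
      have key : ∀ x ∈ T', x ∉ C := fun x hx hC => (Finset.mem_sdiff.mp (hT'S' hx)).2 hC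
      rcases Finset.mem_insert.mp ha with ha' | ha' <;> rcases Finset.mem_insert.mp hb with hb' | hb'
      · rw [ha', hb'] at hadj; exact G.loopless.irrefl u hadj
      · exact key b hb' (Finset.mem_insert_of_mem (Finset.mem_inter.mpr
          ⟨(G.mem_neighborFinset u b).mpr (ha' ▸ hadj), hS'S (hT'S' hb')⟩))
      · exact key a ha' (Finset.mem_insert_of_mem (Finset.mem_inter.mpr
          ⟨(G.mem_neighborFinset u a).mpr (hb' ▸ hadj.symm), hS'S (hT'S' ha')⟩))
      · exact hT'ind a ha' b hb' hadj
    · -- the counting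
      -- fibers
      have hfibu : S.filter (fun v => φ v = u) = C := by
        ext v
        simp only [Finset.mem_filter, hφdef]
        constructor
        · rintro ⟨hvS, hveq⟩
          by_cases h : v ∈ S'
          · exfalso
            rw [if_pos h] at hveq
            exact huT' (hveq ▸ hφ'T' v h)
          · by_contra hvC
            exact h (Finset.mem_sdiff.mpr ⟨hvS, hvC⟩)
        · intro hvC
          have hvS' : v ∉ S' := fun h => (Finset.mem_sdiff.mp h).2 hvC
          exact ⟨hCS hvC, by rw [if_neg hvS']⟩
      have hfibt : ∀ t ∈ T', S.filter (fun v => φ v = t) = S'.filter (fun v => φ' v = t) := by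
        intro t ht
        ext v
        simp only [Finset.mem_filter, hφdef]
        constructor
        · rintro ⟨hvS, hveq⟩
          by_cases h : v ∈ S'
          · rw [if_pos h] at hveq; exact ⟨h, hveq⟩
          · rw [if_neg h] at hveq; exact absurd (hveq ▸ ht) huT'
        · rintro ⟨hvS', hveq⟩
          exact ⟨hS'S hvS', by rw [if_pos hvS']; exact hveq⟩
      have hCcard : C.card = d + 1 := by
        rw [hCdef, Finset.card_insert_of_notMem]
        intro h
        exact G.loopless.irrefl u ((G.mem_neighborFinset u u).mp (Finset.mem_inter.mp h).1)
      -- sum over insert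
      rw [Finset.sum_insert huT', hfibu, hCcard, Nat.mul_add,
        Finset.sum_congr rfl (fun t ht => by rw [hfibt t ht])]
      -- edge counting
      set P := (S ×ˢ S).filter fun p : V × V => G.Adj p.1 p.2 with hP
      set P' := (S' ×ˢ S').filter fun p : V × V => G.Adj p.1 p.2 with hP'
      set A := (S ×ˢ S).filter (fun p : V × V => G.Adj p.1 p.2 ∧ p.1 ∈ C) with hA
      have hP'P : P' ⊆ P := by
        apply Finset.filter_subset_filter
        exact Finset.product_subset_product hS'S hS'S
      have hAP : A ⊆ P := by
        intro p hp
        simp only [hA, hP, Finset.mem_filter] at *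
        tauto
      have hdisj : Disjoint P' A := by
        rw [Finset.disjoint_left]
        intro p hp hpA
        have h1 : p.1 ∈ S' := (Finset.mem_product.mp (Finset.mem_filter.mp hp).1).1
        have h2 : p.1 ∈ C := (Finset.mem_filter.mp hpA).2.2
        exact (Finset.mem_sdiff.mp h1).2 h2
      have hcards : P'.card + A.card ≤ P.card := by
        rw [← Finset.card_union_of_disjoint hdisj]
        exact Finset.card_le_card (Finset.union_subset hP'P hAP)
      have hAbiU : A = C.biUnion (fun a => {a} ×ˢ (G.neighborFinset a ∩ S)) := by
        ext ⟨x, y⟩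
        simp only [hA, Finset.mem_filter, Finset.mem_product, Finset.mem_biUnion,
          Finset.mem_singleton, Finset.mem_inter, SimpleGraph.mem_neighborFinset]
        constructor
        · rintro ⟨⟨hx, hy⟩, hadj, hxC⟩
          exact ⟨x, hxC, rfl, hadj, hy⟩
        · rintro ⟨a, haC, rfl, hadj, hy⟩
          exact ⟨⟨hCS haC, hy⟩, hadj, haC⟩
      have hAcard : (d + 1) * d ≤ A.card := by
        rw [hAbiU, Finset.card_biUnion]
        · calc (d + 1) * d = ∑ _a ∈ C, d := by rw [Finset.sum_const, smul_eq_mul, hCcard, Nat.mul_comm]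
            _ ≤ ∑ a ∈ C, ({a} ×ˢ (G.neighborFinset a ∩ S)).card := by
                apply Finset.sum_le_sum
                intro a haC
                rw [Finset.card_product, Finset.card_singleton, Nat.one_mul]
                exact hmin a (hCS haC)
        · intro a _ b _ hab
          rw [Function.onFun, Finset.disjoint_left]
          rintro ⟨x, y⟩ hx hy
          simp only [Finset.mem_product, Finset.mem_singleton] at hx hy
          exact hab (hx.1.symm.trans hy.1)
      have hchoose : 2 * (d + 1).choose 2 = (d + 1) * d := by
        rw [Nat.choose_two_right]
        simp only [Nat.add_sub_cancel]
        have hdvd : 2 ∣ (d + 1) * d := by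
          rcases Nat.even_or_odd d with h | h
          · exact Dvd.dvd.mul_left h.two_dvd _
          · exact Dvd.dvd.mul_right (h.add_one).two_dvd _
        rw [Nat.mul_div_cancel' hdvd]
      rw [hchoose]
      calc (d + 1) * d + 2 * ∑ t ∈ T', ((S'.filter fun v => φ' v = t).card).choose 2
          ≤ A.card + P'.card := Nat.add_le_add hAcard hsum'
        _ = P'.card + A.card := Nat.add_comm _ _
        _ ≤ P.card := hcards

/-- For every finite undirected simple graph `G` there exist an independent set `T`
and a map `φ : V → T` fixing `T` pointwise, sending every vertex outside `T` to a
neighbor, such that `Σ_{u ∈ T} C(n_u, 2) ≤ |E|` where `n_u = |φ⁻¹(u)|`. -/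
theorem graph_shrink {V : Type*} [Fintype V] [DecidableEq V]
    (G : SimpleGraph V) [DecidableRel G.Adj] :
    ∃ (T : Finset V) (φ : V → V),
      (∀ v : V, φ v ∈ T) ∧
      (∀ u ∈ T, φ u = u) ∧
      (∀ v : V, v ∉ T → G.Adj v (φ v)) ∧
      (∀ u ∈ T, ∀ v ∈ T, ¬ G.Adj u v) ∧
      ∑ u ∈ T, ((Finset.univ.filter fun v : V => φ v = u).card).choose 2 ≤
        G.edgeFinset.card := by
  obtain ⟨T, φ, _, hφT, hfix, hadj, hind, hsum⟩ :=
    graph_shrink_aux G (Finset.univ.card) Finset.univ le_rfl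
  refine ⟨T, φ, fun v => hφT v (Finset.mem_univ v), hfix,
    fun v hv => hadj v (Finset.mem_univ v) hv, hind, ?_⟩
  have hpairs : ((Finset.univ ×ˢ Finset.univ : Finset (V × V)).filter
      fun p => G.Adj p.1 p.2).card = 2 * G.edgeFinset.card := by
    rw [← SimpleGraph.sum_degrees_eq_twice_card_edges]
    rw [Finset.card_eq_sum_card_fiberwise (f := Prod.fst) (t := Finset.univ)
      (fun p _ => Finset.mem_univ _)]
    apply Finset.sum_congr rfl
    intro a _
    have hfib : (((Finset.univ ×ˢ Finset.univ : Finset (V × V)).filter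
        fun p => G.Adj p.1 p.2).filter fun p => p.1 = a) =
        (G.neighborFinset a).map ⟨Prod.mk a, fun x y h => by simpa using h⟩ := by
      ext ⟨x, y⟩
      simp only [Finset.mem_filter, Finset.mem_product, Finset.mem_univ, true_and,
        Finset.mem_map, Function.Embedding.coeFn_mk, SimpleGraph.mem_neighborFinset,
        Prod.mk.injEq]
      constructor
      · rintro ⟨hadj', rfl⟩
        exact ⟨y, hadj', rfl⟩
      · rintro ⟨b, hb, rfl, rfl⟩
        exact ⟨hb, rfl⟩
    rw [hfib, Finset.card_map, SimpleGraph.degree]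
  rw [hpairs] at hsum
  exact Nat.le_of_mul_le_mul_left hsum (by norm_num)
end

section
/- Let x_1, …, x_n ∈ ℝ^d with n ≥ 1, let β, r > 0, and let N_β = |{(i,j) : 1 ≤ i < j ≤ n, ‖x_i − x_j‖₂ ≤ βr}|. Then for every x_0 ∈ ℝ^d, max_{1≤i≤n} ‖x_i − x_0‖₂ ≥ ((n² / (2N_β + n))^{1/d} − 1) · βr / 2. -/
open Finset Metric MeasureTheory
open scoped ENNReal

lemma caroWei {ι : Type*} [DecidableEq ι] (rel : ι → ι → Prop) [DecidableRel rel]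
    (hsymm : ∀ a b, rel a b → rel b a) (hirr : ∀ a, ¬ rel a a) (A : Finset ι) :
    ∃ S : Finset ι, S ⊆ A ∧ (∀ a ∈ S, ∀ b ∈ S, ¬ rel a b) ∧
      ∑ v ∈ A, (1 : ℝ) / ((A.filter (rel v)).card + 1) ≤ S.card := by
  induction A using Finset.strongInduction with
  | _ A ih =>
    rcases A.eq_empty_or_nonempty with h | hA
    · exact ⟨∅, by simp [h]⟩
    obtain ⟨v, hvA, hvmin⟩ := A.exists_min_image (fun v => (A.filter (rel v)).card) hA
    set N : Finset ι := insert v (A.filter (rel v)) with hN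
    have hNA : N ⊆ A := insert_subset hvA (filter_subset _ _)
    have hvN : v ∈ N := mem_insert_self _ _
    have hAA : A \ N ⊂ A := Finset.sdiff_ssubset hNA ⟨v, hvN⟩
    obtain ⟨S', hS'sub, hS'ind, hS'sum⟩ := ih (A \ N) hAA
    have hvS' : v ∉ S' := fun h => (mem_sdiff.mp (hS'sub h)).2 hvN
    have key : ∀ b ∈ S', ¬ rel v b := by
      intro b hb hrel
      exact (mem_sdiff.mp (hS'sub hb)).2
        (mem_insert_of_mem (mem_filter.mpr ⟨(mem_sdiff.mp (hS'sub hb)).1, hrel⟩))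
    refine ⟨insert v S', insert_subset hvA (hS'sub.trans (sdiff_subset)), ?_, ?_⟩
    · intro a ha b hb
      rcases mem_insert.mp ha with rfl | ha'
      · rcases mem_insert.mp hb with rfl | hb'
        · exact hirr _
        · exact key b hb'
      · rcases mem_insert.mp hb with rfl | hb'
        · exact fun hrel => key a ha' (hsymm _ _ hrel)
        · exact hS'ind a ha' b hb'
    · rw [card_insert_of_notMem hvS']
      push_cast
      have hsplit : ∑ u ∈ A \ N, (1:ℝ) / ((A.filter (rel u)).card + 1)
          + ∑ u ∈ N, (1:ℝ) / ((A.filter (rel u)).card + 1)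
          = ∑ u ∈ A, (1:ℝ) / ((A.filter (rel u)).card + 1) := Finset.sum_sdiff hNA
      rw [← hsplit]
      have h1 : ∑ u ∈ N, (1:ℝ) / ((A.filter (rel u)).card + 1) ≤ 1 := by
        have hcard : (N.card : ℝ) ≤ (A.filter (rel v)).card + 1 := by
          exact_mod_cast card_insert_le _ _
        calc ∑ u ∈ N, (1:ℝ) / ((A.filter (rel u)).card + 1)
            ≤ ∑ u ∈ N, (1:ℝ) / ((A.filter (rel v)).card + 1) := by
              refine Finset.sum_le_sum fun u hu => ?_
              have hd := hvmin u (hNA hu)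
              apply one_div_le_one_div_of_le
              · positivity
              · exact_mod_cast Nat.add_le_add_right hd 1
          _ = N.card / ((A.filter (rel v)).card + 1) := by
              rw [Finset.sum_const]
              ring
          _ ≤ 1 := by
              rw [div_le_one (by positivity)]
              exact hcard
      have h2 : ∑ u ∈ A \ N, (1:ℝ) / ((A.filter (rel u)).card + 1)
          ≤ ∑ u ∈ A \ N, (1:ℝ) / (((A \ N).filter (rel u)).card + 1) := by
        refine Finset.sum_le_sum fun u hu => ?_
        apply one_div_le_one_div_of_le
        · positivity
        · have : ((A \ N).filter (rel u)).card ≤ (A.filter (rel u)).card :=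
            card_le_card (filter_subset_filter _ sdiff_subset)
          exact_mod_cast Nat.add_le_add_right this 1
      have := h2.trans hS'sum
      linarith

lemma csStep {ι : Type*} (A : Finset ι) (w : ι → ℝ) (hw : ∀ i ∈ A, 0 < w i) :
    (A.card : ℝ)^2 ≤ (∑ i ∈ A, 1 / w i) * (∑ i ∈ A, w i) := by
  have h := Finset.sum_mul_sq_le_sq_mul_sq A (fun i => Real.sqrt (1 / w i))
    (fun i => Real.sqrt (w i))
  have h1 : ∀ i ∈ A, Real.sqrt (1 / w i) * Real.sqrt (w i) = 1 := by
    intro i hi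
    rw [← Real.sqrt_mul (one_div_nonneg.mpr (hw i hi).le), one_div_mul_cancel (hw i hi).ne', Real.sqrt_one]
  rw [Finset.sum_congr rfl h1, Finset.sum_const, nsmul_eq_mul, mul_one] at h
  calc (A.card : ℝ)^2 ≤ (∑ i ∈ A, Real.sqrt (1/w i) ^ 2) * ∑ i ∈ A, Real.sqrt (w i) ^ 2 := h
    _ = (∑ i ∈ A, 1 / w i) * (∑ i ∈ A, w i) := by
        congr 1 <;> refine Finset.sum_congr rfl fun i hi => Real.sq_sqrt ?_
        · exact one_div_nonneg.mpr (hw i hi).le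
        · exact (hw i hi).le

lemma sumDeg {n : ℕ} (p : Fin n → Fin n → Prop) [DecidableRel p]
    (hsymm : ∀ a b, p a b → p b a) :
    ∑ v : Fin n, (univ.filter (fun u => v ≠ u ∧ p v u)).card
      = 2 * (univ.filter (fun ij : Fin n × Fin n => ij.1 < ij.2 ∧ p ij.1 ij.2)).card := by
  classical
  set T := univ.filter (fun ij : Fin n × Fin n => ij.1 ≠ ij.2 ∧ p ij.1 ij.2) with hT
  have step1 : T.card = ∑ v : Fin n, (univ.filter (fun u => v ≠ u ∧ p v u)).card := by
    rw [Finset.card_eq_sum_card_fiberwise (f := Prod.fst) (t := univ) (fun x _ => mem_univ _)]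
    refine Finset.sum_congr rfl fun v _ => ?_
    refine Finset.card_bij (fun a _ => a.2) ?_ ?_ ?_
    · rintro ⟨i, j⟩ ha
      simp only [hT, mem_filter, mem_univ, true_and] at ha ⊢
      obtain ⟨⟨hne, hp⟩, h1⟩ := ha
      subst h1
      exact ⟨hne, hp⟩
    · rintro ⟨i, j⟩ ha ⟨i', j'⟩ hb hab
      simp only [hT, mem_filter] at ha hb
      simp only at hab
      subst hab
      rw [ha.2, hb.2]
    · intro u hu
      simp only [mem_filter, mem_univ, true_and] at hu
      exact ⟨(v, u), by simp [hT, hu.1, hu.2], rfl⟩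
  set T1 := univ.filter (fun ij : Fin n × Fin n => ij.1 < ij.2 ∧ p ij.1 ij.2) with hT1
  set T2 := univ.filter (fun ij : Fin n × Fin n => ij.2 < ij.1 ∧ p ij.1 ij.2) with hT2
  have hunion : T = T1 ∪ T2 := by
    ext ⟨i, j⟩
    simp only [hT, hT1, hT2, mem_filter, mem_union, mem_univ, true_and]
    constructor
    · rintro ⟨hne, hp⟩
      rcases lt_or_gt_of_ne hne with h | h
      · exact Or.inl ⟨h, hp⟩
      · exact Or.inr ⟨h, hp⟩
    · rintro (⟨h, hp⟩ | ⟨h, hp⟩)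
      · exact ⟨h.ne, hp⟩
      · exact ⟨h.ne', hp⟩
  have hdisj : Disjoint T1 T2 := by
    rw [Finset.disjoint_left]
    rintro ⟨i, j⟩ h1 h2
    simp only [hT1, hT2, mem_filter] at h1 h2
    exact absurd h2.2.1 (not_lt.mpr h1.2.1.le)
  have hswap : T2.card = T1.card := by
    refine Finset.card_bij (fun a _ => a.swap) ?_ ?_ ?_
    · rintro ⟨i, j⟩ ha
      simp only [hT1, hT2, mem_filter, mem_univ, true_and] at ha ⊢
      exact ⟨ha.1, hsymm _ _ ha.2⟩
    · rintro ⟨i, j⟩ _ ⟨i', j'⟩ _ hab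
      simpa [Prod.ext_iff, and_comm] using congrArg Prod.swap hab
    · rintro ⟨i, j⟩ hb
      simp only [hT1, hT2, mem_filter, mem_univ, true_and] at hb
      exact ⟨(j, i), by simp [hT2, hb.1, hsymm _ _ hb.2], rfl⟩
  rw [← step1, hunion, Finset.card_union_of_disjoint hdisj, hswap]
  ring

lemma packingBound {d : ℕ} (hd : 0 < d) {ι : Type*} (S : Finset ι)
    (y : ι → EuclideanSpace ℝ (Fin d)) {s R : ℝ} (hs : 0 < s) (hR : 0 ≤ R)
    (hsep : ∀ a ∈ S, ∀ b ∈ S, a ≠ b → 2 * s < dist (y a) (y b))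
    (x₀ : EuclideanSpace ℝ (Fin d)) (hball : ∀ a ∈ S, dist (y a) x₀ ≤ R) :
    (S.card : ℝ) * s ^ d ≤ (R + s) ^ d := by
  have hnt : Nontrivial (EuclideanSpace ℝ (Fin d)) := by
    apply Module.nontrivial_of_finrank_pos (R := ℝ)
    rw [finrank_euclideanSpace_fin]
    exact hd
  have hdisj : (S : Set ι).PairwiseDisjoint (fun a => ball (y a) s) := by
    intro a ha b hb hab
    exact ball_disjoint_ball (by linarith [hsep a ha b hb hab])
  have hsub : (⋃ a ∈ S, ball (y a) s) ⊆ ball x₀ (R + s) := by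
    intro z hz
    simp only [Set.mem_iUnion] at hz
    obtain ⟨a, ha, hza⟩ := hz
    rw [mem_ball] at hza ⊢
    calc dist z x₀ ≤ dist z (y a) + dist (y a) x₀ := dist_triangle _ _ _
      _ < s + R := add_lt_add_of_lt_of_le hza (hball a ha)
      _ = R + s := add_comm _ _
  have hmeas := measure_biUnion_finset (μ := volume) hdisj (fun a _ => measurableSet_ball)
  have hV : ∀ a : ι, volume (ball (y a) s)
      = ENNReal.ofReal (s ^ d) * volume (ball (0 : EuclideanSpace ℝ (Fin d)) 1) := by
    intro a
    rw [Measure.addHaar_ball volume (y a) hs.le, finrank_euclideanSpace_fin]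
  have hVtop := Measure.addHaar_ball volume x₀ (by linarith : (0:ℝ) ≤ R + s)
  rw [finrank_euclideanSpace_fin] at hVtop
  have hle : volume (⋃ a ∈ S, ball (y a) s) ≤ volume (ball x₀ (R + s)) :=
    measure_mono hsub
  rw [hmeas, hVtop] at hle
  simp only [hV, Finset.sum_const, nsmul_eq_mul] at hle
  set V := volume (ball (0 : EuclideanSpace ℝ (Fin d)) 1) with hVdef
  have hV0 : V ≠ 0 := (measure_ball_pos volume 0 one_pos).ne'
  have hVt : V ≠ ⊤ := measure_ball_lt_top.ne
  have hle2 : (S.card : ℝ≥0∞) * ENNReal.ofReal (s ^ d) ≤ ENNReal.ofReal ((R + s) ^ d) := by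
    rw [← ENNReal.mul_le_mul_iff_left hV0 hVt]
    calc (S.card : ℝ≥0∞) * ENNReal.ofReal (s ^ d) * V
        = S.card * (ENNReal.ofReal (s ^ d) * V) := by ring
      _ ≤ ENNReal.ofReal ((R + s) ^ d) * V := hle
  have : ENNReal.ofReal ((S.card : ℝ) * s ^ d) ≤ ENNReal.ofReal ((R + s) ^ d) := by
    rw [ENNReal.ofReal_mul (by positivity)]
    rwa [ENNReal.ofReal_natCast]
  rwa [ENNReal.ofReal_le_ofReal_iff (by positivity)] at this

/-- Theorem 2 (generalized sphere packing): if `N_β` is the number of `βr`-near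
pairs among `x_1, …, x_n ∈ ℝ^d`, then for every `x₀`,
`max_i ‖x_i − x₀‖₂ ≥ ((n²/(2N_β + n))^{1/d} − 1)·βr/2`. -/
theorem max_dist_lower_bound {d n : ℕ} (hn : 0 < n)
    (x : Fin n → EuclideanSpace ℝ (Fin d)) (β r : ℝ) (hβ : 0 < β) (hr : 0 < r)
    (Nβ : ℕ)
    (hNβ : Nβ = (Finset.univ.filter fun ij : Fin n × Fin n =>
        ij.1 < ij.2 ∧ dist (x ij.1) (x ij.2) ≤ β * r).card)
    (x₀ : EuclideanSpace ℝ (Fin d)) :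
    (((n : ℝ) ^ 2 / (2 * (Nβ : ℝ) + (n : ℝ))) ^ ((1 : ℝ) / (d : ℝ)) - 1) * (β * r) / 2 ≤
      Finset.univ.sup' (Finset.univ_nonempty_iff.mpr ⟨⟨0, hn⟩⟩)
        (fun i => dist (x i) x₀) := by
  classical
  set R := Finset.univ.sup' (Finset.univ_nonempty_iff.mpr ⟨⟨0, hn⟩⟩)
    (fun i => dist (x i) x₀) with hRdef
  have hRi : ∀ i, dist (x i) x₀ ≤ R := fun i => Finset.le_sup' (fun j => dist (x j) x₀) (mem_univ i)
  have hR0 : 0 ≤ R := le_trans dist_nonneg (hRi ⟨0, hn⟩)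
  rcases Nat.eq_zero_or_pos d with hd | hd
  · subst hd
    simp only [Nat.cast_zero, div_zero, Real.rpow_zero, sub_self, zero_mul, zero_div]
    exact hR0
  -- d ≥ 1
  set rel : Fin n → Fin n → Prop := fun i j => i ≠ j ∧ dist (x i) (x j) ≤ β * r with hrel
  have hsymm : ∀ a b, rel a b → rel b a := by
    rintro a b ⟨hne, hdist⟩
    exact ⟨hne.symm, by rwa [dist_comm]⟩
  have hirr : ∀ a, ¬ rel a a := by rintro a ⟨h, -⟩; exact h rfl
  obtain ⟨S, hSsub, hSind, hSsum⟩ := caroWei rel hsymm hirr Finset.univ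
  set M : ℝ := 2 * (Nβ : ℝ) + n with hM
  have hn' : (0:ℝ) < n := by exact_mod_cast hn
  have hMpos : 0 < M := by
    have h0 : (0:ℝ) ≤ (Nβ : ℝ) := Nat.cast_nonneg _
    rw [hM]; linarith
  -- sum of degrees equals 2 Nβ
  have hdegsum : ∑ v : Fin n, ((Finset.univ.filter (rel v)).card : ℝ)
      = 2 * (Nβ : ℝ) := by
    have h := sumDeg (fun a b => dist (x a) (x b) ≤ β * r)
      (fun a b h => by show dist (x b) (x a) ≤ β * r; rw [dist_comm]; exact h)
    have hNβ' : Nβ = (Finset.univ.filter fun ij : Fin n × Fin n =>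
        ij.1 < ij.2 ∧ dist (x ij.1) (x ij.2) ≤ β * r).card := hNβ
    rw [hNβ']
    have : ∑ v : Fin n, (Finset.univ.filter (rel v)).card
        = 2 * (Finset.univ.filter fun ij : Fin n × Fin n =>
            ij.1 < ij.2 ∧ dist (x ij.1) (x ij.2) ≤ β * r).card := by
      convert h using 2
    exact_mod_cast congrArg (Nat.cast : ℕ → ℝ) this
  -- Cauchy-Schwarz: n² ≤ |S| * M
  have hcs : (n : ℝ) ^ 2 ≤ (S.card : ℝ) * M := by
    have h := csStep Finset.univ (fun v => ((Finset.univ.filter (rel v)).card : ℝ) + 1)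
      (fun i _ => by positivity)
    rw [Finset.card_univ, Fintype.card_fin] at h
    have hsum2 : ∑ v : Fin n, (((Finset.univ.filter (rel v)).card : ℝ) + 1) = M := by
      rw [Finset.sum_add_distrib, Finset.sum_const, Finset.card_univ, Fintype.card_fin,
        nsmul_eq_mul, mul_one, hdegsum, hM]
    rw [hsum2] at h
    have hsum1 : ∑ v : Fin n, (1:ℝ) / (((Finset.univ.filter (rel v)).card : ℝ) + 1)
        ≤ (S.card : ℝ) := hSsum
    calc (n:ℝ)^2 ≤ (∑ v : Fin n, (1:ℝ) / (((Finset.univ.filter (rel v)).card : ℝ) + 1)) * M := h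
      _ ≤ (S.card : ℝ) * M := mul_le_mul_of_nonneg_right hsum1 hMpos.le
  -- packing
  set s : ℝ := β * r / 2 with hsdef
  have hs : 0 < s := by rw [hsdef]; positivity
  have hsep : ∀ a ∈ S, ∀ b ∈ S, a ≠ b → 2 * s < dist (x a) (x b) := by
    intro a ha b hb hab
    have hlt : β * r < dist (x a) (x b) := by
      by_contra hle
      exact hSind a ha b hb ⟨hab, not_lt.mp hle⟩
    rw [hsdef]; linarith
  have hpack := packingBound hd S x hs hR0 hsep x₀ (fun a _ => hRi a)
  -- final chain
  have hKM : (n:ℝ)^2 / M ≤ (S.card : ℝ) := (div_le_iff₀ hMpos).mpr hcs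
  have hK2 : (S.card : ℝ) ≤ ((R + s)/s)^d := by
    rw [div_pow]
    exact (le_div_iff₀ (by positivity)).mpr hpack
  have hbase : (0:ℝ) ≤ (n:ℝ)^2 / M := by positivity
  have h3 : ((n:ℝ)^2/M) ^ ((1:ℝ)/(d:ℝ)) ≤ (((R+s)/s)^d) ^ ((1:ℝ)/(d:ℝ)) :=
    Real.rpow_le_rpow hbase (hKM.trans hK2) (by positivity)
  have ht : (0:ℝ) ≤ (R+s)/s := by positivity
  have h4 : ((((R+s)/s)^d : ℝ)) ^ ((1:ℝ)/(d:ℝ)) = (R+s)/s := by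
    rw [← Real.rpow_natCast ((R+s)/s) d, ← Real.rpow_mul ht, mul_one_div,
      div_self (by exact_mod_cast hd.ne' : (d:ℝ) ≠ 0), Real.rpow_one]
  rw [h4] at h3
  have h5 : ((n:ℝ)^2/M) ^ ((1:ℝ)/(d:ℝ)) * s ≤ R + s := by
    rw [← le_div_iff₀ hs] at *
    exact h3
  have hgoal : (((n:ℝ)^2/M) ^ ((1:ℝ)/(d:ℝ)) - 1) * (β*r) / 2
      = ((n:ℝ)^2/M) ^ ((1:ℝ)/(d:ℝ)) * s - s := by
    rw [hsdef]; ring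
  rw [hM] at hgoal
  rw [hgoal]
  linarith
end

section
/- Let x_1, …, x_n ∈ ℝ^d, let β, r > 0, and let N_β = |{(i,j) : 1 ≤ i < j ≤ n, ‖x_i − x_j‖₂ ≤ βr}|. Then for every x_0 ∈ ℝ^d and every D ≥ 0, the number of indices i with ‖x_i − x_0‖₂ ≤ D satisfies |{i : ‖x_i − x_0‖₂ ≤ D}| ≤ (1 + 2D/(βr))^{d/2} · √(n + 2N_β). -/
open MeasureTheory Metric Finset
open scoped ENNReal NNReal

/-- The number of ordered near pairs (including diagonal) is at most `n` plus twice
the number of unordered near pairs. -/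
lemma card_near_ordered_le {n : ℕ} {α : Type*} [PseudoMetricSpace α] (x : Fin n → α) (c : ℝ) :
    (Finset.univ.filter fun ij : Fin n × Fin n => dist (x ij.1) (x ij.2) ≤ c).card ≤
      n + 2 * (Finset.univ.filter fun ij : Fin n × Fin n =>
        ij.1 < ij.2 ∧ dist (x ij.1) (x ij.2) ≤ c).card := by
  classical
  set L := Finset.univ.filter fun ij : Fin n × Fin n =>
    ij.1 < ij.2 ∧ dist (x ij.1) (x ij.2) ≤ c with hL
  set G := Finset.univ.filter fun ij : Fin n × Fin n =>
    ij.2 < ij.1 ∧ dist (x ij.1) (x ij.2) ≤ c with hG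
  set Dg := Finset.univ.filter fun ij : Fin n × Fin n => ij.1 = ij.2 with hDg
  have hsub : (Finset.univ.filter fun ij : Fin n × Fin n => dist (x ij.1) (x ij.2) ≤ c)
      ⊆ Dg ∪ L ∪ G := by
    intro ij hij
    simp only [Finset.mem_filter, Finset.mem_union, Finset.mem_univ, true_and, hL, hG, hDg] at *
    rcases lt_trichotomy ij.1 ij.2 with h | h | h
    · exact Or.inl (Or.inr ⟨h, hij⟩)
    · exact Or.inl (Or.inl h)
    · exact Or.inr ⟨h, hij⟩
  have hDgcard : Dg.card = n := by
    have himg : Dg = Finset.univ.image fun i : Fin n => (i, i) := by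
      ext ij
      simp only [hDg, Finset.mem_filter, Finset.mem_univ, true_and, Finset.mem_image,
        Prod.ext_iff]
      constructor
      · intro h; exact ⟨ij.1, rfl, h⟩
      · rintro ⟨i, h1, h2⟩; rw [← h1, ← h2]
    rw [himg, Finset.card_image_of_injective _ (fun a b hab => (Prod.ext_iff.mp hab).1),
      Finset.card_univ, Fintype.card_fin]
  have hGL : G.card = L.card := by
    apply Finset.card_bij (fun ij _ => Prod.swap ij)
    · intro ij hij
      simp only [hG, Finset.mem_filter, Finset.mem_univ, true_and] at hij
      simp only [hL, Finset.mem_filter, Finset.mem_univ, true_and, Prod.fst_swap,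
        Prod.snd_swap]
      exact ⟨hij.1, by rw [dist_comm]; exact hij.2⟩
    · intro a _ b _ hab
      exact Prod.swap_injective hab
    · intro ij hij
      simp only [hL, Finset.mem_filter, Finset.mem_univ, true_and] at hij
      refine ⟨Prod.swap ij, ?_, by simp⟩
      simp only [hG, Finset.mem_filter, Finset.mem_univ, true_and, Prod.fst_swap,
        Prod.snd_swap]
      exact ⟨hij.1, by rw [dist_comm]; exact hij.2⟩
  calc (Finset.univ.filter fun ij : Fin n × Fin n => dist (x ij.1) (x ij.2) ≤ c).card
      ≤ (Dg ∪ L ∪ G).card := Finset.card_le_card hsub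
    _ ≤ (Dg ∪ L).card + G.card := Finset.card_union_le _ _
    _ ≤ Dg.card + L.card + G.card := by
        exact add_le_add_left (Finset.card_union_le Dg L) _
    _ = n + 2 * L.card := by rw [hDgcard, hGL]; ring

private lemma ennreal_half_mul_self (a : ℝ≥0∞) : a ^ (1/2 : ℝ) * a ^ (1/2 : ℝ) = a := by
  rw [← ENNReal.rpow_add_of_nonneg _ _ (by norm_num) (by norm_num)]
  norm_num

/-- If `N_β` is the number of `βr`-near pairs among `x_1, …, x_n ∈ ℝ^d`, then for
every `x₀` and `D ≥ 0`, the number of points within distance `D` of `x₀` is at most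
`(1 + 2D/(βr))^{d/2} · √(n + 2N_β)`. -/
theorem near_count_upper_bound {d n : ℕ}
    (x : Fin n → EuclideanSpace ℝ (Fin d)) (β r : ℝ) (hβ : 0 < β) (hr : 0 < r)
    (Nβ : ℕ)
    (hNβ : Nβ = (Finset.univ.filter fun ij : Fin n × Fin n =>
        ij.1 < ij.2 ∧ dist (x ij.1) (x ij.2) ≤ β * r).card)
    (x₀ : EuclideanSpace ℝ (Fin d)) (D : ℝ) (hD : 0 ≤ D) :
    ((Finset.univ.filter fun i : Fin n => dist (x i) x₀ ≤ D).card : ℝ) ≤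
      (1 + 2 * D / (β * r)) ^ ((d : ℝ) / 2) * Real.sqrt ((n : ℝ) + 2 * (Nβ : ℝ)) := by
  classical
  set S : Finset (Fin n) := Finset.univ.filter fun i => dist (x i) x₀ ≤ D with hS
  set m : ℕ := S.card with hm
  set ρ : ℝ := β * r / 2 with hρdef
  have hρ : 0 < ρ := by positivity
  set c : ℝ≥0∞ := volume (ball (0 : EuclideanSpace ℝ (Fin d)) 1) with hc
  have hc0 : c ≠ 0 := (measure_ball_pos _ _ one_pos).ne'
  have hctop : c ≠ ⊤ := measure_ball_lt_top.ne
  set V : ℝ≥0∞ := ENNReal.ofReal (ρ ^ d) * c with hV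
  have hV0 : V ≠ 0 := by
    apply mul_ne_zero _ hc0
    simp only [ne_eq, ENNReal.ofReal_eq_zero, not_le]
    positivity
  have hVtop : V ≠ ⊤ := ENNReal.mul_ne_top ENNReal.ofReal_ne_top hctop
  set B : Fin n → Set (EuclideanSpace ℝ (Fin d)) := fun i => closedBall (x i) ρ with hB
  have hvolB : ∀ i, volume (B i) = V := fun i => by
    rw [hB, hV, Measure.addHaar_closedBall _ _ hρ.le, finrank_euclideanSpace_fin, hc]
  set A : Set (EuclideanSpace ℝ (Fin d)) := closedBall x₀ (D + ρ) with hA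
  have hBA : ∀ i ∈ S, B i ⊆ A := by
    intro i hi
    have hdi : dist (x i) x₀ ≤ D := (Finset.mem_filter.mp hi).2
    exact closedBall_subset_closedBall' (by linarith)
  set f : EuclideanSpace ℝ (Fin d) → ℝ≥0∞ :=
    fun z => ∑ i ∈ S, (B i).indicator 1 z with hf
  have hmeasi : ∀ i : Fin n, Measurable ((B i).indicator (1 : EuclideanSpace ℝ (Fin d) → ℝ≥0∞)) :=
    fun i => measurable_const.indicator measurableSet_closedBall
  have hmeas : Measurable f := by
    apply Finset.measurable_sum
    exact fun i _ => hmeasi i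
  -- first moment
  have hI1 : ∫⁻ z, f z = (m : ℝ≥0∞) * V := by
    simp only [hf]
    rw [lintegral_finset_sum _ fun i _ => hmeasi i]
    simp only [fun i => lintegral_indicator_one (μ := volume) (s := B i) measurableSet_closedBall]
    rw [Finset.sum_congr rfl fun i _ => hvolB i, Finset.sum_const, nsmul_eq_mul]
  -- second moment
  set P : ℕ := (Finset.univ.filter fun ij : Fin n × Fin n =>
    dist (x ij.1) (x ij.2) ≤ β * r).card with hP
  have hI2 : ∫⁻ z, f z * f z ≤ (P : ℝ≥0∞) * V := by
    have hfz : ∀ z, f z * f z = ∑ ij ∈ S ×ˢ S, (B ij.1 ∩ B ij.2).indicator 1 z := by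
      intro z
      rw [hf, Finset.sum_mul_sum, ← Finset.sum_product']
      refine Finset.sum_congr rfl fun ij _ => ?_
      rw [← Set.inter_indicator_mul]
      simp only [Pi.one_apply, mul_one]
      rfl
    calc ∫⁻ z, f z * f z
        = ∑ ij ∈ S ×ˢ S, volume (B ij.1 ∩ B ij.2) := by
          have hmeasInter : ∀ ij : Fin n × Fin n,
              Measurable ((B ij.1 ∩ B ij.2).indicator
                (1 : EuclideanSpace ℝ (Fin d) → ℝ≥0∞)) := fun ij =>
            measurable_const.indicator (measurableSet_closedBall.inter measurableSet_closedBall)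
          have hvol : ∀ ij : Fin n × Fin n,
              (∫⁻ z, (B ij.1 ∩ B ij.2).indicator (1 : EuclideanSpace ℝ (Fin d) → ℝ≥0∞) z)
                = volume (B ij.1 ∩ B ij.2) := fun ij =>
            lintegral_indicator_one (measurableSet_closedBall.inter measurableSet_closedBall)
          simp only [hfz]
          rw [lintegral_finset_sum _ fun ij _ => hmeasInter ij]
          exact Finset.sum_congr rfl fun ij _ => hvol ij
      _ ≤ ∑ ij ∈ (S ×ˢ S).filter
            (fun ij : Fin n × Fin n => dist (x ij.1) (x ij.2) ≤ β * r),
            volume (B ij.1 ∩ B ij.2) := by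
          apply Finset.sum_le_sum_of_ne_zero
          intro ij hij hne
          rw [Finset.mem_filter]
          refine ⟨hij, ?_⟩
          by_contra hfar
          apply hne
          have hempty : B ij.1 ∩ B ij.2 = ∅ := by
            ext z
            simp only [Set.mem_inter_iff, Set.mem_empty_iff_false, iff_false, not_and, hB,
              mem_closedBall]
            intro h1 h2
            apply hfar
            calc dist (x ij.1) (x ij.2) ≤ dist (x ij.1) z + dist z (x ij.2) := dist_triangle _ _ _
              _ ≤ ρ + ρ := by
                  rw [dist_comm] at h1
                  exact add_le_add (by simpa [dist_comm] using h1) (by simpa [dist_comm] using h2)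
              _ = β * r := by rw [hρdef]; ring
          rw [hempty, measure_empty]
      _ ≤ ∑ _ij ∈ (S ×ˢ S).filter
            (fun ij : Fin n × Fin n => dist (x ij.1) (x ij.2) ≤ β * r), V := by
          refine Finset.sum_le_sum fun ij _ => ?_
          calc volume (B ij.1 ∩ B ij.2) ≤ volume (B ij.1) :=
                measure_mono Set.inter_subset_left
            _ = V := hvolB _
      _ = (((S ×ˢ S).filter
            (fun ij : Fin n × Fin n => dist (x ij.1) (x ij.2) ≤ β * r)).card : ℝ≥0∞) * V := by
          rw [Finset.sum_const, nsmul_eq_mul]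
      _ ≤ (P : ℝ≥0∞) * V := by
          apply mul_le_mul_left
          rw [Nat.cast_le, hP]
          apply Finset.card_le_card
          exact Finset.filter_subset_filter _ (Finset.subset_univ _)
  -- f is supported in A
  have hfA : ∀ z, f z * A.indicator 1 z = f z := by
    intro z
    by_cases hz : z ∈ A
    · rw [Set.indicator_of_mem hz, Pi.one_apply, mul_one]
    · have h0 : f z = 0 := Finset.sum_eq_zero fun i hi =>
        Set.indicator_of_notMem (fun h => hz (hBA i hi h)) _
      rw [h0, zero_mul]
  -- Cauchy-Schwarz
  have hCS : ∫⁻ z, f z ≤ (∫⁻ z, f z * f z) ^ (1/2 : ℝ) * (volume A) ^ (1/2 : ℝ) := by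
    have hconj : Real.HolderConjugate 2 2 := Real.HolderConjugate.two_two
    have hAmeas : Measurable (A.indicator (1 : EuclideanSpace ℝ (Fin d) → ℝ≥0∞)) :=
      measurable_const.indicator measurableSet_closedBall
    have h := ENNReal.lintegral_mul_le_Lp_mul_Lq volume hconj hmeas.aemeasurable
      hAmeas.aemeasurable
    have hsq : ∀ z : EuclideanSpace ℝ (Fin d), f z ^ (2 : ℝ) = f z * f z := fun z => by
      rw [show (2:ℝ) = ((2:ℕ):ℝ) by norm_num, ENNReal.rpow_natCast, sq]
    have hInd : (∫⁻ z, A.indicator (1 : EuclideanSpace ℝ (Fin d) → ℝ≥0∞) z ^ (2 : ℝ))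
        = volume A := by
      have hpt : ∀ z, A.indicator (1 : EuclideanSpace ℝ (Fin d) → ℝ≥0∞) z ^ (2 : ℝ)
          = A.indicator 1 z := by
        intro z
        by_cases hz : z ∈ A
        · rw [Set.indicator_of_mem hz, Pi.one_apply, ENNReal.one_rpow]
        · rw [Set.indicator_of_notMem hz, ENNReal.zero_rpow_of_pos (by norm_num)]
      rw [lintegral_congr hpt]
      exact lintegral_indicator_one measurableSet_closedBall
    calc ∫⁻ z, f z
        = ∫⁻ z, (f * A.indicator (1 : EuclideanSpace ℝ (Fin d) → ℝ≥0∞)) z := lintegral_congr fun z => (hfA z).symm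
      _ ≤ (∫⁻ z, f z ^ (2:ℝ)) ^ (1/2:ℝ) *
          (∫⁻ z, A.indicator (1 : EuclideanSpace ℝ (Fin d) → ℝ≥0∞) z ^ (2:ℝ)) ^ (1/2:ℝ) := h
      _ = (∫⁻ z, f z * f z) ^ (1/2 : ℝ) * (volume A) ^ (1/2 : ℝ) := by
          rw [show (∫⁻ z, f z ^ (2:ℝ)) = ∫⁻ z, f z * f z from lintegral_congr hsq, hInd]
  -- combine: squared inequality in ℝ≥0∞
  have hkey : ((m : ℝ≥0∞) * V) * ((m : ℝ≥0∞) * V) ≤ ((P : ℝ≥0∞) * V) * volume A := by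
    have h1 : (m : ℝ≥0∞) * V ≤ ((P : ℝ≥0∞) * V) ^ (1/2 : ℝ) * (volume A) ^ (1/2 : ℝ) := by
      rw [← hI1]
      refine hCS.trans (mul_le_mul_left (ENNReal.rpow_le_rpow hI2 (by norm_num)) _)
    calc ((m : ℝ≥0∞) * V) * ((m : ℝ≥0∞) * V)
        ≤ (((P : ℝ≥0∞) * V) ^ (1/2 : ℝ) * (volume A) ^ (1/2 : ℝ)) *
          (((P : ℝ≥0∞) * V) ^ (1/2 : ℝ) * (volume A) ^ (1/2 : ℝ)) := mul_le_mul' h1 h1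
      _ = (((P : ℝ≥0∞) * V) ^ (1/2 : ℝ) * ((P : ℝ≥0∞) * V) ^ (1/2 : ℝ)) *
          ((volume A) ^ (1/2 : ℝ) * (volume A) ^ (1/2 : ℝ)) := by ring
      _ = ((P : ℝ≥0∞) * V) * volume A := by
          rw [ennreal_half_mul_self, ennreal_half_mul_self]
  -- cancel one V
  have hvolA : volume A = ENNReal.ofReal ((D + ρ) ^ d) * c := by
    rw [hA, Measure.addHaar_closedBall _ _ (by linarith), finrank_euclideanSpace_fin, hc]
  have hkey2 : (m : ℝ≥0∞) * (m : ℝ≥0∞) * ENNReal.ofReal (ρ ^ d) ≤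
      (P : ℝ≥0∞) * ENNReal.ofReal ((D + ρ) ^ d) := by
    have h2 : ((m : ℝ≥0∞) * (m : ℝ≥0∞) * ENNReal.ofReal (ρ ^ d)) * (V * c) ≤
        ((P : ℝ≥0∞) * ENNReal.ofReal ((D + ρ) ^ d)) * (V * c) := by
      calc ((m : ℝ≥0∞) * (m : ℝ≥0∞) * ENNReal.ofReal (ρ ^ d)) * (V * c)
          = ((m : ℝ≥0∞) * V) * ((m : ℝ≥0∞) * V) := by rw [hV]; ring
        _ ≤ ((P : ℝ≥0∞) * V) * volume A := hkey
        _ = ((P : ℝ≥0∞) * ENNReal.ofReal ((D + ρ) ^ d)) * (V * c) := by rw [hvolA]; ring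
    have hVc0 : V * c ≠ 0 := mul_ne_zero hV0 hc0
    have hVctop : V * c ≠ ⊤ := ENNReal.mul_ne_top hVtop hctop
    exact (ENNReal.mul_le_mul_iff_left hVc0 hVctop).mp h2
  -- to reals
  have hreal : (m : ℝ) * (m : ℝ) * ρ ^ d ≤ (P : ℝ) * (D + ρ) ^ d := by
    have h := hkey2
    have hm0 : (0:ℝ) ≤ (m:ℝ) := Nat.cast_nonneg _
    have hP0 : (0:ℝ) ≤ (P:ℝ) := Nat.cast_nonneg _
    have hρd0 : (0:ℝ) ≤ ρ ^ d := by positivity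
    have hDd0 : (0:ℝ) ≤ (D + ρ) ^ d := by positivity
    rw [show ((m : ℝ≥0∞) = ENNReal.ofReal (m : ℝ)) from (ENNReal.ofReal_natCast m).symm,
      show ((P : ℝ≥0∞) = ENNReal.ofReal (P : ℝ)) from (ENNReal.ofReal_natCast P).symm,
      ← ENNReal.ofReal_mul hm0, ← ENNReal.ofReal_mul (mul_nonneg hm0 hm0),
      ← ENNReal.ofReal_mul hP0] at h
    exact (ENNReal.ofReal_le_ofReal_iff (mul_nonneg hP0 hDd0)).mp h
  -- bound P
  have hPle : (P : ℝ) ≤ (n : ℝ) + 2 * (Nβ : ℝ) := by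
    have := card_near_ordered_le x (β * r)
    rw [← hP, ← hNβ] at this
    exact_mod_cast this
  -- final algebra
  set a : ℝ := 1 + 2 * D / (β * r) with ha
  have ha1 : (1:ℝ) ≤ a := by
    rw [ha]
    have : 0 ≤ 2 * D / (β * r) := by positivity
    linarith
  have ha0 : 0 < a := lt_of_lt_of_le one_pos ha1
  have haρ : a = (D + ρ) / ρ := by
    rw [ha, hρdef]
    field_simp
    ring
  have hm2 : (m : ℝ) ^ 2 ≤ a ^ d * ((n : ℝ) + 2 * (Nβ : ℝ)) := by
    have hρd : (0:ℝ) < ρ ^ d := by positivity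
    have h1 : (m : ℝ) ^ 2 * ρ ^ d ≤ ((n : ℝ) + 2 * (Nβ : ℝ)) * (D + ρ) ^ d := by
      calc (m : ℝ) ^ 2 * ρ ^ d = (m : ℝ) * (m : ℝ) * ρ ^ d := by ring
        _ ≤ (P : ℝ) * (D + ρ) ^ d := hreal
        _ ≤ ((n : ℝ) + 2 * (Nβ : ℝ)) * (D + ρ) ^ d :=
            mul_le_mul_of_nonneg_right hPle (by positivity)
    rw [haρ, div_pow, div_mul_eq_mul_div, le_div_iff₀ hρd]
    calc (m : ℝ) ^ 2 * ρ ^ d ≤ ((n : ℝ) + 2 * (Nβ : ℝ)) * (D + ρ) ^ d := h1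
      _ = (D + ρ) ^ d * ((n : ℝ) + 2 * (Nβ : ℝ)) := by ring
  have hb : (0:ℝ) ≤ (n : ℝ) + 2 * (Nβ : ℝ) := by positivity
  have hrw : a ^ ((d : ℝ) / 2) = Real.sqrt (a ^ d) := by
    rw [Real.sqrt_eq_rpow, ← Real.rpow_natCast a d, ← Real.rpow_mul ha0.le]
    congr 1
    ring
  calc (m : ℝ) ≤ Real.sqrt (a ^ d * ((n : ℝ) + 2 * (Nβ : ℝ))) :=
        (Real.le_sqrt (by positivity) (by positivity)).mpr hm2
    _ = Real.sqrt (a ^ d) * Real.sqrt ((n : ℝ) + 2 * (Nβ : ℝ)) :=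
        Real.sqrt_mul (by positivity) _
    _ = a ^ ((d : ℝ) / 2) * Real.sqrt ((n : ℝ) + 2 * (Nβ : ℝ)) := by rw [hrw]
end

section
/- Let x_0, x_1, …, x_n ∈ ℝ^d, let r > 0, α ≥ 1, η > 0, β > 0 and p ∈ (0,1). Let ρ : [α, ∞) → (0, ∞) be a monotonically decreasing function, and let N_β = |{(i,j) : 1 ≤ i < j ≤ n, ‖x_i − x_j‖₂ ≤ βr}|. Then Σ_{i : ‖x_i − x_0‖₂ ≥ αr} p^{1/ρ(‖x_i − x_0‖₂ / r)} ≤ p^{1/ρ(α)} · (1 + 2(α+η)/β)^{d/2} · √(2N_β + n) + p^{1/ρ(α+η)} · n. -/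
open Finset Metric MeasureTheory ENNReal

private lemma caroWei_s5 {d n : ℕ} (x : Fin n → EuclideanSpace ℝ (Fin d)) (c : ℝ)
    (hc : 0 ≤ c) (T : Finset (Fin n)) :
    ∃ Y : Finset (Fin n), Y ⊆ T ∧ (∀ i ∈ Y, ∀ j ∈ Y, i ≠ j → ¬ dist (x i) (x j) ≤ c) ∧
      ∑ p ∈ T, ((T.filter (fun j => dist (x p) (x j) ≤ c)).card : ℝ)⁻¹ ≤ (Y.card : ℝ) := by
  induction T using Finset.strongInduction with
  | _ T ih =>
  rcases T.eq_empty_or_nonempty with rfl | hT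
  · exact ⟨∅, Finset.Subset.refl _, by simp, by simp⟩
  obtain ⟨v, hvT, hvmin⟩ :=
    T.exists_min_image (fun pt => (T.filter (fun j => dist (x pt) (x j) ≤ c)).card) hT
  set A := T.filter (fun j => dist (x v) (x j) ≤ c) with hAdef
  have hvA : v ∈ A := Finset.mem_filter.2 ⟨hvT, by simp [dist_self, hc]⟩
  have hAT : A ⊆ T := Finset.filter_subset _ _
  have hss : T \ A ⊂ T := Finset.sdiff_ssubset hAT ⟨v, hvA⟩
  obtain ⟨Y', hY'sub, hY'sep, hY'sum⟩ := ih _ hss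
  have hvY' : v ∉ Y' := by
    intro h
    have h2 := hY'sub h
    simp only [Finset.mem_sdiff] at h2
    exact h2.2 hvA
  have hApos : 0 < A.card := Finset.card_pos.2 ⟨v, hvA⟩
  refine ⟨insert v Y', ?_, ?_, ?_⟩
  · exact Finset.insert_subset hvT (hY'sub.trans Finset.sdiff_subset)
  · intro i hi j hj hij
    rcases Finset.mem_insert.1 hi with rfl | hi' <;>
      rcases Finset.mem_insert.1 hj with rfl | hj'
    · exact absurd rfl hij
    · have hjA : j ∉ A := (Finset.mem_sdiff.1 (hY'sub hj')).2
      have hjT : j ∈ T := (Finset.mem_sdiff.1 (hY'sub hj')).1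
      exact fun hE => hjA (Finset.mem_filter.2 ⟨hjT, hE⟩)
    · have hiA : i ∉ A := (Finset.mem_sdiff.1 (hY'sub hi')).2
      have hiT : i ∈ T := (Finset.mem_sdiff.1 (hY'sub hi')).1
      exact fun hE => hiA (Finset.mem_filter.2 ⟨hiT, by rwa [dist_comm]⟩)
    · exact hY'sep i hi' j hj' hij
  · rw [← Finset.sum_sdiff hAT]
    have h1 : ∑ p ∈ A, ((T.filter (fun j => dist (x p) (x j) ≤ c)).card : ℝ)⁻¹ ≤ 1 := by
      have hb : ∀ p ∈ A,
          ((T.filter (fun j => dist (x p) (x j) ≤ c)).card : ℝ)⁻¹ ≤ (A.card : ℝ)⁻¹ := by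
        intro p hp
        have h2 : (A.card : ℝ) ≤ ((T.filter (fun j => dist (x p) (x j) ≤ c)).card : ℝ) := by
          exact_mod_cast hvmin p (hAT hp)
        have h3 : (0:ℝ) < (A.card : ℝ) := by exact_mod_cast hApos
        exact inv_anti₀ h3 h2
      calc ∑ p ∈ A, ((T.filter (fun j => dist (x p) (x j) ≤ c)).card : ℝ)⁻¹
          ≤ A.card • ((A.card : ℝ))⁻¹ := Finset.sum_le_card_nsmul _ _ _ hb
        _ = 1 := by
            rw [nsmul_eq_mul]
            exact mul_inv_cancel₀ (by exact_mod_cast hApos.ne')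
    have h2 : ∑ p ∈ T \ A, ((T.filter (fun j => dist (x p) (x j) ≤ c)).card : ℝ)⁻¹
        ≤ (Y'.card : ℝ) := by
      refine le_trans (Finset.sum_le_sum ?_) hY'sum
      intro p hp
      have hp1 : p ∈ (T \ A).filter (fun j => dist (x p) (x j) ≤ c) :=
        Finset.mem_filter.2 ⟨hp, by simp [dist_self, hc]⟩
      have hpos : (0:ℝ) < (((T \ A).filter (fun j => dist (x p) (x j) ≤ c)).card : ℝ) := by
        exact_mod_cast Finset.card_pos.2 ⟨p, hp1⟩
      have hle : ((((T \ A).filter (fun j => dist (x p) (x j) ≤ c)).card : ℝ))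
          ≤ ((T.filter (fun j => dist (x p) (x j) ≤ c)).card : ℝ) := by
        exact_mod_cast Finset.card_le_card
          (Finset.filter_subset_filter _ Finset.sdiff_subset)
      exact inv_anti₀ hpos hle
    have hcard : (((insert v Y').card : ℝ)) = (Y'.card : ℝ) + 1 := by
      rw [Finset.card_insert_of_notMem hvY']; push_cast; ring
    rw [hcard]
    linarith

private lemma packingBound_s5 {d : ℕ} (c : EuclideanSpace ℝ (Fin d)) (R δ : ℝ)
    (hδ : 0 < δ) (hR : 0 ≤ R)
    (Y : Finset (EuclideanSpace ℝ (Fin d))) (hY : ∀ y ∈ Y, dist y c ≤ R)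
    (hsep : ∀ y ∈ Y, ∀ z ∈ Y, y ≠ z → δ < dist y z) :
    (Y.card : ℝ) * (δ / 2) ^ d ≤ (R + δ / 2) ^ d := by
  have hhalf : (0:ℝ) < δ / 2 := by linarith
  have hdisj : (Y : Set (EuclideanSpace ℝ (Fin d))).PairwiseDisjoint
      (fun y => Metric.ball y (δ / 2)) := by
    intro y hy z hz hyz
    apply Metric.ball_disjoint_ball
    have := hsep y (Finset.mem_coe.1 hy) z (Finset.mem_coe.1 hz) hyz
    linarith
  have hunion : volume (⋃ y ∈ Y, Metric.ball y (δ / 2))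
      = ∑ y ∈ Y, volume (Metric.ball y (δ / 2)) :=
    measure_biUnion_finset hdisj fun y _ => measurableSet_ball
  have hvol : ∀ y : EuclideanSpace ℝ (Fin d), ∀ t : ℝ, 0 < t →
      volume (Metric.ball y t)
        = ENNReal.ofReal (t ^ d) * volume (Metric.ball (0 : EuclideanSpace ℝ (Fin d)) 1) := by
    intro y t ht
    rw [Measure.addHaar_ball_of_pos volume y ht, finrank_euclideanSpace_fin]
  have hsub : (⋃ y ∈ Y, Metric.ball y (δ / 2)) ⊆ Metric.ball c (R + δ / 2) := by
    intro z hz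
    simp only [Set.mem_iUnion] at hz
    obtain ⟨y, hy, hzy⟩ := hz
    have h1 : dist z y < δ / 2 := Metric.mem_ball.1 hzy
    have h2 : dist y c ≤ R := hY y hy
    have h3 := dist_triangle z y c
    exact Metric.mem_ball.2 (by linarith)
  have hchain : (Y.card : ℝ≥0∞) * (ENNReal.ofReal ((δ/2) ^ d)
        * volume (Metric.ball (0 : EuclideanSpace ℝ (Fin d)) 1))
      ≤ ENNReal.ofReal ((R + δ/2) ^ d)
        * volume (Metric.ball (0 : EuclideanSpace ℝ (Fin d)) 1) := by
    calc (Y.card : ℝ≥0∞) * (ENNReal.ofReal ((δ/2) ^ d)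
          * volume (Metric.ball (0 : EuclideanSpace ℝ (Fin d)) 1))
        = ∑ y ∈ Y, volume (Metric.ball y (δ / 2)) := by
          rw [Finset.sum_congr rfl fun y _ => hvol y _ hhalf, Finset.sum_const, nsmul_eq_mul]
      _ = volume (⋃ y ∈ Y, Metric.ball y (δ / 2)) := hunion.symm
      _ ≤ volume (Metric.ball c (R + δ / 2)) := measure_mono hsub
      _ = _ := hvol c _ (by linarith)
  have hne : volume (Metric.ball (0 : EuclideanSpace ℝ (Fin d)) 1) ≠ 0 :=
    (measure_ball_pos _ _ one_pos).ne'
  have htop : volume (Metric.ball (0 : EuclideanSpace ℝ (Fin d)) 1) ≠ ⊤ :=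
    measure_ball_lt_top.ne
  rw [← mul_assoc] at hchain
  have hchain2 : (Y.card : ℝ≥0∞) * ENNReal.ofReal ((δ/2) ^ d)
      ≤ ENNReal.ofReal ((R + δ/2) ^ d) :=
    (ENNReal.mul_le_mul_iff_left hne htop).1 hchain
  rw [← ENNReal.ofReal_natCast, ← ENNReal.ofReal_mul (Nat.cast_nonneg _)] at hchain2
  exact (ENNReal.ofReal_le_ofReal_iff (by positivity)).1 hchain2

/-- Lemma 3: for a monotonically decreasing, positive LSH exponent `ρ` on `[α, ∞)`
and `p ∈ (0,1)`,
`Σ_{i : ‖x_i − x₀‖ ≥ αr} p^{1/ρ(‖x_i − x₀‖/r)}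
  ≤ p^{1/ρ(α)} (1 + 2(α+η)/β)^{d/2} √(2N_β + n) + p^{1/ρ(α+η)} n`. -/
theorem lsh_sum_bound {d n : ℕ}
    (x₀ : EuclideanSpace ℝ (Fin d)) (x : Fin n → EuclideanSpace ℝ (Fin d))
    (r α η β p : ℝ) (hr : 0 < r) (hα : 1 ≤ α) (hη : 0 < η) (hβ : 0 < β)
    (hp0 : 0 < p) (hp1 : p < 1)
    (ρ : ℝ → ℝ) (hρpos : ∀ s, α ≤ s → 0 < ρ s) (hρdec : AntitoneOn ρ (Set.Ici α))
    (Nβ : ℕ)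
    (hNβ : Nβ = (Finset.univ.filter fun ij : Fin n × Fin n =>
        ij.1 < ij.2 ∧ dist (x ij.1) (x ij.2) ≤ β * r).card) :
    ∑ i ∈ Finset.univ.filter fun i : Fin n => α * r ≤ dist (x i) x₀,
        p ^ ((1 : ℝ) / ρ (dist (x i) x₀ / r)) ≤
      p ^ ((1 : ℝ) / ρ α) * (1 + 2 * (α + η) / β) ^ ((d : ℝ) / 2) *
          Real.sqrt (2 * (Nβ : ℝ) + (n : ℝ)) +
        p ^ ((1 : ℝ) / ρ (α + η)) * (n : ℝ) := by
  haveI : DecidableEq (EuclideanSpace ℝ (Fin d)) := Classical.decEq _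
  have hβr : 0 < β * r := mul_pos hβ hr
  have hαη : 0 < α + η := by linarith
  set K : ℝ := 1 + 2 * (α + η) / β with hKdef
  have hK0 : (0:ℝ) < K := by positivity
  set f : Fin n → ℝ := fun i => p ^ ((1 : ℝ) / ρ (dist (x i) x₀ / r)) with hf
  set F := Finset.univ.filter (fun i : Fin n => α * r ≤ dist (x i) x₀) with hF
  set S := F.filter (fun i => dist (x i) x₀ ≤ (α + η) * r) with hS
  -- membership facts
  have hSF : S ⊆ F := Finset.filter_subset _ _
  have hFmem : ∀ i ∈ F, α * r ≤ dist (x i) x₀ := by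
    intro i hi; exact (Finset.mem_filter.1 hi).2
  -- term bound on S
  have hterm : ∀ i ∈ S, f i ≤ p ^ ((1:ℝ) / ρ α) := by
    intro i hi
    have h1 : α ≤ dist (x i) x₀ / r := (le_div_iff₀ hr).2 (hFmem i (hSF hi))
    have h2 : ρ (dist (x i) x₀ / r) ≤ ρ α :=
      hρdec (Set.self_mem_Ici) h1 h1
    have h3 : (1:ℝ) / ρ α ≤ 1 / ρ (dist (x i) x₀ / r) :=
      one_div_le_one_div_of_le (hρpos _ h1) h2
    exact Real.rpow_le_rpow_of_exponent_ge hp0 hp1.le h3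
  -- term bound on far part
  have htermfar : ∀ i ∈ F.filter (fun i => ¬ dist (x i) x₀ ≤ (α + η) * r),
      f i ≤ p ^ ((1:ℝ) / ρ (α + η)) := by
    intro i hi
    have hi' := Finset.mem_filter.1 hi
    have h0 : (α + η) * r < dist (x i) x₀ := lt_of_not_ge hi'.2
    have h1 : α + η ≤ dist (x i) x₀ / r := (le_div_iff₀ hr).2 h0.le
    have hαα : α ≤ α + η := by linarith
    have h2 : ρ (dist (x i) x₀ / r) ≤ ρ (α + η) :=
      hρdec (Set.mem_Ici.2 hαα) (Set.mem_Ici.2 (le_trans hαα h1)) h1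
    have h3 : (1:ℝ) / ρ (α + η) ≤ 1 / ρ (dist (x i) x₀ / r) :=
      one_div_le_one_div_of_le (hρpos _ (le_trans hαα h1)) h2
    exact Real.rpow_le_rpow_of_exponent_ge hp0 hp1.le h3
  -- Caro-Wei
  obtain ⟨Y, hYS, hYsep, hYsum⟩ := caroWei_s5 x (β * r) hβr.le S
  have hN1 : ∀ pt ∈ S, 1 ≤ (S.filter (fun j => dist (x pt) (x j) ≤ β * r)).card := by
    intro pt hpt
    exact Finset.card_pos.2 ⟨pt, Finset.mem_filter.2 ⟨hpt, by simp [dist_self, hβr.le]⟩⟩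
  -- Cauchy-Schwarz
  have hCS : ((S.card : ℝ)) ^ 2 ≤ (∑ pt ∈ S, (((S.filter (fun j => dist (x pt) (x j) ≤ β * r)).card : ℝ))⁻¹) * (∑ pt ∈ S, ((S.filter (fun j => dist (x pt) (x j) ≤ β * r)).card : ℝ)) := by
    have h := Finset.sum_mul_sq_le_sq_mul_sq S
      (fun pt => Real.sqrt (((S.filter (fun j => dist (x pt) (x j) ≤ β * r)).card : ℝ)⁻¹)) (fun pt => Real.sqrt (((S.filter (fun j => dist (x pt) (x j) ≤ β * r)).card : ℝ)))
    have h1 : ∑ pt ∈ S, Real.sqrt (((S.filter (fun j => dist (x pt) (x j) ≤ β * r)).card : ℝ)⁻¹) * Real.sqrt (((S.filter (fun j => dist (x pt) (x j) ≤ β * r)).card : ℝ)) = (S.card : ℝ) := by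
      rw [Finset.sum_congr rfl (fun pt hpt => ?_), Finset.sum_const, nsmul_eq_mul, mul_one]
      have hne : (((S.filter (fun j => dist (x pt) (x j) ≤ β * r)).card : ℝ)) ≠ 0 := by
        have := hN1 pt hpt; positivity
      rw [← Real.sqrt_mul (by positivity), inv_mul_cancel₀ hne, Real.sqrt_one]
    have h2 : ∀ pt ∈ S, Real.sqrt (((S.filter (fun j => dist (x pt) (x j) ≤ β * r)).card : ℝ)⁻¹) ^ 2 = (((S.filter (fun j => dist (x pt) (x j) ≤ β * r)).card : ℝ))⁻¹ :=
      fun pt _ => Real.sq_sqrt (by positivity)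
    have h3 : ∀ pt ∈ S, Real.sqrt (((S.filter (fun j => dist (x pt) (x j) ≤ β * r)).card : ℝ)) ^ 2 = (((S.filter (fun j => dist (x pt) (x j) ≤ β * r)).card : ℝ)) :=
      fun pt _ => Real.sq_sqrt (by positivity)
    rw [h1, Finset.sum_congr rfl h2, Finset.sum_congr rfl h3] at h
    exact h
  -- double counting
  have hsumN : (∑ pt ∈ S, ((S.filter (fun j => dist (x pt) (x j) ≤ β * r)).card : ℝ)) ≤ 2 * (Nβ : ℝ) + (n : ℝ) := by
    have hnat : (∑ pt ∈ S, (S.filter (fun j => dist (x pt) (x j) ≤ β * r)).card) ≤ 2 * Nβ + n := by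
      have heq : ∑ pt ∈ S, (S.filter (fun j => dist (x pt) (x j) ≤ β * r)).card
          = ((S ×ˢ S).filter fun z : Fin n × Fin n => dist (x z.1) (x z.2) ≤ β * r).card := by
        rw [Finset.card_filter, Finset.sum_product]
        exact Finset.sum_congr rfl fun pt _ => Finset.card_filter _ _
      set P := Finset.univ.filter (fun ij : Fin n × Fin n =>
        ij.1 < ij.2 ∧ dist (x ij.1) (x ij.2) ≤ β * r) with hP
      have hsub : ((S ×ˢ S).filter fun z : Fin n × Fin n => dist (x z.1) (x z.2) ≤ β * r)
          ⊆ (P ∪ P.image Prod.swap) ∪ Finset.univ.image (fun i : Fin n => (i, i)) := by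
        intro z hz
        have hz' := Finset.mem_filter.1 hz
        rcases lt_trichotomy z.1 z.2 with h | h | h
        · exact Finset.mem_union_left _ (Finset.mem_union_left _
            (Finset.mem_filter.2 ⟨Finset.mem_univ _, h, hz'.2⟩))
        · exact Finset.mem_union_right _
            (Finset.mem_image.2 ⟨z.1, Finset.mem_univ _, by simp [Prod.ext_iff, h]⟩)
        · refine Finset.mem_union_left _ (Finset.mem_union_right _ (Finset.mem_image.2
            ⟨(z.2, z.1), Finset.mem_filter.2 ⟨Finset.mem_univ _, h, ?_⟩, by simp [Prod.ext_iff]⟩))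
          rw [dist_comm]; exact hz'.2
      have hdiag : (Finset.univ.image (fun i : Fin n => (i, i))).card ≤ n := by
        calc (Finset.univ.image (fun i : Fin n => (i, i))).card
            ≤ (Finset.univ : Finset (Fin n)).card := Finset.card_image_le
          _ = n := by simp
      calc ∑ pt ∈ S, (S.filter (fun j => dist (x pt) (x j) ≤ β * r)).card
          = ((S ×ˢ S).filter fun z : Fin n × Fin n => dist (x z.1) (x z.2) ≤ β * r).card := heq
        _ ≤ ((P ∪ P.image Prod.swap) ∪ Finset.univ.image (fun i : Fin n => (i, i))).card :=
            Finset.card_le_card hsub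
        _ ≤ (P ∪ P.image Prod.swap).card
              + (Finset.univ.image (fun i : Fin n => (i, i))).card := Finset.card_union_le _ _
        _ ≤ (P.card + (P.image Prod.swap).card) + n :=
            add_le_add (Finset.card_union_le _ _) hdiag
        _ ≤ (P.card + P.card) + n := by
            exact Nat.add_le_add_right (Nat.add_le_add_left Finset.card_image_le _) n
        _ = 2 * Nβ + n := by omega
    exact_mod_cast hnat
  -- packing bound for Y
  have hYK : (Y.card : ℝ) ≤ K ^ d := by
    have hinj : Set.InjOn x (Y : Set (Fin n)) := by
      intro i hi j hj hxe
      by_contra hne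
      exact (hYsep i (Finset.mem_coe.1 hi) j (Finset.mem_coe.1 hj) hne)
        (by rw [hxe, dist_self]; exact hβr.le)
    have hcardim : (Y.image x).card = Y.card := Finset.card_image_of_injOn hinj
    have hpk := packingBound_s5 x₀ ((α + η) * r) (β * r) hβr (by positivity) (Y.image x)
      (by
        intro y hy
        obtain ⟨i, hiY, rfl⟩ := Finset.mem_image.1 hy
        have hiS := hYS hiY
        exact (Finset.mem_filter.1 hiS).2)
      (by
        intro y hy z hz hyz
        obtain ⟨i, hiY, rfl⟩ := Finset.mem_image.1 hy
        obtain ⟨j, hjY, rfl⟩ := Finset.mem_image.1 hz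
        have hij : i ≠ j := fun h => hyz (by rw [h])
        exact lt_of_not_ge (hYsep i hiY j hjY hij))
    have key : (α + η) * r + β * r / 2 = (β * r / 2) * K := by
      rw [hKdef]
      field_simp
      ring
    have h2 : (Y.card : ℝ) * (β * r / 2) ^ d ≤ K ^ d * (β * r / 2) ^ d := by
      calc (Y.card : ℝ) * (β * r / 2) ^ d
          = ((Y.image x).card : ℝ) * (β * r / 2) ^ d := by rw [hcardim]
        _ ≤ ((α + η) * r + β * r / 2) ^ d := hpk
        _ = K ^ d * (β * r / 2) ^ d := by rw [key, mul_pow, mul_comm]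
    have hpow : (0:ℝ) < (β * r / 2) ^ d := by positivity
    exact (mul_le_mul_iff_of_pos_right hpow).1 h2
  -- combine to bound S.card
  have hX0 : (0:ℝ) ≤ 2 * (Nβ : ℝ) + (n : ℝ) := by positivity
  have hm2 : ((S.card : ℝ)) ^ 2 ≤ K ^ d * (2 * (Nβ : ℝ) + (n : ℝ)) := by
    calc ((S.card : ℝ)) ^ 2 ≤ (∑ pt ∈ S, (((S.filter (fun j => dist (x pt) (x j) ≤ β * r)).card : ℝ))⁻¹) * (∑ pt ∈ S, ((S.filter (fun j => dist (x pt) (x j) ≤ β * r)).card : ℝ)) := hCS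
      _ ≤ (Y.card : ℝ) * (2 * (Nβ : ℝ) + (n : ℝ)) := by
          refine mul_le_mul hYsum hsumN ?_ (Nat.cast_nonneg _)
          exact Finset.sum_nonneg fun pt _ => by positivity
      _ ≤ K ^ d * (2 * (Nβ : ℝ) + (n : ℝ)) := mul_le_mul_of_nonneg_right hYK hX0
  have hKd : Real.sqrt (K ^ d) = K ^ ((d:ℝ) / 2) := by
    rw [show ((d:ℝ) / 2) = (d:ℝ) * (1/2) by ring, Real.rpow_mul hK0.le, Real.rpow_natCast,
      Real.sqrt_eq_rpow]
  have hmle : (S.card : ℝ) ≤ K ^ ((d:ℝ)/2) * Real.sqrt (2 * (Nβ : ℝ) + (n : ℝ)) := by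
    calc (S.card : ℝ) = Real.sqrt ((S.card : ℝ) ^ 2) := (Real.sqrt_sq (Nat.cast_nonneg _)).symm
      _ ≤ Real.sqrt (K ^ d * (2 * (Nβ : ℝ) + (n : ℝ))) := Real.sqrt_le_sqrt hm2
      _ = K ^ ((d:ℝ)/2) * Real.sqrt (2 * (Nβ : ℝ) + (n : ℝ)) := by
          rw [Real.sqrt_mul (by positivity), hKd]
  -- assemble
  have hnear : ∑ i ∈ S, f i
      ≤ p ^ ((1:ℝ) / ρ α) * (K ^ ((d:ℝ)/2) * Real.sqrt (2 * (Nβ : ℝ) + (n : ℝ))) := by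
    calc ∑ i ∈ S, f i ≤ S.card • p ^ ((1:ℝ) / ρ α) := Finset.sum_le_card_nsmul _ _ _ hterm
      _ = (S.card : ℝ) * p ^ ((1:ℝ) / ρ α) := nsmul_eq_mul _ _
      _ ≤ (K ^ ((d:ℝ)/2) * Real.sqrt (2 * (Nβ : ℝ) + (n : ℝ))) * p ^ ((1:ℝ) / ρ α) :=
          mul_le_mul_of_nonneg_right hmle (Real.rpow_nonneg hp0.le _)
      _ = _ := mul_comm _ _
  have hfarcard : ((F.filter (fun i => ¬ dist (x i) x₀ ≤ (α + η) * r)).card : ℝ) ≤ (n : ℝ) := by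
    have : (F.filter (fun i => ¬ dist (x i) x₀ ≤ (α + η) * r)).card ≤ n := by
      calc (F.filter (fun i => ¬ dist (x i) x₀ ≤ (α + η) * r)).card ≤ F.card :=
            Finset.card_filter_le _ _
        _ ≤ (Finset.univ : Finset (Fin n)).card := by rw [hF]; exact Finset.card_filter_le _ _
        _ = n := by simp
    exact_mod_cast this
  have hfar : ∑ i ∈ F.filter (fun i => ¬ dist (x i) x₀ ≤ (α + η) * r), f i
      ≤ p ^ ((1:ℝ) / ρ (α + η)) * (n : ℝ) := by
    calc ∑ i ∈ F.filter (fun i => ¬ dist (x i) x₀ ≤ (α + η) * r), f i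
        ≤ (F.filter (fun i => ¬ dist (x i) x₀ ≤ (α + η) * r)).card • p ^ ((1:ℝ) / ρ (α + η)) :=
          Finset.sum_le_card_nsmul _ _ _ htermfar
      _ = ((F.filter (fun i => ¬ dist (x i) x₀ ≤ (α + η) * r)).card : ℝ)
            * p ^ ((1:ℝ) / ρ (α + η)) := nsmul_eq_mul _ _
      _ ≤ (n : ℝ) * p ^ ((1:ℝ) / ρ (α + η)) :=
          mul_le_mul_of_nonneg_right hfarcard (Real.rpow_nonneg hp0.le _)
      _ = p ^ ((1:ℝ) / ρ (α + η)) * (n : ℝ) := mul_comm _ _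
  calc ∑ i ∈ F, f i
      = ∑ i ∈ S, f i + ∑ i ∈ F.filter (fun i => ¬ dist (x i) x₀ ≤ (α + η) * r), f i :=
        (Finset.sum_filter_add_sum_filter_not F _ f).symm
    _ ≤ p ^ ((1:ℝ) / ρ α) * (K ^ ((d:ℝ)/2) * Real.sqrt (2 * (Nβ : ℝ) + (n : ℝ)))
          + p ^ ((1:ℝ) / ρ (α + η)) * (n : ℝ) := add_le_add hnear hfar
    _ = p ^ ((1:ℝ) / ρ α) * K ^ ((d:ℝ)/2) * Real.sqrt (2 * (Nβ : ℝ) + (n : ℝ))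
          + p ^ ((1:ℝ) / ρ (α + η)) * (n : ℝ) := by ring
end

section
/- Let x_0, x_1, …, x_n ∈ ℝ^d with n ≥ 1, let r > 0, β > 0, p ∈ (0,1), and let ρ : [α, ∞) → (0, ∞) be a monotonically decreasing function defined at some α ≥ 1. Suppose μ > α satisfies ρ(μ) = ρ(α)/2. Let N_β = |{(i,j) : 1 ≤ i < j ≤ n, ‖x_i − x_j‖₂ ≤ βr}|, set M = (1 + 2μ/β)^{d/2} · √(2N_β + n), and choose the real parameter K = ρ(α) · log M / log(1/p) (so that p^K = M^{−ρ(α)}). Then p^{−K} · (1 + Σ_{i : ‖x_i − x_0‖₂ ≥ αr} p^{K/ρ(‖x_i − x_0‖₂ / r)}) ≤ 3 · M^{ρ(α)}. -/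
private lemma lsh_pairs_le {n : ℕ} {X : Type*} [PseudoMetricSpace X] (x : Fin n → X) (c : ℝ) :
    (Finset.univ.filter fun ij : Fin n × Fin n => dist (x ij.1) (x ij.2) ≤ c).card ≤
      2 * (Finset.univ.filter fun ij : Fin n × Fin n =>
          ij.1 < ij.2 ∧ dist (x ij.1) (x ij.2) ≤ c).card + n := by
  classical
  set A := Finset.univ.filter fun ij : Fin n × Fin n => ij.1 < ij.2 ∧ dist (x ij.1) (x ij.2) ≤ c with hA
  set B := Finset.univ.filter fun ij : Fin n × Fin n => ij.2 < ij.1 ∧ dist (x ij.1) (x ij.2) ≤ c with hB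
  set C := (Finset.univ : Finset (Fin n × Fin n)).filter fun ij => ij.1 = ij.2 with hC
  have hsub : (Finset.univ.filter fun ij : Fin n × Fin n => dist (x ij.1) (x ij.2) ≤ c) ⊆ A ∪ B ∪ C := by
    intro ij hij
    simp only [Finset.mem_filter, Finset.mem_univ, true_and] at hij
    rcases lt_trichotomy ij.1 ij.2 with h|h|h
    · exact Finset.mem_union_left _ (Finset.mem_union_left _ (by simp [hA, hij, h]))
    · exact Finset.mem_union_right _ (by simp [hC, h])
    · exact Finset.mem_union_left _ (Finset.mem_union_right _ (by simp [hB, hij, h]))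
  have hBA : B.card = A.card := by
    apply Finset.card_bij (fun ij _ => ij.swap)
    · intro ij hij
      simp only [hB, Finset.mem_filter, Finset.mem_univ, true_and] at hij
      simp only [hA, Finset.mem_filter, Finset.mem_univ, true_and, Prod.fst_swap, Prod.snd_swap]
      exact ⟨hij.1, by rw [dist_comm]; exact hij.2⟩
    · intro a ha b hb hab; exact Prod.swap_injective hab
    · intro ij hij
      refine ⟨ij.swap, ?_, by simp⟩
      simp only [hA, Finset.mem_filter, Finset.mem_univ, true_and] at hij
      simp only [hB, Finset.mem_filter, Finset.mem_univ, true_and, Prod.fst_swap, Prod.snd_swap]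
      exact ⟨hij.1, by rw [dist_comm]; exact hij.2⟩
  have hCn : C.card ≤ n := by
    have : C.card ≤ (Finset.univ : Finset (Fin n)).card := by
      apply Finset.card_le_card_of_injOn (fun ij => ij.1) (by simp)
      intro a ha b hb hab
      simp only [hC, Finset.mem_filter, Finset.coe_filter] at ha hb
      simp only [Set.mem_setOf_eq] at ha hb
      exact Prod.ext hab (by simp only at hab; rw [← ha.2, ← hb.2, hab])
    simpa using this
  calc (Finset.univ.filter fun ij : Fin n × Fin n => dist (x ij.1) (x ij.2) ≤ c).card
      ≤ (A ∪ B ∪ C).card := Finset.card_le_card hsub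
    _ ≤ A.card + B.card + C.card :=
        le_trans (Finset.card_union_le _ _) (by gcongr; exact Finset.card_union_le _ _)
    _ ≤ 2 * A.card + n := by omega

open MeasureTheory Metric ENNReal in
private lemma lsh_packing {d n : ℕ} (x₀ : EuclideanSpace ℝ (Fin d))
    (x : Fin n → EuclideanSpace ℝ (Fin d)) (R s : ℝ) (hR : 0 ≤ R) (hs : 0 < s) :
    ((Finset.univ.filter fun i : Fin n => dist (x i) x₀ ≤ R).card : ℝ) ^ 2 * s ^ d ≤
      (R + s) ^ d *
        ((Finset.univ.filter fun ij : Fin n × Fin n => dist (x ij.1) (x ij.2) ≤ 2 * s).card : ℝ) := by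
  classical
  set S := Finset.univ.filter fun i : Fin n => dist (x i) x₀ ≤ R with hS
  set N := (Finset.univ.filter fun ij : Fin n × Fin n => dist (x ij.1) (x ij.2) ≤ 2 * s).card with hN
  set ι := volume (ball (0 : EuclideanSpace ℝ (Fin d)) 1) with hι
  have hι0 : ι ≠ 0 := (measure_ball_pos volume 0 one_pos).ne'
  have hιtop : ι ≠ ⊤ := measure_ball_lt_top.ne
  have hdim : Module.finrank ℝ (EuclideanSpace ℝ (Fin d)) = d := finrank_euclideanSpace_fin
  have hballvol : ∀ y : EuclideanSpace ℝ (Fin d), ∀ u : ℝ, 0 < u →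
      volume (ball y u) = ENNReal.ofReal (u ^ d) * ι := by
    intro y u hu
    rw [Measure.addHaar_ball_of_pos volume y hu, hdim]
  set Vs := ENNReal.ofReal (s ^ d) * ι with hVs
  set f : EuclideanSpace ℝ (Fin d) → ℝ≥0∞ :=
    fun y => ∑ i ∈ S, (ball (x i) s).indicator 1 y with hf
  have hfmeas : Measurable f :=
    Finset.measurable_sum _ (fun i _ => measurable_one.indicator measurableSet_ball)
  set g : EuclideanSpace ℝ (Fin d) → ℝ≥0∞ := (ball x₀ (R + s)).indicator 1 with hg
  have hgmeas : Measurable g := measurable_one.indicator measurableSet_ball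
  have hfg : f * g = f := by
    funext y
    by_cases hy : y ∈ ball x₀ (R + s)
    · simp [hg, Set.indicator_of_mem hy]
    · have h0 : f y = 0 := by
        apply Finset.sum_eq_zero
        intro i hi
        simp only [hS, Finset.mem_filter, Finset.mem_univ, true_and] at hi
        apply Set.indicator_of_notMem
        intro hmem
        apply hy
        rw [mem_ball] at hmem ⊢
        calc dist y x₀ ≤ dist y (x i) + dist (x i) x₀ := dist_triangle _ _ _
          _ < s + R := add_lt_add_of_lt_of_le hmem hi
          _ = R + s := add_comm _ _
      simp [h0]
  have hintf : ∫⁻ y, f y = S.card * Vs := by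
    rw [hf]
    simp only
    rw [lintegral_finset_sum _ (fun i _ => measurable_one.indicator measurableSet_ball)]
    have heach : ∀ i ∈ S, ∫⁻ y, (ball (x i) s).indicator
        (1 : EuclideanSpace ℝ (Fin d) → ℝ≥0∞) y = Vs := by
      intro i _
      rw [lintegral_indicator_one measurableSet_ball, hballvol (x i) s hs]
    rw [Finset.sum_congr rfl heach, Finset.sum_const, nsmul_eq_mul]
  have hintf2 : ∫⁻ y, f y * f y ≤ (N : ℝ≥0∞) * Vs := by
    have hexp : ∀ y, f y * f y =
        ∑ i ∈ S, ∑ j ∈ S, (ball (x i) s ∩ ball (x j) s).indicator 1 y := by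
      intro y
      rw [hf]
      simp only
      rw [Finset.sum_mul_sum]
      refine Finset.sum_congr rfl fun i _ => Finset.sum_congr rfl fun j _ => ?_
      exact (congrFun Set.inter_indicator_one y).symm
    calc ∫⁻ y, f y * f y
        = ∑ i ∈ S, ∑ j ∈ S, volume (ball (x i) s ∩ ball (x j) s) := by
          simp only [hexp]
          rw [lintegral_finset_sum _ (fun i _ => Finset.measurable_sum _
            (fun j _ => measurable_one.indicator (measurableSet_ball.inter measurableSet_ball)))]
          refine Finset.sum_congr rfl fun i _ => ?_
          rw [lintegral_finset_sum _ (fun j _ =>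
            measurable_one.indicator (measurableSet_ball.inter measurableSet_ball))]
          refine Finset.sum_congr rfl fun j _ => ?_
          rw [lintegral_indicator_one (measurableSet_ball.inter measurableSet_ball)]
      _ ≤ ∑ i ∈ S, ∑ j ∈ S, (if dist (x i) (x j) ≤ 2 * s then Vs else 0) := by
          refine Finset.sum_le_sum fun i _ => Finset.sum_le_sum fun j _ => ?_
          by_cases hd : dist (x i) (x j) ≤ 2 * s
          · rw [if_pos hd]
            exact le_trans (measure_mono Set.inter_subset_left)
              (le_of_eq (hballvol (x i) s hs))
          · rw [if_neg hd]
            have hemp : ball (x i) s ∩ ball (x j) s = ∅ := by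
              ext y
              simp only [Set.mem_inter_iff, mem_ball, Set.mem_empty_iff_false, iff_false, not_and]
              intro h1 h2
              apply hd
              calc dist (x i) (x j) ≤ dist (x i) y + dist y (x j) := dist_triangle _ _ _
                _ ≤ s + s := add_le_add (by rw [dist_comm]; exact h1.le) h2.le
                _ = 2 * s := by ring
            rw [hemp]
            simp
      _ = ((S ×ˢ S).filter fun ij : Fin n × Fin n =>
            dist (x ij.1) (x ij.2) ≤ 2 * s).card * Vs := by
          rw [← Finset.sum_product', ← Finset.sum_filter, Finset.sum_const, nsmul_eq_mul]
      _ ≤ (N : ℝ≥0∞) * Vs := by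
          refine mul_le_mul_left (Nat.cast_le.mpr (Finset.card_le_card ?_)) Vs
          intro ij hij
          simp only [Finset.mem_filter] at hij ⊢
          exact ⟨Finset.mem_univ _, hij.2⟩
  -- Cauchy–Schwarz (Hölder with p = q = 2)
  set W := ENNReal.ofReal ((R + s) ^ d) * ι with hW
  have hRs : 0 < R + s := by linarith
  have hintg2 : ∫⁻ y, g y ^ (2:ℝ) = W := by
    have hgg : ∀ y, g y ^ (2:ℝ) = g y := by
      intro y
      rw [hg]
      by_cases hy : y ∈ ball x₀ (R + s)
      · simp [Set.indicator_of_mem hy]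
      · simp [Set.indicator_of_notMem hy, ENNReal.zero_rpow_of_pos (by norm_num : (0:ℝ) < 2)]
    simp only [hgg]
    rw [hg, lintegral_indicator_one measurableSet_ball, hballvol x₀ _ hRs]
  have hconj : Real.HolderConjugate 2 2 := Real.holderConjugate_iff.mpr ⟨one_lt_two, by norm_num⟩
  have hH := ENNReal.lintegral_mul_le_Lp_mul_Lq volume hconj hfmeas.aemeasurable
    hgmeas.aemeasurable
  rw [hfg, hintf, hintg2] at hH
  have hff : ∀ y, f y ^ (2:ℝ) = f y * f y := by
    intro y
    rw [show (2:ℝ) = ((2:ℕ):ℝ) by norm_num, ENNReal.rpow_natCast, sq]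
  simp only [hff] at hH
  have hH2 : (S.card : ℝ≥0∞) * Vs ≤ ((N : ℝ≥0∞) * Vs) ^ ((1:ℝ)/2) * W ^ ((1:ℝ)/2) :=
    le_trans hH (by gcongr)
  have hprod : (((N : ℝ≥0∞) * Vs) ^ ((1:ℝ)/2) * W ^ ((1:ℝ)/2)) *
      (((N : ℝ≥0∞) * Vs) ^ ((1:ℝ)/2) * W ^ ((1:ℝ)/2)) = (N : ℝ≥0∞) * Vs * W := by
    rw [← ENNReal.mul_rpow_of_nonneg _ _ (by norm_num : (0:ℝ) ≤ 1/2),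
      ← ENNReal.rpow_add_of_nonneg ((1:ℝ)/2) ((1:ℝ)/2) (by norm_num) (by norm_num)]
    norm_num
  have hsq : ((S.card : ℝ≥0∞) * Vs) * ((S.card : ℝ≥0∞) * Vs) ≤ (N : ℝ≥0∞) * Vs * W := by
    rw [← hprod]; exact mul_le_mul' hH2 hH2
  have hVs0 : Vs ≠ 0 := by
    rw [hVs]
    exact mul_ne_zero (ENNReal.ofReal_pos.mpr (by positivity)).ne' hι0
  have hVstop : Vs ≠ ⊤ := by
    rw [hVs]
    exact ENNReal.mul_ne_top ENNReal.ofReal_ne_top hιtop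
  have hcancel : (S.card : ℝ≥0∞) ^ 2 * Vs ≤ (N : ℝ≥0∞) * W := by
    have h1 : ((S.card : ℝ≥0∞) ^ 2 * Vs) * Vs ≤ ((N : ℝ≥0∞) * W) * Vs := by
      calc ((S.card : ℝ≥0∞) ^ 2 * Vs) * Vs = ((S.card : ℝ≥0∞) * Vs) * ((S.card : ℝ≥0∞) * Vs) := by
            ring
        _ ≤ (N : ℝ≥0∞) * Vs * W := hsq
        _ = ((N : ℝ≥0∞) * W) * Vs := by ring
    exact (ENNReal.mul_le_mul_iff_left hVs0 hVstop).mp h1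
  have hcancel2 : (S.card : ℝ≥0∞) ^ 2 * ENNReal.ofReal (s ^ d) ≤
      (N : ℝ≥0∞) * ENNReal.ofReal ((R + s) ^ d) := by
    have h1 : ((S.card : ℝ≥0∞) ^ 2 * ENNReal.ofReal (s ^ d)) * ι ≤
        ((N : ℝ≥0∞) * ENNReal.ofReal ((R + s) ^ d)) * ι := by
      calc ((S.card : ℝ≥0∞) ^ 2 * ENNReal.ofReal (s ^ d)) * ι
          = (S.card : ℝ≥0∞) ^ 2 * Vs := by rw [hVs]; ring
        _ ≤ (N : ℝ≥0∞) * W := hcancel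
        _ = ((N : ℝ≥0∞) * ENNReal.ofReal ((R + s) ^ d)) * ι := by rw [hW]; ring
    exact (ENNReal.mul_le_mul_iff_left hι0 hιtop).mp h1
  have hreal : ((S.card : ℝ) ^ 2 * s ^ d) ≤ (R + s) ^ d * (N : ℝ) := by
    rw [← ENNReal.ofReal_le_ofReal_iff (by positivity)]
    calc ENNReal.ofReal ((S.card : ℝ) ^ 2 * s ^ d)
        = (S.card : ℝ≥0∞) ^ 2 * ENNReal.ofReal (s ^ d) := by
          rw [ENNReal.ofReal_mul (by positivity), ENNReal.ofReal_pow (by positivity)]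
          norm_num
      _ ≤ (N : ℝ≥0∞) * ENNReal.ofReal ((R + s) ^ d) := hcancel2
      _ = ENNReal.ofReal ((R + s) ^ d * (N : ℝ)) := by
          rw [ENNReal.ofReal_mul (by positivity), ENNReal.ofReal_natCast]
          ring
  exact hreal

/-- Theorem 4 (analytic core): with `M = (1 + 2μ/β)^{d/2} √(2N_β + n)`,
`ρ(μ) = ρ(α)/2`, and `K = ρ(α)·log M / log(1/p)` (so `p^K = M^{-ρ(α)}`),
`p^{-K} (1 + Σ_{i : ‖x_i − x₀‖ ≥ αr} p^{K/ρ(‖x_i − x₀‖/r)}) ≤ 3 M^{ρ(α)}`. -/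
theorem lsh_query_bound {d n : ℕ} (hn : 0 < n)
    (x₀ : EuclideanSpace ℝ (Fin d)) (x : Fin n → EuclideanSpace ℝ (Fin d))
    (r α β p : ℝ) (hr : 0 < r) (hα : 1 ≤ α) (hβ : 0 < β) (hp0 : 0 < p) (hp1 : p < 1)
    (ρ : ℝ → ℝ) (hρpos : ∀ s, α ≤ s → 0 < ρ s) (hρdec : AntitoneOn ρ (Set.Ici α))
    (μ : ℝ) (hμ : α < μ) (hρμ : ρ μ = ρ α / 2)
    (Nβ : ℕ)
    (hNβ : Nβ = (Finset.univ.filter fun ij : Fin n × Fin n =>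
        ij.1 < ij.2 ∧ dist (x ij.1) (x ij.2) ≤ β * r).card)
    (M K : ℝ)
    (hM : M = (1 + 2 * μ / β) ^ ((d : ℝ) / 2) * Real.sqrt (2 * (Nβ : ℝ) + (n : ℝ)))
    (hK : K = ρ α * Real.log M / Real.log (1 / p)) :
    p ^ (-K) * (1 + ∑ i ∈ Finset.univ.filter fun i : Fin n => α * r ≤ dist (x i) x₀,
        p ^ (K / ρ (dist (x i) x₀ / r))) ≤ 3 * M ^ ρ α := by
  classical
  have hμ0 : 0 < μ := lt_of_lt_of_le (lt_of_lt_of_le one_pos hα) hμ.le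
  have hbase1 : (1:ℝ) ≤ 1 + 2 * μ / β := by
    have : 0 ≤ 2 * μ / β := by positivity
    linarith
  have harg1 : (1:ℝ) ≤ 2 * (Nβ:ℝ) + (n:ℝ) := by
    have h1 : (1:ℝ) ≤ (n:ℝ) := by exact_mod_cast hn
    have h2 : (0:ℝ) ≤ (Nβ:ℝ) := Nat.cast_nonneg _
    linarith
  have hC1 : (1:ℝ) ≤ (1 + 2 * μ / β) ^ ((d : ℝ) / 2) :=
    Real.one_le_rpow hbase1 (by positivity)
  have hsqrt1 : (1:ℝ) ≤ Real.sqrt (2 * (Nβ:ℝ) + (n:ℝ)) := by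
    rw [show (1:ℝ) = Real.sqrt 1 by simp]
    exact Real.sqrt_le_sqrt harg1
  have hM1 : (1:ℝ) ≤ M := by rw [hM]; nlinarith
  have hM0 : (0:ℝ) < M := lt_of_lt_of_le one_pos hM1
  set L := Real.log M with hL
  have hL0 : 0 ≤ L := Real.log_nonneg hM1
  have hlogp : Real.log p < 0 := Real.log_neg hp0 hp1
  have hK' : K = ρ α * L / (-Real.log p) := by rw [hK, one_div, Real.log_inv, hL]
  have hρα : 0 < ρ α := hρpos α le_rfl
  have hK0 : 0 ≤ K := by
    rw [hK']
    exact div_nonneg (mul_nonneg hρα.le hL0) (by linarith)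
  -- p^(-K) = M^(ρ α)
  have hpK : p ^ (-K) = M ^ (ρ α) := by
    rw [Real.rpow_def_of_pos hp0, Real.rpow_def_of_pos hM0, ← hL]
    congr 1
    rw [hK']
    field_simp [hlogp.ne]
  -- p^(K/c) = exp(-(ρ α / c * L))
  have hpexp : ∀ c : ℝ, c ≠ 0 → p ^ (K / c) = Real.exp (-(ρ α / c * L)) := by
    intro c hc
    rw [Real.rpow_def_of_pos hp0]
    congr 1
    rw [hK']
    field_simp [hc, hlogp.ne]
  -- the two basic term bounds
  have hpρα : p ^ (K / ρ α) = M⁻¹ := by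
    rw [hpexp (ρ α) hρα.ne', div_self hρα.ne', one_mul, Real.exp_neg, Real.exp_log hM0]
  have hpρμ : p ^ (K / (ρ α / 2)) = M⁻¹ * M⁻¹ := by
    rw [hpexp (ρ α / 2) (by positivity), show ρ α / (ρ α / 2) = 2 by field_simp,
      show -(2 * L) = -L + -L by ring, Real.exp_add, Real.exp_neg, Real.exp_log hM0]
  set F := Finset.univ.filter fun i : Fin n => α * r ≤ dist (x i) x₀ with hF
  have hterm : ∀ i ∈ F, p ^ (K / ρ (dist (x i) x₀ / r)) ≤
      if dist (x i) x₀ < μ * r then M⁻¹ else M⁻¹ * M⁻¹ := by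
    intro i hi
    simp only [hF, Finset.mem_filter, Finset.mem_univ, true_and] at hi
    set si := dist (x i) x₀ / r with hsi
    have hsiα : α ≤ si := (le_div_iff₀ hr).mpr hi
    have hρsi : 0 < ρ si := hρpos si hsiα
    by_cases hcase : dist (x i) x₀ < μ * r
    · rw [if_pos hcase]
      have hle : ρ si ≤ ρ α := hρdec Set.self_mem_Ici hsiα hsiα
      have hexp : K / ρ α ≤ K / ρ si := by gcongr
      calc p ^ (K / ρ si) ≤ p ^ (K / ρ α) :=
            Real.rpow_le_rpow_of_exponent_ge hp0 hp1.le hexp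
        _ = M⁻¹ := hpρα
    · rw [if_neg hcase]
      push_neg at hcase
      have hsiμ : μ ≤ si := (le_div_iff₀ hr).mpr hcase
      have hle : ρ si ≤ ρ α / 2 := by
        rw [← hρμ]
        exact hρdec (Set.mem_Ici.mpr hμ.le) (Set.mem_Ici.mpr hsiα) hsiμ
      have hexp : K / (ρ α / 2) ≤ K / ρ si := by gcongr
      calc p ^ (K / ρ si) ≤ p ^ (K / (ρ α / 2)) :=
            Real.rpow_le_rpow_of_exponent_ge hp0 hp1.le hexp
        _ = M⁻¹ * M⁻¹ := hpρμ
  -- counting: M² = (1+2μ/β)^d (2Nβ+n)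
  have hM2 : M ^ 2 = (1 + 2 * μ / β) ^ d * (2 * (Nβ:ℝ) + (n:ℝ)) := by
    rw [hM, mul_pow, Real.sq_sqrt (by linarith)]
    congr 1
    rw [← Real.rpow_natCast ((1 + 2 * μ / β) ^ ((d : ℝ) / 2)) 2,
      ← Real.rpow_mul (by linarith), ← Real.rpow_natCast (1 + 2 * μ / β) d]
    norm_num
  -- the packing bound : #{i : dist ≤ μ r} ≤ M
  have htM : ((Finset.univ.filter fun i : Fin n => dist (x i) x₀ ≤ μ * r).card : ℝ) ≤ M := by
    set t := (Finset.univ.filter fun i : Fin n => dist (x i) x₀ ≤ μ * r).card with ht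
    have hpack := lsh_packing x₀ x (μ * r) (β * r / 2) (by positivity) (by positivity)
    rw [show 2 * (β * r / 2) = β * r by ring] at hpack
    have hpairs : ((Finset.univ.filter fun ij : Fin n × Fin n =>
        dist (x ij.1) (x ij.2) ≤ β * r).card : ℝ) ≤ 2 * (Nβ:ℝ) + (n:ℝ) := by
      have := lsh_pairs_le x (β * r)
      rw [← hNβ] at this
      exact_mod_cast this
    have hst : (0:ℝ) < β * r / 2 := by positivity
    have hratio : (μ * r + β * r / 2) / (β * r / 2) = 1 + 2 * μ / β := by
      field_simp
      ring
    have h2 : (t:ℝ) ^ 2 * (β * r / 2) ^ d ≤ (μ * r + β * r / 2) ^ d * (2 * (Nβ:ℝ) + (n:ℝ)) := by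
      refine le_trans hpack ?_
      exact mul_le_mul_of_nonneg_left hpairs (by positivity)
    have h3 : (t:ℝ) ^ 2 ≤ (1 + 2 * μ / β) ^ d * (2 * (Nβ:ℝ) + (n:ℝ)) := by
      rw [← hratio, div_pow, div_mul_eq_mul_div, le_div_iff₀ (pow_pos hst d)]
      exact h2
    rw [← hM2] at h3
    calc (t:ℝ) = Real.sqrt ((t:ℝ)^2) := by rw [Real.sqrt_sq (Nat.cast_nonneg _)]
      _ ≤ Real.sqrt (M^2) := Real.sqrt_le_sqrt h3
      _ = M := Real.sqrt_sq hM0.le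
  -- n ≤ M²
  have hnM2 : (n:ℝ) ≤ M ^ 2 := by
    rw [hM2]
    have h1 : (1:ℝ) ≤ (1 + 2 * μ / β) ^ d := one_le_pow₀ hbase1
    nlinarith [Nat.cast_nonneg (α := ℝ) Nβ]
  -- sum bound
  have hsum : (∑ i ∈ F, p ^ (K / ρ (dist (x i) x₀ / r))) ≤ 2 := by
    have hMinv : (0:ℝ) ≤ M⁻¹ := by positivity
    calc ∑ i ∈ F, p ^ (K / ρ (dist (x i) x₀ / r))
        ≤ ∑ i ∈ F, (if dist (x i) x₀ < μ * r then M⁻¹ else M⁻¹ * M⁻¹) :=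
          Finset.sum_le_sum hterm
      _ = ∑ i ∈ F.filter (fun i => dist (x i) x₀ < μ * r),
            (if dist (x i) x₀ < μ * r then M⁻¹ else M⁻¹ * M⁻¹)
          + ∑ i ∈ F.filter (fun i => ¬ dist (x i) x₀ < μ * r),
            (if dist (x i) x₀ < μ * r then M⁻¹ else M⁻¹ * M⁻¹) :=
          (Finset.sum_filter_add_sum_filter_not F _ _).symm
      _ = (F.filter (fun i => dist (x i) x₀ < μ * r)).card * M⁻¹
          + (F.filter (fun i => ¬ dist (x i) x₀ < μ * r)).card * (M⁻¹ * M⁻¹) := by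
          rw [Finset.sum_congr rfl (fun i hi => if_pos (Finset.mem_filter.mp hi).2),
            Finset.sum_congr rfl (fun i hi => if_neg (Finset.mem_filter.mp hi).2),
            Finset.sum_const, Finset.sum_const, nsmul_eq_mul, nsmul_eq_mul]
      _ ≤ M * M⁻¹ + M ^ 2 * (M⁻¹ * M⁻¹) := by
          gcongr
          · calc ((F.filter (fun i => dist (x i) x₀ < μ * r)).card : ℝ)
                ≤ ((Finset.univ.filter fun i : Fin n => dist (x i) x₀ ≤ μ * r).card : ℝ) := by
                  have hsub : F.filter (fun i => dist (x i) x₀ < μ * r) ⊆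
                      Finset.univ.filter fun i : Fin n => dist (x i) x₀ ≤ μ * r := by
                    intro i hi
                    simp only [hF, Finset.mem_filter, Finset.mem_univ, true_and] at hi ⊢
                    exact hi.2.le
                  exact_mod_cast Nat.cast_le.mpr (Finset.card_le_card hsub)
              _ ≤ M := htM
          · calc ((F.filter (fun i => ¬ dist (x i) x₀ < μ * r)).card : ℝ)
                ≤ (n:ℝ) := by
                  have : (F.filter (fun i => ¬ dist (x i) x₀ < μ * r)).card ≤ n := by
                    calc _ ≤ F.card := Finset.card_filter_le _ _
                      _ ≤ (Finset.univ : Finset (Fin n)).card := Finset.card_filter_le _ _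
                      _ = n := Finset.card_fin n
                  exact_mod_cast this
              _ ≤ M ^ 2 := hnM2
      _ = 2 := by field_simp; ring
  -- conclusion
  have hMρ : (0:ℝ) ≤ M ^ ρ α := Real.rpow_nonneg hM0.le _
  calc p ^ (-K) * (1 + ∑ i ∈ F, p ^ (K / ρ (dist (x i) x₀ / r)))
      = M ^ ρ α * (1 + ∑ i ∈ F, p ^ (K / ρ (dist (x i) x₀ / r))) := by rw [hpK]
    _ ≤ M ^ ρ α * 3 := by
        apply mul_le_mul_of_nonneg_left _ hMρ
        linarith
    _ = 3 * M ^ ρ α := by ring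
end

section
/- Let x_0, x_1, …, x_n ∈ ℝ^d with n ≥ 1, let r > 0, β > 0, α ≥ 1 and p ∈ (0,1). Let N_β = |{(i,j) : 1 ≤ i < j ≤ n, ‖x_i − x_j‖₂ ≤ βr}|, set M = (1 + 2√2·α/β)^{d/2} · √(2N_β + n), and choose the real parameter K = (1/α²) · log M / log(1/p). Then p^{−K} · (1 + Σ_{i : ‖x_i − x_0‖₂ ≥ αr} p^{K·‖x_i − x_0‖₂² / r²}) ≤ 3 · (1 + 2√2·α/β)^{d/(2α²)} · (2N_β + n)^{1/(2α²)}. -/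
open MeasureTheory Metric Finset Set
open scoped ENNReal

lemma vol_ball_eq (d : ℕ) (x : EuclideanSpace ℝ (Fin d)) {t : ℝ} (ht : 0 < t) :
    volume (Metric.ball x t) = ENNReal.ofReal (t ^ d) *
      volume (Metric.ball (0 : EuclideanSpace ℝ (Fin d)) 1) := by
  rw [Measure.addHaar_ball_of_pos _ x ht, finrank_euclideanSpace_fin]

lemma counting_lemma {d n : ℕ} (x₀ : EuclideanSpace ℝ (Fin d))
    (x : Fin n → EuclideanSpace ℝ (Fin d)) {R ρ : ℝ} (hρ : 0 < ρ) (hR : 0 ≤ R) :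
    ((Finset.univ.filter fun i : Fin n => dist (x i) x₀ ≤ R).card : ℝ) ^ 2 ≤
      ((R + ρ) / ρ) ^ d *
        ((Finset.univ.filter fun ij : Fin n × Fin n =>
            dist (x ij.1) (x ij.2) ≤ 2 * ρ).card : ℝ) := by
  classical
  set F := Finset.univ.filter fun i : Fin n => dist (x i) x₀ ≤ R with hF
  set P := Finset.univ.filter (fun ij : Fin n × Fin n => dist (x ij.1) (x ij.2) ≤ 2*ρ) with hP
  set U : Set (EuclideanSpace ℝ (Fin d)) := Metric.ball x₀ (R + ρ) with hU
  set v : ℝ≥0∞ := volume (Metric.ball (0:EuclideanSpace ℝ (Fin d)) 1) with hv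
  have hv0 : v ≠ 0 := (measure_ball_pos volume _ one_pos).ne'
  have hvt : v ≠ ⊤ := measure_ball_lt_top.ne
  set f : EuclideanSpace ℝ (Fin d) → ℝ≥0∞ := fun z => ∑ i ∈ F, (Metric.ball (x i) ρ).indicator 1 z with hf
  have hmi : ∀ i : Fin n, Measurable ((Metric.ball (x i) ρ).indicator (1 : EuclideanSpace ℝ (Fin d) → ℝ≥0∞)) :=
    fun i => measurable_const.indicator measurableSet_ball
  have hfm : Measurable f := by
    apply Finset.measurable_sum
    exact fun i _ => hmi i
  set g : EuclideanSpace ℝ (Fin d) → ℝ≥0∞ := U.indicator 1 with hg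
  have hgm : Measurable g := measurable_const.indicator measurableSet_ball
  have hIf : ∫⁻ z, f z = (F.card : ℝ≥0∞) * (ENNReal.ofReal (ρ ^ d) * v) := by
    rw [lintegral_finset_sum _ (fun i _ => hmi i)]
    rw [Finset.sum_congr rfl (fun i _ => by
      rw [lintegral_indicator_one measurableSet_ball, vol_ball_eq d _ hρ])]
    rw [Finset.sum_const, nsmul_eq_mul]
  have hfg : ∀ z, f z = (f * g) z := by
    intro z
    by_cases hz : z ∈ U
    · simp [hg, Set.indicator_of_mem hz]
    · have h0 : f z = 0 := by
        apply Finset.sum_eq_zero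
        intro i hi
        apply Set.indicator_of_notMem
        intro hzB
        apply hz
        have h1 := (Finset.mem_filter.mp hi).2
        have h2 : dist z (x i) < ρ := mem_ball.mp hzB
        have : dist z x₀ < R + ρ := by
          calc dist z x₀ ≤ dist z (x i) + dist (x i) x₀ := dist_triangle _ _ _
          _ < ρ + R := by linarith [dist_nonneg (x := z) (y := x i)]
          _ = R + ρ := add_comm _ _
        exact mem_ball.mpr this
      simp [h0]
  have hg2 : ∫⁻ z, g z ^ (2:ℝ) = volume U := by
    have : ∀ z, g z ^ (2:ℝ) = g z := by
      intro z
      by_cases hz : z ∈ U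
      · simp [hg, Set.indicator_of_mem hz]
      · simp [hg, Set.indicator_of_notMem hz,
          ENNReal.zero_rpow_of_pos (by norm_num : (0:ℝ) < 2)]
    rw [lintegral_congr this, lintegral_indicator_one measurableSet_ball]
  have hIf2 : ∫⁻ z, f z ^ (2:ℝ) ≤ (P.card : ℝ≥0∞) * (ENNReal.ofReal (ρ^d) * v) := by
    have h1 : ∀ z, f z ^ (2:ℝ) = ∑ i ∈ F, ∑ j ∈ F,
        ((Metric.ball (x i) ρ ∩ Metric.ball (x j) ρ).indicator (1 : EuclideanSpace ℝ (Fin d) → ℝ≥0∞) z) := by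
      intro z
      rw [show (2:ℝ) = ((2:ℕ):ℝ) by norm_num, ENNReal.rpow_natCast]
      rw [show f z ^ (2:ℕ) = f z * f z by ring, hf]
      rw [Finset.sum_mul_sum]
      refine Finset.sum_congr rfl fun i _ => Finset.sum_congr rfl fun j _ => ?_
      rw [Set.inter_indicator_one]
      rfl
    have hqm : ∀ i j : Fin n, Measurable
        ((Metric.ball (x i) ρ ∩ Metric.ball (x j) ρ).indicator (1 : EuclideanSpace ℝ (Fin d) → ℝ≥0∞)) :=
      fun i j => measurable_const.indicator (measurableSet_ball.inter measurableSet_ball)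
    calc ∫⁻ z, f z ^ (2:ℝ)
        = ∫⁻ z, ∑ i ∈ F, ∑ j ∈ F,
            ((Metric.ball (x i) ρ ∩ Metric.ball (x j) ρ).indicator (1 : EuclideanSpace ℝ (Fin d) → ℝ≥0∞) z) :=
          lintegral_congr h1
      _ = ∑ i ∈ F, ∫⁻ z, ∑ j ∈ F,
            ((Metric.ball (x i) ρ ∩ Metric.ball (x j) ρ).indicator (1 : EuclideanSpace ℝ (Fin d) → ℝ≥0∞) z) :=
          lintegral_finset_sum _ (fun i _ => Finset.measurable_sum _ (fun j _ => hqm i j))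
      _ = ∑ i ∈ F, ∑ j ∈ F, ∫⁻ z,
            ((Metric.ball (x i) ρ ∩ Metric.ball (x j) ρ).indicator (1 : EuclideanSpace ℝ (Fin d) → ℝ≥0∞) z) :=
          Finset.sum_congr rfl (fun i _ => lintegral_finset_sum _ (fun j _ => hqm i j))
      _ = ∑ i ∈ F, ∑ j ∈ F, volume (Metric.ball (x i) ρ ∩ Metric.ball (x j) ρ) :=
          Finset.sum_congr rfl (fun i _ => Finset.sum_congr rfl (fun j _ =>
            lintegral_indicator_one (measurableSet_ball.inter measurableSet_ball)))
      _ ≤ ∑ i ∈ F, ∑ j ∈ F, (if dist (x i) (x j) ≤ 2*ρ then ENNReal.ofReal (ρ^d) * v else 0) := by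
          refine Finset.sum_le_sum fun i _ => Finset.sum_le_sum fun j _ => ?_
          by_cases hd : dist (x i) (x j) ≤ 2*ρ
          · rw [if_pos hd]
            calc volume (Metric.ball (x i) ρ ∩ Metric.ball (x j) ρ)
                ≤ volume (Metric.ball (x i) ρ) := measure_mono Set.inter_subset_left
              _ = ENNReal.ofReal (ρ^d) * v := vol_ball_eq d _ hρ
          · rw [if_neg hd]
            have : Metric.ball (x i) ρ ∩ Metric.ball (x j) ρ = ∅ := by
              ext z
              simp only [Set.mem_inter_iff, mem_ball, Set.mem_empty_iff_false, iff_false]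
              intro ⟨h1', h2'⟩
              apply hd
              calc dist (x i) (x j) ≤ dist (x i) z + dist z (x j) := dist_triangle _ _ _
                _ ≤ 2*ρ := by
                    have h1'' : dist (x i) z < ρ := by rw [dist_comm]; exact h1'
                    linarith
            rw [this, measure_empty]
      _ ≤ (P.card : ℝ≥0∞) * (ENNReal.ofReal (ρ^d) * v) := by
          rw [← Finset.sum_product']
          rw [← Finset.sum_filter]
          rw [Finset.sum_const, nsmul_eq_mul]
          have hsub : ((F ×ˢ F).filter fun ij : Fin n × Fin n => dist (x ij.1) (x ij.2) ≤ 2*ρ) ⊆ P := by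
            rw [hP]
            exact Finset.filter_subset_filter _ (Finset.subset_univ _)
          exact mul_le_mul_left (by exact_mod_cast Nat.cast_le.mpr (Finset.card_le_card hsub)) _
  have hconj : Real.HolderConjugate 2 2 := Real.HolderConjugate.two_two
  have holder := ENNReal.lintegral_mul_le_Lp_mul_Lq volume hconj hfm.aemeasurable hgm.aemeasurable
  have hRρ : (0:ℝ) < R + ρ := by linarith
  have key : (F.card : ℝ≥0∞) * (ENNReal.ofReal (ρ^d) * v) ≤
      ((P.card : ℝ≥0∞) * (ENNReal.ofReal (ρ^d) * v)) ^ ((1:ℝ)/2) *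
        (ENNReal.ofReal ((R+ρ)^d) * v) ^ ((1:ℝ)/2) := by
    have hvolU : volume U = ENNReal.ofReal ((R+ρ)^d) * v := vol_ball_eq d x₀ hRρ
    calc (F.card : ℝ≥0∞) * (ENNReal.ofReal (ρ^d) * v) = ∫⁻ z, f z := hIf.symm
      _ = ∫⁻ z, (f * g) z := lintegral_congr hfg
      _ ≤ (∫⁻ z, f z ^ (2:ℝ)) ^ ((1:ℝ)/2) * (∫⁻ z, g z ^ (2:ℝ)) ^ ((1:ℝ)/2) := holder
      _ ≤ _ := by
          rw [hg2, hvolU]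
          exact mul_le_mul_left (ENNReal.rpow_le_rpow hIf2 (by norm_num)) _
  have hmul_ne : ∀ y : ℝ≥0∞, y ≠ ⊤ → ∀ z : ℝ≥0∞, z ≠ ⊤ → y * z ≠ ⊤ := fun y hy z hz =>
    ENNReal.mul_ne_top hy hz
  have hb1 : (ENNReal.ofReal (ρ^d) * v) ≠ ⊤ := ENNReal.mul_ne_top ENNReal.ofReal_ne_top hvt
  have hb2 : (ENNReal.ofReal ((R+ρ)^d) * v) ≠ ⊤ := ENNReal.mul_ne_top ENNReal.ofReal_ne_top hvt
  have hne1 : (F.card : ℝ≥0∞) * (ENNReal.ofReal (ρ^d) * v) ≠ ⊤ :=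
    ENNReal.mul_ne_top (ENNReal.natCast_ne_top _) hb1
  have hne2 : ((P.card : ℝ≥0∞) * (ENNReal.ofReal (ρ^d) * v)) ^ ((1:ℝ)/2) *
      (ENNReal.ofReal ((R+ρ)^d) * v) ^ ((1:ℝ)/2) ≠ ⊤ :=
    ENNReal.mul_ne_top
      (ENNReal.rpow_ne_top_of_nonneg (by norm_num)
        (ENNReal.mul_ne_top (ENNReal.natCast_ne_top _) hb1))
      (ENNReal.rpow_ne_top_of_nonneg (by norm_num) hb2)
  have hreal := (ENNReal.toReal_le_toReal hne1 hne2).mpr key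
  set vr := v.toReal with hvr
  have hvr0 : 0 < vr := ENNReal.toReal_pos hv0 hvt
  have hρd : (0:ℝ) < ρ^d := pow_pos hρ d
  have hRd : (0:ℝ) ≤ (R+ρ)^d := by positivity
  simp only [ENNReal.toReal_mul, ← ENNReal.toReal_rpow, ENNReal.toReal_ofReal hρd.le,
    ENNReal.toReal_ofReal hRd, ENNReal.toReal_natCast] at hreal
  rw [← Real.sqrt_eq_rpow, ← Real.sqrt_eq_rpow] at hreal
  have h1 : (0:ℝ) ≤ (P.card:ℝ) * (ρ^d*vr) := mul_nonneg (Nat.cast_nonneg _) (mul_nonneg hρd.le hvr0.le)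
  have h2 : (0:ℝ) ≤ (R+ρ)^d*vr := by positivity
  have hsq : ((F.card:ℝ) * (ρ^d * vr))^2 ≤ ((P.card:ℝ) * (ρ^d * vr)) * ((R+ρ)^d * vr) := by
    calc ((F.card:ℝ) * (ρ^d*vr))^2
        ≤ (Real.sqrt ((P.card:ℝ)*(ρ^d*vr)) * Real.sqrt ((R+ρ)^d*vr))^2 := by
          apply pow_le_pow_left₀ (mul_nonneg (Nat.cast_nonneg _) (mul_nonneg hρd.le hvr0.le)) hreal
      _ = _ := by rw [mul_pow, Real.sq_sqrt h1, Real.sq_sqrt h2]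
  have hfinal : ((F.card:ℝ))^2 * ρ^d ≤ (P.card:ℝ) * (R+ρ)^d := by
    have hc : (0:ℝ) < ρ^d * vr^2 := by positivity
    refine le_of_mul_le_mul_right ?_ hc
    nlinarith [hsq]
  rw [div_pow, div_mul_eq_mul_div, le_div_iff₀ hρd]
  nlinarith [hfinal]


lemma pair_count {d n : ℕ} (x : Fin n → EuclideanSpace ℝ (Fin d)) (t : ℝ) :
    ((Finset.univ.filter fun ij : Fin n × Fin n => dist (x ij.1) (x ij.2) ≤ t).card : ℝ) ≤
      2 * ((Finset.univ.filter fun ij : Fin n × Fin n =>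
          ij.1 < ij.2 ∧ dist (x ij.1) (x ij.2) ≤ t).card : ℝ) + n := by
  classical
  set A := Finset.univ.filter fun ij : Fin n × Fin n =>
    ij.1 < ij.2 ∧ dist (x ij.1) (x ij.2) ≤ t with hA
  set B := Finset.univ.filter fun ij : Fin n × Fin n =>
    ij.2 < ij.1 ∧ dist (x ij.1) (x ij.2) ≤ t with hB
  set Dg := Finset.univ.filter fun ij : Fin n × Fin n => ij.1 = ij.2 with hDg
  have hsub : (Finset.univ.filter fun ij : Fin n × Fin n => dist (x ij.1) (x ij.2) ≤ t)
      ⊆ A ∪ B ∪ Dg := by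
    intro ij hij
    simp only [hA, hB, hDg, Finset.mem_filter, Finset.mem_union, Finset.mem_univ, true_and] at *
    rcases lt_trichotomy ij.1 ij.2 with h|h|h
    · exact Or.inl (Or.inl ⟨h, hij⟩)
    · exact Or.inr h
    · exact Or.inl (Or.inr ⟨h, hij⟩)
  have hBA : B.card = A.card := by
    apply Finset.card_bij (fun ij _ => Prod.swap ij)
    · intro ij hij
      simp only [hA, hB, Finset.mem_filter, Finset.mem_univ, true_and] at *
      exact ⟨hij.1, by rw [dist_comm]; exact hij.2⟩
    · intro a ha b hb h
      exact Prod.swap_injective h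
    · intro ij hij
      refine ⟨Prod.swap ij, ?_, (Prod.swap_swap ij).symm⟩
      simp only [hA, hB, Finset.mem_filter, Finset.mem_univ, true_and] at *
      exact ⟨hij.1, by rw [dist_comm]; exact hij.2⟩
  have hD : Dg.card = n := by
    have himg : Dg = Finset.univ.image (fun i : Fin n => (i, i)) := by
      ext ⟨a, b⟩
      simp only [hDg, Finset.mem_filter, Finset.mem_univ, true_and, Finset.mem_image]
      constructor
      · intro h; exact ⟨a, by rw [h]⟩
      · rintro ⟨i, hi⟩
        obtain ⟨h1, h2⟩ := Prod.ext_iff.mp hi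
        simp only at h1 h2
        rw [← h1, ← h2]
    rw [himg, Finset.card_image_of_injective _ (fun a b h => congrArg Prod.fst h)]
    simp
  have h1 := Finset.card_le_card hsub
  have h2 := Finset.card_union_le (A ∪ B) Dg
  have h3 := Finset.card_union_le A B
  have : (Finset.univ.filter fun ij : Fin n × Fin n => dist (x ij.1) (x ij.2) ≤ t).card
      ≤ 2 * A.card + n := by omega
  exact_mod_cast this


set_option maxHeartbeats 2000000 in
/-- Proposition 6 (analytic core, ball-grid LSH of Andoni–Indyk, `ρ(s) = 1/s²`):
with `M = (1 + 2√2·α/β)^{d/2} √(2N_β + n)` and `K = (1/α²)·log M / log(1/p)`,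
`p^{-K} (1 + Σ_{i : ‖x_i − x₀‖ ≥ αr} p^{K‖x_i − x₀‖²/r²})
  ≤ 3 (1 + 2√2·α/β)^{d/(2α²)} (2N_β + n)^{1/(2α²)}`. -/
theorem lsh_query_bound_ball_grid {d n : ℕ} (hn : 0 < n)
    (x₀ : EuclideanSpace ℝ (Fin d)) (x : Fin n → EuclideanSpace ℝ (Fin d))
    (r β α p : ℝ) (hr : 0 < r) (hβ : 0 < β) (hα : 1 ≤ α) (hp0 : 0 < p) (hp1 : p < 1)
    (Nβ : ℕ)
    (hNβ : Nβ = (Finset.univ.filter fun ij : Fin n × Fin n =>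
        ij.1 < ij.2 ∧ dist (x ij.1) (x ij.2) ≤ β * r).card)
    (M K : ℝ)
    (hM : M = (1 + 2 * Real.sqrt 2 * α / β) ^ ((d : ℝ) / 2) *
        Real.sqrt (2 * (Nβ : ℝ) + (n : ℝ)))
    (hK : K = (1 / α ^ 2) * Real.log M / Real.log (1 / p)) :
    p ^ (-K) * (1 + ∑ i ∈ Finset.univ.filter fun i : Fin n => α * r ≤ dist (x i) x₀,
        p ^ (K * dist (x i) x₀ ^ 2 / r ^ 2)) ≤
      3 * (1 + 2 * Real.sqrt 2 * α / β) ^ ((d : ℝ) / (2 * α ^ 2)) *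
        (2 * (Nβ : ℝ) + (n : ℝ)) ^ ((1 : ℝ) / (2 * α ^ 2)) := by
  classical
  have hα0 : (0:ℝ) < α := lt_of_lt_of_le one_pos hα
  have hα2 : (0:ℝ) < α^2 := by positivity
  have hs2 : (0:ℝ) < Real.sqrt 2 := Real.sqrt_pos.mpr (by norm_num)
  set c : ℝ := 2 * Real.sqrt 2 * α / β with hcdef
  have hc0 : 0 < c := by positivity
  set b : ℝ := 1 + c with hbdef
  have hb1 : (1:ℝ) ≤ b := by simp only [hbdef]; linarith
  have hb0 : (0:ℝ) < b := by linarith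
  set W : ℝ := 2*(Nβ:ℝ) + (n:ℝ) with hWdef
  have hn1 : (1:ℝ) ≤ (n:ℝ) := by exact_mod_cast hn
  have hNb0 : (0:ℝ) ≤ (Nβ:ℝ) := Nat.cast_nonneg _
  have hW1 : 1 ≤ W := by simp only [hWdef]; linarith
  have hW0 : (0:ℝ) < W := by linarith
  have hsW1 : 1 ≤ Real.sqrt W := by
    rw [show (1:ℝ) = Real.sqrt 1 by simp]
    exact Real.sqrt_le_sqrt hW1
  have hA1 : 1 ≤ b ^ ((d:ℝ)/2) := Real.one_le_rpow hb1 (by positivity)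
  have hArp : (0:ℝ) < b ^ ((d:ℝ)/2) := by linarith
  have hM1 : 1 ≤ M := by
    rw [hM]
    calc (1:ℝ) = 1*1 := by ring
      _ ≤ _ := mul_le_mul hA1 hsW1 (by norm_num) (by linarith)
  have hM0 : 0 < M := lt_of_lt_of_le one_pos hM1
  have hMW : Real.sqrt W ≤ M := by
    rw [hM]
    calc Real.sqrt W = 1 * Real.sqrt W := (one_mul _).symm
      _ ≤ b ^ ((d:ℝ)/2) * Real.sqrt W :=
          mul_le_mul_of_nonneg_right hA1 (Real.sqrt_nonneg _)
  have hlogp : 0 < Real.log (1/p) := by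
    rw [one_div, Real.log_inv]
    linarith [Real.log_neg hp0 hp1]
  -- the exponent identity
  have hid : ∀ q : ℝ, p ^ (K * q) = M ^ (-(q / α^2)) := by
    intro q
    rw [Real.rpow_def_of_pos hp0, Real.rpow_def_of_pos hM0]
    congr 1
    have hlp : Real.log p = - Real.log (1/p) := by rw [one_div, Real.log_inv]; ring
    rw [hK, hlp]
    field_simp
  have hpK : p ^ (-K) = M ^ ((1:ℝ) / α^2) := by
    have h1 := hid (-1)
    rw [mul_neg_one] at h1
    rw [h1, show -((-1:ℝ)/α^2) = (1:ℝ)/α^2 by ring]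
  -- rewrite the sum
  set Far := Finset.univ.filter fun i : Fin n => α * r ≤ dist (x i) x₀ with hFar
  set e : Fin n → ℝ := fun i => dist (x i) x₀^2 / r^2 / α^2 with he
  have hterm : ∀ i : Fin n, p ^ (K * dist (x i) x₀ ^2 / r^2) = M ^ (-(e i)) := by
    intro i
    simp only [he]
    rw [mul_div_assoc, hid (dist (x i) x₀ ^2 / r^2)]
  have hsum : ∑ i ∈ Far, p ^ (K * dist (x i) x₀^2/r^2) = ∑ i ∈ Far, M ^ (-(e i)) :=
    Finset.sum_congr rfl (fun i _ => hterm i)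
  rw [hpK, hsum]
  -- rewrite RHS
  have hRHS : 3 * b ^ ((d:ℝ)/(2*α^2)) * W ^ ((1:ℝ)/(2*α^2)) = 3 * M ^ ((1:ℝ)/α^2) := by
    rw [hM, Real.mul_rpow (by positivity) (Real.sqrt_nonneg _), Real.sqrt_eq_rpow,
      ← Real.rpow_mul hb0.le, ← Real.rpow_mul hW0.le,
      show (d:ℝ)/2 * ((1:ℝ)/α^2) = (d:ℝ)/(2*α^2) by field_simp,
      show (1:ℝ)/2 * ((1:ℝ)/α^2) = (1:ℝ)/(2*α^2) by field_simp, mul_assoc]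
  rw [hRHS]
  -- reduce to S ≤ 2
  have hMpos : 0 < M ^ ((1:ℝ)/α^2) := Real.rpow_pos_of_pos hM0 _
  have hS : ∑ i ∈ Far, M ^ (-(e i)) ≤ 2 := by
    have he1 : ∀ i ∈ Far, 1 ≤ e i := by
      intro i hi
      have hd : α*r ≤ dist (x i) x₀ := (Finset.mem_filter.mp hi).2
      have hd0 : (0:ℝ) ≤ dist (x i) x₀ := dist_nonneg
      simp only [he]
      rw [div_div, le_div_iff₀ (by positivity : (0:ℝ) < r^2*α^2), one_mul]
      calc r^2*α^2 = (α*r)*(α*r) := by ring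
        _ ≤ dist (x i) x₀ * dist (x i) x₀ :=
            mul_le_mul hd hd (by positivity : (0:ℝ) ≤ α*r) hd0
        _ = dist (x i) x₀^2 := by ring
    have hsWpos : 0 < Real.sqrt W := by linarith
    have hterm1 : ∀ i ∈ Far, M ^ (-(e i)) ≤ (Real.sqrt W)⁻¹ := by
      intro i hi
      calc M ^ (-(e i)) ≤ M ^ (-(1:ℝ)) :=
            Real.rpow_le_rpow_of_exponent_le hM1 (by linarith [he1 i hi])
        _ = M⁻¹ := Real.rpow_neg_one M
        _ ≤ (Real.sqrt W)⁻¹ := inv_anti₀ hsWpos hMW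
    by_cases hW4 : W ≤ 4
    · have hcard : ((Far.card : ℝ)) ≤ W := by
        have h1 : Far.card ≤ n := by
          calc Far.card ≤ (Finset.univ : Finset (Fin n)).card :=
                Finset.card_le_card (Finset.filter_subset _ _)
            _ = n := by simp
        have h2 : ((Far.card:ℝ)) ≤ (n:ℝ) := by exact_mod_cast h1
        linarith
      calc ∑ i ∈ Far, M ^ (-(e i)) ≤ Far.card • (Real.sqrt W)⁻¹ :=
            Finset.sum_le_card_nsmul _ _ _ hterm1
        _ = (Far.card : ℝ) * (Real.sqrt W)⁻¹ := nsmul_eq_mul _ _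
        _ ≤ W * (Real.sqrt W)⁻¹ := by
            apply mul_le_mul_of_nonneg_right hcard (by positivity)
        _ = Real.sqrt W := by
            rw [← div_eq_mul_inv, div_eq_iff (ne_of_gt hsWpos)]
            exact (Real.mul_self_sqrt hW0.le).symm
        _ ≤ 2 := by
            calc Real.sqrt W ≤ Real.sqrt 4 := Real.sqrt_le_sqrt hW4
              _ = 2 := by
                  rw [show (4:ℝ) = 2^2 by norm_num, Real.sqrt_sq (by norm_num : (0:ℝ) ≤ 2)]
    · push_neg at hW4
      set g : Fin n → ℕ := fun i => Nat.log 2 ⌊e i⌋₊ with hgdef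
      set J : ℕ := (Far.sup g) + 1 with hJ
      rw [← Finset.sum_fiberwise_of_maps_to (g := g) (t := Finset.range J)
        (fun i hi => Finset.mem_range.mpr (Nat.lt_succ_of_le (Finset.le_sup hi)))
        (fun i => M ^ (-(e i)))]
      have hfiber : ∀ j : ℕ, (∑ i ∈ Far.filter (fun i => g i = j), M ^ (-(e i)))
          ≤ ((1:ℝ)/2)^j := by
        intro j
        set u : ℝ := ((2^j : ℕ) : ℝ) with hu
        have hu1 : (1:ℝ) ≤ u := by
          have h0 : (1:ℕ) ≤ 2^j := Nat.one_le_two_pow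
          rw [hu]; exact_mod_cast h0
        have hu0 : (0:ℝ) < u := by linarith
        have hmem : ∀ i ∈ Far.filter (fun i => g i = j), u ≤ e i ∧ e i < 2*u := by
          intro i hi
          obtain ⟨hiF, hgi⟩ := Finset.mem_filter.mp hi
          have hei1 : 1 ≤ e i := he1 i hiF
          have hfl1 : 1 ≤ ⌊e i⌋₊ := Nat.le_floor (by exact_mod_cast hei1)
          constructor
          · have h1 : 2^j ≤ ⌊e i⌋₊ := by
              rw [← hgi]; exact Nat.pow_log_le_self 2 (by omega)
            calc u ≤ ((⌊e i⌋₊ : ℕ) : ℝ) := by rw [hu]; exact_mod_cast h1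
              _ ≤ e i := Nat.floor_le (by linarith)
          · have h2 : ⌊e i⌋₊ < 2^(j+1) := by
              rw [← hgi]; exact Nat.lt_pow_succ_log_self one_lt_two _
            have h3 : ((⌊e i⌋₊:ℕ) : ℝ) + 1 ≤ ((2^(j+1) : ℕ) : ℝ) := by exact_mod_cast h2
            have h4 : ((2^(j+1):ℕ):ℝ) = 2*u := by rw [hu]; push_cast; ring
            calc e i < ⌊e i⌋₊ + 1 := Nat.lt_floor_add_one _
              _ ≤ 2*u := by rw [← h4]; exact h3
        set R : ℝ := α * r * Real.sqrt (2*u) with hR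
        have hR0 : (0:ℝ) ≤ R := by positivity
        have hρ0 : (0:ℝ) < β*r/2 := by positivity
        have hsubF : Far.filter (fun i => g i = j) ⊆
            Finset.univ.filter (fun i : Fin n => dist (x i) x₀ ≤ R) := by
          intro i hi
          refine Finset.mem_filter.mpr ⟨Finset.mem_univ _, ?_⟩
          obtain ⟨_, h2u⟩ := hmem i hi
          have hd0 : (0:ℝ) ≤ dist (x i) x₀ := dist_nonneg
          have h5 : dist (x i) x₀^2 / (r^2*α^2) < 2*u := by
            rw [← div_div]; exact h2u
          have hsq : dist (x i) x₀^2 ≤ 2*u * (α^2 * r^2) := by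
            have h6 := (div_lt_iff₀ (by positivity : (0:ℝ) < r^2*α^2)).mp h5
            calc dist (x i) x₀^2 ≤ 2*u*(r^2*α^2) := le_of_lt h6
              _ = 2*u*(α^2*r^2) := by ring
          calc dist (x i) x₀ = Real.sqrt (dist (x i) x₀^2) := (Real.sqrt_sq hd0).symm
            _ ≤ Real.sqrt (2*u * (α^2*r^2)) := Real.sqrt_le_sqrt hsq
            _ = R := by
                rw [hR, show 2*u*(α^2*r^2) = (α*r)^2*(2*u) by ring,
                  Real.sqrt_mul (by positivity) _, Real.sqrt_sq (by positivity)]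
        have hcount := counting_lemma x₀ x hρ0 hR0
        have hpair := pair_count x (2*(β*r/2))
        rw [show (2:ℝ)*(β*r/2) = β*r by ring] at hcount hpair
        rw [← hNβ] at hpair
        have h1cu : (0:ℝ) ≤ 1 + c*Real.sqrt u := by positivity
        have hbase_eq : (R + β*r/2)/(β*r/2) = 1 + c * Real.sqrt u := by
          rw [hR, Real.sqrt_mul (by norm_num : (0:ℝ) ≤ 2) u, hcdef]
          field_simp
          ring
        have hcard2 : ((Finset.univ.filter (fun i : Fin n => dist (x i) x₀ ≤ R)).card : ℝ)^2
            ≤ (1+c*Real.sqrt u)^d * W := by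
          calc ((Finset.univ.filter (fun i : Fin n => dist (x i) x₀ ≤ R)).card : ℝ)^2
              ≤ ((R + β*r/2)/(β*r/2))^d *
                ((Finset.univ.filter fun ij : Fin n × Fin n =>
                  dist (x ij.1) (x ij.2) ≤ β*r).card : ℝ) := hcount
            _ ≤ ((R + β*r/2)/(β*r/2))^d * W := by
                apply mul_le_mul_of_nonneg_left _ (by positivity)
                rw [hWdef]; exact hpair
            _ = (1+c*Real.sqrt u)^d * W := by rw [hbase_eq]
        have hcardR : ((Finset.univ.filter (fun i : Fin n => dist (x i) x₀ ≤ R)).card : ℝ)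
            ≤ (1+c*Real.sqrt u)^((d:ℝ)/2) * Real.sqrt W := by
          have h6 : ((Finset.univ.filter (fun i : Fin n => dist (x i) x₀ ≤ R)).card : ℝ)
              = Real.sqrt (((Finset.univ.filter (fun i : Fin n => dist (x i) x₀ ≤ R)).card : ℝ)^2) :=
            (Real.sqrt_sq (Nat.cast_nonneg _)).symm
          rw [h6]
          calc Real.sqrt (((Finset.univ.filter (fun i : Fin n => dist (x i) x₀ ≤ R)).card : ℝ)^2)
              ≤ Real.sqrt ((1+c*Real.sqrt u)^d * W) := Real.sqrt_le_sqrt hcard2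
            _ = Real.sqrt ((1+c*Real.sqrt u)^d) * Real.sqrt W := Real.sqrt_mul (by positivity) _
            _ = (1+c*Real.sqrt u)^((d:ℝ)/2) * Real.sqrt W := by
                rw [show ((1+c*Real.sqrt u):ℝ)^d = (1+c*Real.sqrt u)^((d:ℕ):ℝ) from
                  (Real.rpow_natCast _ d).symm]
                rw [Real.sqrt_eq_rpow, ← Real.rpow_mul h1cu,
                  show ((d:ℕ):ℝ)*((1:ℝ)/2) = (d:ℝ)/2 by push_cast; ring]
        have hfibcard : (((Far.filter (fun i => g i = j)).card : ℕ) : ℝ)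
            ≤ (1+c*Real.sqrt u)^((d:ℝ)/2) * Real.sqrt W := by
          refine le_trans ?_ hcardR
          exact_mod_cast Finset.card_le_card hsubF
        have hBpos : (0:ℝ) < b ^ ((d:ℝ)/2) := Real.rpow_pos_of_pos hb0 _
        have hkey : (1+c*Real.sqrt u)^((d:ℝ)/2) * Real.sqrt W * M^(-u) ≤ W^((1-u)/2) := by
          have hMu : M^(-u) = (b^((d:ℝ)/2))^(-u) * (Real.sqrt W)^(-u) := by
            rw [hM, Real.mul_rpow hBpos.le (Real.sqrt_nonneg _)]
          have hsu : Real.sqrt u ≤ u := by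
            have huu : u ≤ u^2 := by
              calc u = u*1 := by ring
                _ ≤ u*u := mul_le_mul_of_nonneg_left hu1 hu0.le
                _ = u^2 := by ring
            calc Real.sqrt u ≤ Real.sqrt (u^2) := Real.sqrt_le_sqrt huu
              _ = u := Real.sqrt_sq (by linarith)
          have hBern : 1 + c*Real.sqrt u ≤ b ^ u := by
            calc 1 + c*Real.sqrt u ≤ 1 + u*c := by
                  have := mul_le_mul_of_nonneg_left hsu hc0.le
                  linarith [this]
              _ ≤ (1+c)^u := one_add_mul_self_le_rpow_one_add (by linarith) hu1
              _ = b ^ u := by rw [hbdef]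
          have h8 : (1+c*Real.sqrt u)^((d:ℝ)/2) ≤ (b^((d:ℝ)/2))^u := by
            calc (1+c*Real.sqrt u)^((d:ℝ)/2) ≤ (b^u)^((d:ℝ)/2) :=
                  Real.rpow_le_rpow h1cu hBern (by positivity)
              _ = (b^((d:ℝ)/2))^u := by
                  rw [← Real.rpow_mul hb0.le u ((d:ℝ)/2), ← Real.rpow_mul hb0.le ((d:ℝ)/2) u,
                    mul_comm]
          have h9 : (b^((d:ℝ)/2))^u * (b^((d:ℝ)/2))^(-u) = 1 := by
            rw [← Real.rpow_add hBpos]; norm_num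
          have h10 : Real.sqrt W * (Real.sqrt W)^(-u) = W^((1-u)/2) := by
            rw [Real.sqrt_eq_rpow, ← Real.rpow_mul hW0.le,
              show (1:ℝ)/2*(-u) = -(u/2) by ring]
            rw [show (W^((1:ℝ)/2) : ℝ) = W^((1:ℝ)/2) * 1 by ring]
            rw [mul_one, ← Real.rpow_add hW0, show (1:ℝ)/2 + -(u/2) = (1-u)/2 by ring]
          rw [hMu]
          calc (1+c*Real.sqrt u)^((d:ℝ)/2) * Real.sqrt W * ((b^((d:ℝ)/2))^(-u) * (Real.sqrt W)^(-u))
              ≤ (b^((d:ℝ)/2))^u * Real.sqrt W * ((b^((d:ℝ)/2))^(-u) * (Real.sqrt W)^(-u)) := by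
                apply mul_le_mul_of_nonneg_right
                  (mul_le_mul_of_nonneg_right h8 (Real.sqrt_nonneg _)) (by positivity)
            _ = ((b^((d:ℝ)/2))^u * (b^((d:ℝ)/2))^(-u)) * (Real.sqrt W * (Real.sqrt W)^(-u)) := by
                ring
            _ = W^((1-u)/2) := by rw [h9, h10, one_mul]
        have hWj : W^((1-u)/2) ≤ ((1:ℝ)/2)^j := by
          have h11 : (4:ℝ)^((u-1)/2) ≤ W^((u-1)/2) :=
            Real.rpow_le_rpow (by norm_num) hW4.le (by linarith)
          have h12 : W^((1-u)/2) = (W^((u-1)/2))⁻¹ := by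
            rw [show ((1:ℝ)-u)/2 = -((u-1)/2) by ring, Real.rpow_neg hW0.le]
          have h13 : (4:ℝ)^((1-u)/2) = ((4:ℝ)^((u-1)/2))⁻¹ := by
            rw [show ((1:ℝ)-u)/2 = -((u-1)/2) by ring, Real.rpow_neg (by norm_num)]
          have h14 : W^((1-u)/2) ≤ (4:ℝ)^((1-u)/2) := by
            rw [h12, h13]
            exact inv_anti₀ (Real.rpow_pos_of_pos (by norm_num) _) h11
          have h15 : (4:ℝ)^((1-u)/2) = (2:ℝ)^(1-u) := by
            rw [show (4:ℝ) = (2:ℝ)^((2:ℕ):ℝ) from by rw [Real.rpow_natCast]; norm_num,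
              ← Real.rpow_mul (by norm_num : (0:ℝ) ≤ 2),
              show ((2:ℕ):ℝ)*((1-u)/2) = 1-u by push_cast; ring]
          have h16 : (2:ℝ)^(1-u) ≤ (2:ℝ)^(-(j:ℝ)) := by
            apply Real.rpow_le_rpow_of_exponent_le one_le_two
            have h17 : (j:ℕ) < 2^j := Nat.lt_two_pow_self
            have h18 : ((j:ℕ):ℝ) + 1 ≤ u := by rw [hu]; exact_mod_cast h17
            linarith
          have h19 : (2:ℝ)^(-(j:ℝ)) = ((1:ℝ)/2)^j := by
            rw [Real.rpow_neg (by norm_num), Real.rpow_natCast, one_div, inv_pow]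
          calc W^((1-u)/2) ≤ (4:ℝ)^((1-u)/2) := h14
            _ = (2:ℝ)^(1-u) := h15
            _ ≤ (2:ℝ)^(-(j:ℝ)) := h16
            _ = ((1:ℝ)/2)^j := h19
        calc ∑ i ∈ Far.filter (fun i => g i = j), M ^ (-(e i))
            ≤ (Far.filter (fun i => g i = j)).card • M^(-u) := by
              apply Finset.sum_le_card_nsmul
              intro i hi
              exact Real.rpow_le_rpow_of_exponent_le hM1 (neg_le_neg (hmem i hi).1)
          _ = ((Far.filter (fun i => g i = j)).card : ℝ) * M^(-u) := nsmul_eq_mul _ _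
          _ ≤ ((1+c*Real.sqrt u)^((d:ℝ)/2) * Real.sqrt W) * M^(-u) := by
              apply mul_le_mul_of_nonneg_right hfibcard
                (Real.rpow_nonneg hM0.le _)
          _ ≤ W^((1-u)/2) := hkey
          _ ≤ ((1:ℝ)/2)^j := hWj
      calc ∑ j ∈ Finset.range J, ∑ i ∈ Far.filter (fun i => g i = j), M ^ (-(e i))
          ≤ ∑ j ∈ Finset.range J, ((1:ℝ)/2)^j := Finset.sum_le_sum (fun j _ => hfiber j)
        _ ≤ 2 := by
            have h := geom_sum_eq (by norm_num : ((1:ℝ)/2) ≠ 1) J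
            have h2 : (0:ℝ) ≤ (1/2:ℝ)^J := by positivity
            rw [h, div_le_iff_of_neg (by norm_num : ((1:ℝ)/2 - 1) < 0)]
            linarith
  calc M ^ ((1:ℝ)/α^2) * (1 + ∑ i ∈ Far, M ^ (-(e i)))
      ≤ M ^ ((1:ℝ)/α^2) * 3 := mul_le_mul_of_nonneg_left (by linarith) hMpos.le
    _ = 3 * M ^ ((1:ℝ)/α^2) := mul_comm _ _
end

section
/- Let x_0, x_1, …, x_n ∈ ℝ^d with n ≥ 1, let β, r > 0, and let N_β = |{(i,j) : 1 ≤ i < j ≤ n, ‖x_i − x_j‖₂ ≤ βr}|. Suppose the finite set {x_0, x_1, …, x_n} (with the Euclidean metric) has doubling dimension at most d_0 + 1, i.e., every subset Y of it can be covered by at most 2^{d_0+1} subsets each of diameter at most half the diameter of Y. Then max_{1≤i≤n} ‖x_i − x_0‖₂ ≥ (1/4) · ((n² / (2N_β + 2n))^{1/(d_0+1)} − 1) · βr. -/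
/-- Lemma 6: if `{x₀, x₁, …, xₙ}` has doubling dimension at most `d₀ + 1` and `N_β`
is the number of `βr`-near pairs among `x₁, …, xₙ`, then
`max_i ‖x_i − x₀‖₂ ≥ (1/4)·((n²/(2N_β + 2n))^{1/(d₀+1)} − 1)·βr`. -/
theorem doubling_max_dist_lower_bound {d n : ℕ} (hn : 0 < n)
    (x₀ : EuclideanSpace ℝ (Fin d)) (x : Fin n → EuclideanSpace ℝ (Fin d))
    (β r : ℝ) (hβ : 0 < β) (hr : 0 < r) (d₀ : ℕ)
    (hdbl : ∀ Y : Set (EuclideanSpace ℝ (Fin d)), Y ⊆ insert x₀ (Set.range x) →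
      ∃ f : Fin (2 ^ (d₀ + 1)) → Set (EuclideanSpace ℝ (Fin d)),
        Y ⊆ ⋃ i, f i ∧ ∀ i, EMetric.diam (f i) ≤ EMetric.diam Y / 2)
    (Nβ : ℕ)
    (hNβ : Nβ = (Finset.univ.filter fun ij : Fin n × Fin n =>
        ij.1 < ij.2 ∧ dist (x ij.1) (x ij.2) ≤ β * r).card) :
    (1 / 4 : ℝ) * (((n : ℝ) ^ 2 / (2 * (Nβ : ℝ) + 2 * (n : ℝ))) ^
        ((1 : ℝ) / ((d₀ : ℝ) + 1)) - 1) * (β * r) ≤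
      Finset.univ.sup' (Finset.univ_nonempty_iff.mpr ⟨⟨0, hn⟩⟩)
        (fun i => dist (x i) x₀) := by
  set S : Set (EuclideanSpace ℝ (Fin d)) := insert x₀ (Set.range x) with hS
  set M : ℝ := Finset.univ.sup' (Finset.univ_nonempty_iff.mpr ⟨⟨0, hn⟩⟩)
      (fun i => dist (x i) x₀) with hM
  have hMdist : ∀ i, dist (x i) x₀ ≤ M := fun i =>
    Finset.le_sup' (fun i => dist (x i) x₀) (Finset.mem_univ i)
  have hM0 : 0 ≤ M := le_trans dist_nonneg (hMdist ⟨0, hn⟩)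
  have hβr : 0 < β * r := mul_pos hβ hr
  -- iterated doubling cover
  have cover : ∀ k : ℕ, ∃ f : Fin (2 ^ ((d₀ + 1) * k)) → Set (EuclideanSpace ℝ (Fin d)),
      S ⊆ ⋃ i, f i ∧ ∀ i, f i ⊆ S ∧
        EMetric.diam (f i) ≤ EMetric.diam S / 2 ^ k := by
    intro k
    induction k with
    | zero =>
      refine ⟨fun _ => S, ?_, fun i => ⟨subset_rfl, ?_⟩⟩
      · intro y hy; exact Set.mem_iUnion.mpr ⟨⟨0, Nat.pow_pos (by norm_num)⟩, hy⟩
      · simp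
    | succ k ih =>
      obtain ⟨f, hcov, hf⟩ := ih
      choose g hgcov hgdiam using fun i => hdbl (f i) (hf i).1
      have hEq : 2 ^ ((d₀ + 1) * (k + 1)) = 2 ^ ((d₀ + 1) * k) * 2 ^ (d₀ + 1) := by
        rw [Nat.mul_succ, pow_add]
      refine ⟨fun m => (fun p : Fin (2 ^ ((d₀ + 1) * k)) × Fin (2 ^ (d₀ + 1)) =>
        g p.1 p.2 ∩ S) (finProdFinEquiv.symm (finCongr hEq m)), ?_, ?_⟩
      · intro y hy
        obtain ⟨i, hi⟩ := Set.mem_iUnion.mp (hcov hy)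
        obtain ⟨j, hj⟩ := Set.mem_iUnion.mp (hgcov i hi)
        refine Set.mem_iUnion.mpr ⟨finCongr hEq.symm (finProdFinEquiv (i, j)), ?_⟩
        simp only [finCongr_symm_apply, finCongr_apply, Fin.cast_cast, Fin.cast_eq_self,
          Equiv.symm_apply_apply]
        exact ⟨hj, (hf i).1 hi⟩
      · intro m
        refine ⟨Set.inter_subset_right, ?_⟩
        refine le_trans (EMetric.diam_mono Set.inter_subset_left) ?_
        refine le_trans (hgdiam _ _) ?_
        refine le_trans (ENNReal.div_le_div_right (hf _).2 2) ?_
        rw [pow_succ, div_eq_mul_inv, div_eq_mul_inv, div_eq_mul_inv,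
          ENNReal.mul_inv (Or.inl (by positivity)) (Or.inl (by simp)), mul_assoc]
  -- choose the scale k
  have hex : ∃ k : ℕ, 2 * M ≤ 2 ^ k * (β * r) := by
    obtain ⟨k, hk⟩ := pow_unbounded_of_one_lt (2 * M / (β * r)) one_lt_two
    rw [div_lt_iff₀ hβr] at hk
    exact ⟨k, hk.le⟩
  set k := Nat.find hex with hkdef
  have hkle : 2 * M ≤ 2 ^ k * (β * r) := Nat.find_spec hex
  obtain ⟨f, hcov, hf⟩ := cover k
  -- the whole set has diameter at most 2M
  have hdiamS : EMetric.diam S ≤ ENNReal.ofReal (2 * M) := by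
    apply EMetric.diam_le
    intro a ha b hb
    have h : ∀ z ∈ S, dist z x₀ ≤ M := by
      rintro z (rfl | ⟨i, rfl⟩)
      · simpa using hM0
      · exact hMdist i
    rw [edist_dist]
    apply ENNReal.ofReal_le_ofReal
    calc dist a b ≤ dist a x₀ + dist x₀ b := dist_triangle _ _ _
      _ ≤ M + M := add_le_add (h a ha) (by rw [dist_comm]; exact h b hb)
      _ = 2 * M := by ring
  -- each piece has diameter at most βr
  have hpiece : ∀ i, EMetric.diam (f i) ≤ ENNReal.ofReal (β * r) := by
    intro i
    refine le_trans (hf i).2 ?_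
    rw [ENNReal.div_le_iff_le_mul (Or.inl (by positivity))
      (Or.inl (by exact ENNReal.pow_ne_top (by simp)))]
    calc EMetric.diam S ≤ ENNReal.ofReal (2 * M) := hdiamS
      _ ≤ ENNReal.ofReal (2 ^ k * (β * r)) := ENNReal.ofReal_le_ofReal hkle
      _ = ENNReal.ofReal (β * r) * 2 ^ k := by
          rw [mul_comm, ENNReal.ofReal_mul hβr.le]
          congr 1
          rw [ENNReal.ofReal_pow (by norm_num)]
          norm_num
  -- points in the same piece are βr-close
  have hnear : ∀ i j : Fin n, ∀ t, x i ∈ f t → x j ∈ f t →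
      dist (x i) (x j) ≤ β * r := by
    intro i j t hi hj
    have h2 := le_trans (EMetric.edist_le_diam_of_mem hi hj) (hpiece t)
    rw [edist_dist] at h2
    exact (ENNReal.ofReal_le_ofReal_iff hβr.le).mp h2
  -- assign each point to a piece
  have hxS : ∀ i, x i ∈ S := fun i => Set.mem_insert_of_mem _ ⟨i, rfl⟩
  choose p hp using fun i => Set.mem_iUnion.mp (hcov (hxS i))
  classical
  set c : Fin (2 ^ ((d₀ + 1) * k)) → ℕ := fun t => (Finset.univ.filter fun i => p i = t).card with hc
  have hsum : ∑ t, c t = n := by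
    rw [← Finset.card_eq_sum_card_fiberwise (fun i _ => Finset.mem_univ (p i))]
    simp
  have pairs : (Finset.univ.filter fun ij : Fin n × Fin n => p ij.1 = p ij.2).card
      = ∑ t, c t * c t := by
    rw [Finset.card_eq_sum_card_fiberwise (f := fun ij => p ij.1)
      (t := Finset.univ) (fun ij _ => Finset.mem_univ _)]
    refine Finset.sum_congr rfl fun t _ => ?_
    rw [Finset.filter_filter]
    have heq : (Finset.univ.filter fun ij : Fin n × Fin n => p ij.1 = p ij.2 ∧ p ij.1 = t)
        = ((Finset.univ.filter fun i => p i = t) ×ˢ (Finset.univ.filter fun i => p i = t)) := by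
      rw [← Finset.filter_product, Finset.univ_product_univ]
      refine Finset.filter_congr fun ij _ => ?_
      exact ⟨fun ⟨h1, h2⟩ => ⟨h2, h1.symm.trans h2⟩, fun ⟨h1, h2⟩ => ⟨h1.trans h2.symm, h1⟩⟩
    rw [heq, Finset.card_product]
  -- the number of same-piece ordered pairs is at most 2Nβ + n
  have hsplit : (Finset.univ.filter fun ij : Fin n × Fin n => p ij.1 = p ij.2).card
      ≤ 2 * Nβ + n := by
    set A := Finset.univ.filter fun ij : Fin n × Fin n => p ij.1 = p ij.2 with hA
    have hsub : A ⊆ ((A.filter fun ij => ij.1 < ij.2) ∪ (A.filter fun ij => ij.1 = ij.2))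
        ∪ (A.filter fun ij => ij.2 < ij.1) := by
      intro ij hij
      simp only [Finset.mem_union, Finset.mem_filter]
      rcases lt_trichotomy ij.1 ij.2 with h | h | h
      · exact Or.inl (Or.inl ⟨hij, h⟩)
      · exact Or.inl (Or.inr ⟨hij, h⟩)
      · exact Or.inr ⟨hij, h⟩
    have h1 : (A.filter fun ij => ij.1 < ij.2).card ≤ Nβ := by
      rw [hNβ]
      apply Finset.card_le_card
      intro ij hij
      simp only [hA, Finset.mem_filter, Finset.filter_filter, Finset.mem_univ, true_and] at hij ⊢
      exact ⟨hij.2, hnear _ _ (p ij.1) (hp _) (hij.1 ▸ hp ij.2)⟩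
    have h3 : (A.filter fun ij => ij.2 < ij.1).card ≤ Nβ := by
      rw [hNβ]
      apply Finset.card_le_card_of_injOn (fun ij => (ij.2, ij.1))
      · intro ij hij
        simp only [hA, Finset.mem_coe, Finset.mem_filter, Finset.filter_filter, Finset.mem_univ, true_and] at hij ⊢
        exact ⟨hij.2, by rw [dist_comm]; exact hnear _ _ (p ij.1) (hp _) (hij.1 ▸ hp ij.2)⟩
      · intro a _ b _ hab
        exact Prod.ext (congrArg Prod.snd hab) (congrArg Prod.fst hab)
    have h2 : (A.filter fun ij => ij.1 = ij.2).card ≤ n := by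
      calc (A.filter fun ij => ij.1 = ij.2).card
          ≤ (Finset.univ : Finset (Fin n)).card := by
            apply Finset.card_le_card_of_injOn (fun ij => ij.1)
              (fun ij _ => Finset.mem_univ _)
            intro a ha b hb hab
            simp only [Finset.mem_coe, Finset.mem_filter] at ha hb
            exact Prod.ext hab (by rw [← ha.2, ← hb.2]; exact hab)
        _ = n := by simp
    calc A.card ≤ (((A.filter fun ij => ij.1 < ij.2) ∪ (A.filter fun ij => ij.1 = ij.2))
          ∪ (A.filter fun ij => ij.2 < ij.1)).card := Finset.card_le_card hsub
      _ ≤ ((A.filter fun ij => ij.1 < ij.2) ∪ (A.filter fun ij => ij.1 = ij.2)).card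
          + (A.filter fun ij => ij.2 < ij.1).card := Finset.card_union_le _ _
      _ ≤ (A.filter fun ij => ij.1 < ij.2).card + (A.filter fun ij => ij.1 = ij.2).card
          + (A.filter fun ij => ij.2 < ij.1).card :=
            Nat.add_le_add_right (Finset.card_union_le _ _) _
      _ ≤ Nβ + n + Nβ := add_le_add (add_le_add h1 h2) h3
      _ = 2 * Nβ + n := by ring
  -- Cauchy–Schwarz counting bound
  have key : (n : ℝ) ^ 2 ≤ ((2 ^ ((d₀ + 1) * k) : ℕ) : ℝ) * (2 * (Nβ : ℝ) + 2 * n) := by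
    have cs := sq_sum_le_card_mul_sum_sq (s := (Finset.univ : Finset (Fin (2 ^ ((d₀ + 1) * k)))))
      (f := fun t => (c t : ℝ))
    have e1 : (∑ t, (c t : ℝ)) = (n : ℝ) := by
      rw [← Nat.cast_sum, hsum]
    have e2 : (∑ t, (c t : ℝ) ^ 2) ≤ 2 * (Nβ : ℝ) + 2 * n := by
      have : (∑ t, c t * c t : ℕ) ≤ 2 * Nβ + 2 * n := by
        rw [← pairs]; omega
      calc (∑ t, (c t : ℝ) ^ 2) = ((∑ t, c t * c t : ℕ) : ℝ) := by
            push_cast; simp [sq]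
        _ ≤ ((2 * Nβ + 2 * n : ℕ) : ℝ) := by exact_mod_cast this
        _ = 2 * (Nβ : ℝ) + 2 * n := by push_cast; ring
    simp only [Finset.card_univ, Fintype.card_fin] at cs
    calc (n : ℝ) ^ 2 = (∑ t, (c t : ℝ)) ^ 2 := by rw [e1]
      _ ≤ ((2 ^ ((d₀ + 1) * k) : ℕ) : ℝ) * ∑ t, (c t : ℝ) ^ 2 := cs
      _ ≤ ((2 ^ ((d₀ + 1) * k) : ℕ) : ℝ) * (2 * (Nβ : ℝ) + 2 * n) := by
          apply mul_le_mul_of_nonneg_left e2 (by positivity)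
  -- pass to rpow
  have hden : (0 : ℝ) < 2 * (Nβ : ℝ) + 2 * n := by
    have : (1 : ℝ) ≤ (n : ℝ) := by exact_mod_cast hn
    positivity
  have hQ : (n : ℝ) ^ 2 / (2 * (Nβ : ℝ) + 2 * n) ≤ ((2 ^ ((d₀ + 1) * k) : ℕ) : ℝ) := by
    rw [div_le_iff₀ hden]; linarith [key]
  have hQ0 : (0 : ℝ) ≤ (n : ℝ) ^ 2 / (2 * (Nβ : ℝ) + 2 * n) := by positivity
  have he0 : (0 : ℝ) ≤ 1 / ((d₀ : ℝ) + 1) := by positivity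
  have hrpow : ((n : ℝ) ^ 2 / (2 * (Nβ : ℝ) + 2 * n)) ^ ((1 : ℝ) / ((d₀ : ℝ) + 1))
      ≤ ((2 ^ ((d₀ + 1) * k) : ℕ) : ℝ) ^ ((1 : ℝ) / ((d₀ : ℝ) + 1)) := Real.rpow_le_rpow hQ0 hQ he0
  have hTe : ((2 ^ ((d₀ + 1) * k) : ℕ) : ℝ) ^ ((1 : ℝ) / ((d₀ : ℝ) + 1)) = (2 : ℝ) ^ k := by
    have hd1 : ((d₀ : ℝ) + 1) ≠ 0 := by positivity
    have hTcast : ((2 ^ ((d₀ + 1) * k) : ℕ) : ℝ) = (2 : ℝ) ^ ((((d₀ + 1) * k : ℕ) : ℝ)) := by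
      rw [Real.rpow_natCast]; push_cast; ring
    rw [hTcast, ← Real.rpow_natCast (2 : ℝ) k,
      ← Real.rpow_mul (by norm_num : (0:ℝ) ≤ 2)]
    congr 1
    push_cast
    field_simp
  -- minimality of k
  have hfinal : ((2 : ℝ) ^ k - 1) * (β * r) ≤ 4 * M := by
    rcases Nat.eq_zero_or_pos k with h0 | hpos
    · rw [h0]; simp; positivity
    · have hmin := Nat.find_min hex (show k - 1 < k from Nat.sub_lt hpos one_pos)
      push_neg at hmin
      have h2k : (2 : ℝ) ^ k = 2 * 2 ^ (k - 1) := by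
        rw [← pow_succ']
        congr 1
        omega
      nlinarith [hβr, hmin]
  calc (1 / 4 : ℝ) * (((n : ℝ) ^ 2 / (2 * (Nβ : ℝ) + 2 * (n : ℝ))) ^
        ((1 : ℝ) / ((d₀ : ℝ) + 1)) - 1) * (β * r)
      ≤ (1 / 4 : ℝ) * ((2 : ℝ) ^ k - 1) * (β * r) := by
        apply mul_le_mul_of_nonneg_right _ hβr.le
        have := hTe ▸ hrpow
        linarith
    _ ≤ M := by linarith [hfinal]
end

section
/- Let x_0, x_1, …, x_n ∈ ℝ^d with n ≥ 1, let β, r > 0, and let N_β = |{(i,j) : 1 ≤ i < j ≤ n, ‖x_i − x_j‖₂ ≤ βr}|. Suppose the finite set {x_0, x_1, …, x_n} (with the Euclidean metric) has doubling dimension at most d_0 + 1, i.e., every subset Y of it can be covered by at most 2^{d_0+1} subsets each of diameter at most half the diameter of Y. Then for every D ≥ 0, |{i : 1 ≤ i ≤ n, ‖x_i − x_0‖₂ ≤ D}| ≤ (1 + 4D/(βr))^{(d_0+1)/2} · √(2N_β + 2n). -/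
open Finset
open scoped ENNReal

/-- Existence of a power of two between `a` and `1 + 2a`. -/
lemma aux_exists_pow_between (a : ℝ) (ha : 0 ≤ a) :
    ∃ k : ℕ, a ≤ 2 ^ k ∧ (2 : ℝ) ^ k ≤ 1 + 2 * a := by
  classical
  have hex : ∃ k : ℕ, a ≤ (2 : ℝ) ^ k := by
    obtain ⟨k, hk⟩ := pow_unbounded_of_one_lt a (one_lt_two (α := ℝ))
    exact ⟨k, hk.le⟩
  refine ⟨Nat.find hex, Nat.find_spec hex, ?_⟩
  rcases Nat.eq_zero_or_pos (Nat.find hex) with h0 | hpos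
  · rw [h0]; norm_num; linarith
  · obtain ⟨m, hm⟩ := Nat.exists_eq_succ_of_ne_zero hpos.ne'
    have hmin := Nat.find_min hex (m := m) (by omega)
    push_neg at hmin
    have : (2 : ℝ) ^ Nat.find hex = 2 * 2 ^ m := by rw [hm, pow_succ]; ring
    rw [this]; nlinarith

/-- Iterated doubling cover. -/
lemma aux_iter_cover {E : Type*} [PseudoEMetricSpace E] (base : Set E) (m : ℕ)
    (hdbl : ∀ Y : Set E, Y ⊆ base → ∃ f : Fin m → Set E,
      Y ⊆ ⋃ i, f i ∧ ∀ i, EMetric.diam (f i) ≤ EMetric.diam Y / 2) :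
    ∀ k : ℕ, ∀ Y : Set E, Y ⊆ base → ∃ F : Finset (Set E),
      F.card ≤ m ^ k ∧ (Y ⊆ ⋃ s ∈ F, s) ∧
      ∀ s ∈ F, (2 : ℝ≥0∞) ^ k * EMetric.diam s ≤ EMetric.diam Y := by
  classical
  intro k
  induction k with
  | zero =>
    intro Y hY
    refine ⟨{Y}, by simp, by simp, ?_⟩
    simp
  | succ k ih =>
    intro Y hY
    obtain ⟨f, hcov, hdiam⟩ := hdbl Y hY
    choose F hFcard hFcov hFdiam using fun i : Fin m =>
      ih (f i ∩ base) (Set.inter_subset_right)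
    refine ⟨Finset.univ.biUnion F, ?_, ?_, ?_⟩
    · calc (Finset.univ.biUnion F).card ≤ ∑ i : Fin m, (F i).card :=
            Finset.card_biUnion_le
        _ ≤ ∑ _i : Fin m, m ^ k := Finset.sum_le_sum fun i _ => hFcard i
        _ = m ^ (k + 1) := by simp [pow_succ, mul_comm]
    · intro y hy
      obtain ⟨i, hi⟩ := Set.mem_iUnion.mp (hcov hy)
      have : y ∈ f i ∩ base := ⟨hi, hY hy⟩
      have := hFcov i this
      simp only [Set.mem_iUnion] at this ⊢
      obtain ⟨s, hs, hys⟩ := this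
      exact ⟨s, Finset.mem_biUnion.mpr ⟨i, Finset.mem_univ _, hs⟩, hys⟩
    · intro s hs
      obtain ⟨i, _, hsi⟩ := Finset.mem_biUnion.mp hs
      have h1 : (2 : ℝ≥0∞) ^ k * EMetric.diam s ≤ EMetric.diam (f i ∩ base) :=
        hFdiam i s hsi
      have h2 : EMetric.diam (f i ∩ base) ≤ EMetric.diam Y / 2 :=
        le_trans (EMetric.diam_mono Set.inter_subset_left) (hdiam i)
      calc (2 : ℝ≥0∞) ^ (k + 1) * EMetric.diam s
          = 2 * ((2 : ℝ≥0∞) ^ k * EMetric.diam s) := by ring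
        _ ≤ 2 * (EMetric.diam Y / 2) := by
            exact mul_le_mul_right (h1.trans h2) 2
        _ = EMetric.diam Y := ENNReal.mul_div_cancel' (by norm_num) (by norm_num)

/-- Cauchy–Schwarz style fiber-counting. -/
lemma aux_fiber_count {ι α : Type*} [DecidableEq ι] [DecidableEq α]
    (S : Finset ι) (g : ι → α) (F : Finset α) (hg : ∀ i ∈ S, g i ∈ F) :
    ((S.card : ℝ)) ^ 2 ≤
      (F.card : ℝ) * (((S ×ˢ S).filter fun p => g p.1 = g p.2).card : ℝ) := by
  classical
  have hcard : S.card = ∑ s ∈ F, (S.filter fun i => g i = s).card :=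
    Finset.card_eq_sum_card_fiberwise hg
  set T := (S ×ˢ S).filter fun p => g p.1 = g p.2 with hT
  have hTcard : T.card = ∑ s ∈ F, ((S.filter fun i => g i = s).card) ^ 2 := by
    have h1 : T.card = ∑ s ∈ F, (T.filter fun p => g p.1 = s).card :=
      Finset.card_eq_sum_card_fiberwise (by
        intro p hp
        rw [hT, Finset.mem_coe, Finset.mem_filter, Finset.mem_product] at hp
        exact hg p.1 hp.1.1)
    rw [h1]
    refine Finset.sum_congr rfl fun s _ => ?_
    have : T.filter (fun p => g p.1 = s) =
        (S.filter fun i => g i = s) ×ˢ (S.filter fun i => g i = s) := by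
      ext p
      simp only [hT, Finset.mem_filter, Finset.mem_product]
      constructor
      · rintro ⟨⟨⟨h1, h2⟩, h3⟩, h4⟩
        exact ⟨⟨h1, h4⟩, h2, h3 ▸ h4⟩
      · rintro ⟨⟨h1, h2⟩, h3, h4⟩
        exact ⟨⟨⟨h1, h3⟩, by rw [h2, h4]⟩, h2⟩
    rw [this, Finset.card_product, sq]
  have CS : ((∑ s ∈ F, ((S.filter fun i => g i = s).card : ℝ))) ^ 2 ≤
      (F.card : ℝ) * ∑ s ∈ F, ((S.filter fun i => g i = s).card : ℝ) ^ 2 :=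
    sq_sum_le_card_mul_sum_sq
  calc ((S.card : ℝ)) ^ 2
      = ((∑ s ∈ F, ((S.filter fun i => g i = s).card : ℝ))) ^ 2 := by
        rw [hcard]; push_cast; ring
    _ ≤ (F.card : ℝ) * ∑ s ∈ F, ((S.filter fun i => g i = s).card : ℝ) ^ 2 := CS
    _ = (F.card : ℝ) * (T.card : ℝ) := by rw [hTcard]; push_cast; ring

/-- Doubling-dimension counting bound: if `{x₀, x₁, …, xₙ}` has doubling dimension
at most `d₀ + 1` and `N_β` is the number of `βr`-near pairs among `x₁, …, xₙ`, then
for every `D ≥ 0` the number of points within distance `D` of `x₀` is at most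
`(1 + 4D/(βr))^{(d₀+1)/2} · √(2N_β + 2n)`. -/
theorem doubling_near_count_upper_bound {d n : ℕ} (hn : 0 < n)
    (x₀ : EuclideanSpace ℝ (Fin d)) (x : Fin n → EuclideanSpace ℝ (Fin d))
    (β r : ℝ) (hβ : 0 < β) (hr : 0 < r) (d₀ : ℕ)
    (hdbl : ∀ Y : Set (EuclideanSpace ℝ (Fin d)), Y ⊆ insert x₀ (Set.range x) →
      ∃ f : Fin (2 ^ (d₀ + 1)) → Set (EuclideanSpace ℝ (Fin d)),
        Y ⊆ ⋃ i, f i ∧ ∀ i, EMetric.diam (f i) ≤ EMetric.diam Y / 2)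
    (Nβ : ℕ)
    (hNβ : Nβ = (Finset.univ.filter fun ij : Fin n × Fin n =>
        ij.1 < ij.2 ∧ dist (x ij.1) (x ij.2) ≤ β * r).card)
    (D : ℝ) (hD : 0 ≤ D) :
    ((Finset.univ.filter fun i : Fin n => dist (x i) x₀ ≤ D).card : ℝ) ≤
      (1 + 4 * D / (β * r)) ^ (((d₀ : ℝ) + 1) / 2) *
        Real.sqrt (2 * (Nβ : ℝ) + 2 * (n : ℝ)) := by
  classical
  have hβr : 0 < β * r := mul_pos hβ hr
  -- choose k
  obtain ⟨k, hk1, hk2⟩ := aux_exists_pow_between (2 * D / (β * r))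
    (by positivity)
  -- hk1 : 2D/(βr) ≤ 2^k, hk2 : 2^k ≤ 1 + 4D/(βr)
  have hk2' : (2 : ℝ) ^ k ≤ 1 + 4 * D / (β * r) := by
    have : 2 * (2 * D / (β * r)) = 4 * D / (β * r) := by ring
    linarith [hk2, this ▸ hk2]
  set S := Finset.univ.filter fun i : Fin n => dist (x i) x₀ ≤ D with hS
  set Y : Set (EuclideanSpace ℝ (Fin d)) := x '' {i : Fin n | dist (x i) x₀ ≤ D}
    with hYdef
  have hYsub : Y ⊆ insert x₀ (Set.range x) := by
    rintro y ⟨i, _, rfl⟩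
    exact Set.mem_insert_iff.mpr (Or.inr ⟨i, rfl⟩)
  -- diameter of Y
  have hYdiam : EMetric.diam Y ≤ ENNReal.ofReal (2 * D) := by
    apply EMetric.diam_le
    rintro a ⟨i, hi, rfl⟩ b ⟨j, hj, rfl⟩
    have : dist (x i) (x j) ≤ 2 * D := by
      calc dist (x i) (x j) ≤ dist (x i) x₀ + dist x₀ (x j) := dist_triangle _ _ _
        _ ≤ D + D := add_le_add hi (by rw [dist_comm]; exact hj)
        _ = 2 * D := by ring
    rw [edist_dist]
    exact ENNReal.ofReal_le_ofReal this
  obtain ⟨F, hFcard, hFcov, hFdiam⟩ :=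
    aux_iter_cover (insert x₀ (Set.range x)) (2 ^ (d₀ + 1)) hdbl k Y hYsub
  -- each piece has small diameter
  have hpiece : ∀ s ∈ F, EMetric.diam s ≤ ENNReal.ofReal (β * r) := by
    intro s hs
    have h1 : (2 : ℝ≥0∞) ^ k * EMetric.diam s ≤ ENNReal.ofReal (2 * D) :=
      (hFdiam s hs).trans hYdiam
    have h2D : 2 * D ≤ β * r * 2 ^ k := by
      have := (div_le_iff₀ hβr).mp hk1
      linarith
    have h2 : ENNReal.ofReal (2 * D) ≤ (2 : ℝ≥0∞) ^ k * ENNReal.ofReal (β * r) := by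
      calc ENNReal.ofReal (2 * D) ≤ ENNReal.ofReal (β * r * 2 ^ k) :=
            ENNReal.ofReal_le_ofReal h2D
        _ = ENNReal.ofReal (β * r) * ENNReal.ofReal ((2 : ℝ) ^ k) := by
            rw [ENNReal.ofReal_mul hβr.le]
        _ = (2 : ℝ≥0∞) ^ k * ENNReal.ofReal (β * r) := by
            rw [mul_comm]
            congr 1
            rw [ENNReal.ofReal_pow (by norm_num)]
            norm_num
    have h3 : (2 : ℝ≥0∞) ^ k * EMetric.diam s ≤
        (2 : ℝ≥0∞) ^ k * ENNReal.ofReal (β * r) := h1.trans h2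
    exact (ENNReal.mul_le_mul_iff_right (by positivity) (by
      exact ENNReal.pow_ne_top (by norm_num))).mp h3
  -- choose a piece for each point of S
  have hgex : ∀ i ∈ S, ∃ s ∈ F, x i ∈ s := by
    intro i hi
    rw [hS, Finset.mem_filter] at hi
    have : x i ∈ Y := ⟨i, hi.2, rfl⟩
    have := hFcov this
    simpa using this
  choose! g hgF hgmem using hgex
  -- near pairs
  have hnear : ∀ p : Fin n × Fin n, p ∈ (S ×ˢ S).filter
      (fun p => g p.1 = g p.2) → dist (x p.1) (x p.2) ≤ β * r := by
    intro p hp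
    rw [Finset.mem_filter, Finset.mem_product] at hp
    obtain ⟨⟨h1, h2⟩, h3⟩ := hp
    have hd : edist (x p.1) (x p.2) ≤ EMetric.diam (g p.1) :=
      EMetric.edist_le_diam_of_mem (hgmem p.1 h1) (h3 ▸ hgmem p.2 h2)
    have := hd.trans (hpiece _ (hgF p.1 h1))
    rw [edist_dist] at this
    exact (ENNReal.ofReal_le_ofReal_iff hβr.le).mp this
  -- count T
  set T := (S ×ˢ S).filter (fun p => g p.1 = g p.2) with hTdef
  have hTbound : (T.card : ℝ) ≤ 2 * (Nβ : ℝ) + 2 * (n : ℝ) := by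
    set A := Finset.univ.filter fun ij : Fin n × Fin n =>
        ij.1 < ij.2 ∧ dist (x ij.1) (x ij.2) ≤ β * r with hA
    set A' := Finset.univ.filter fun ij : Fin n × Fin n =>
        ij.2 < ij.1 ∧ dist (x ij.1) (x ij.2) ≤ β * r with hA'
    set Δ := Finset.univ.filter fun ij : Fin n × Fin n => ij.1 = ij.2 with hΔ
    have hsub : T ⊆ A ∪ A' ∪ Δ := by
      intro p hp
      have hdp := hnear p hp
      rcases lt_trichotomy p.1 p.2 with h | h | h
      · exact Finset.mem_union_left _ (Finset.mem_union_left _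
          (Finset.mem_filter.mpr ⟨Finset.mem_univ _, h, hdp⟩))
      · exact Finset.mem_union_right _
          (Finset.mem_filter.mpr ⟨Finset.mem_univ _, h⟩)
      · exact Finset.mem_union_left _ (Finset.mem_union_right _
          (Finset.mem_filter.mpr ⟨Finset.mem_univ _, h, hdp⟩))
    have hA'card : A'.card = Nβ := by
      rw [hNβ]
      apply Finset.card_bij (fun p _ => p.swap)
      · intro p hp
        rw [hA', Finset.mem_filter] at hp
        refine Finset.mem_filter.mpr ⟨Finset.mem_univ _, hp.2.1, ?_⟩
        rw [dist_comm]; exact hp.2.2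
      · intro p _ q _ h
        exact Prod.swap_injective h
      · intro p hp
        rw [Finset.mem_filter] at hp
        refine ⟨p.swap, Finset.mem_filter.mpr ⟨Finset.mem_univ _, hp.2.1, ?_⟩, by simp⟩
        rw [dist_comm]; exact hp.2.2
    have hΔcard : Δ.card = n := by
      rw [hΔ]
      rw [show (Finset.univ.filter fun ij : Fin n × Fin n => ij.1 = ij.2)
          = Finset.univ.diag by ext p; simp [Finset.mem_diag]]
      rw [Finset.diag_card, Finset.card_univ, Fintype.card_fin]
    have : T.card ≤ Nβ + Nβ + n := by
      calc T.card ≤ (A ∪ A' ∪ Δ).card := Finset.card_le_card hsub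
        _ ≤ (A ∪ A').card + Δ.card := Finset.card_union_le _ _
        _ ≤ A.card + A'.card + Δ.card := by
            exact add_le_add_left (Finset.card_union_le _ _) _
        _ = Nβ + Nβ + n := by rw [hA'card, hΔcard, hA, ← hNβ]
    calc (T.card : ℝ) ≤ ((Nβ + Nβ + n : ℕ) : ℝ) := by exact_mod_cast this
      _ ≤ 2 * (Nβ : ℝ) + 2 * (n : ℝ) := by push_cast; linarith [Nat.cast_nonneg (α := ℝ) n]
  -- Cauchy-Schwarz
  have hCS : ((S.card : ℝ)) ^ 2 ≤ (F.card : ℝ) * (T.card : ℝ) :=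
    aux_fiber_count S g F hgF
  have hFcardR : (F.card : ℝ) ≤ ((2 : ℝ) ^ k) ^ (d₀ + 1) := by
    calc (F.card : ℝ) ≤ ((2 ^ (d₀ + 1)) ^ k : ℕ) := by exact_mod_cast hFcard
      _ = ((2 : ℝ) ^ k) ^ (d₀ + 1) := by push_cast; rw [← pow_mul, ← pow_mul, Nat.mul_comm]
  have hC0 : (0 : ℝ) ≤ 2 * (Nβ : ℝ) + 2 * (n : ℝ) := by positivity
  have hbase : (0 : ℝ) ≤ (2 : ℝ) ^ k := by positivity
  have hkey : ((S.card : ℝ)) ^ 2 ≤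
      ((2 : ℝ) ^ k) ^ (d₀ + 1) * (2 * (Nβ : ℝ) + 2 * (n : ℝ)) := by
    calc ((S.card : ℝ)) ^ 2 ≤ (F.card : ℝ) * (T.card : ℝ) := hCS
      _ ≤ ((2 : ℝ) ^ k) ^ (d₀ + 1) * (2 * (Nβ : ℝ) + 2 * (n : ℝ)) := by
          apply mul_le_mul hFcardR hTbound (by positivity) (by positivity)
  -- conclude
  have hsqrt : (S.card : ℝ) ≤
      Real.sqrt (((2 : ℝ) ^ k) ^ (d₀ + 1)) *
        Real.sqrt (2 * (Nβ : ℝ) + 2 * (n : ℝ)) := by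
    rw [← Real.sqrt_mul (by positivity)]
    calc (S.card : ℝ) = Real.sqrt ((S.card : ℝ) ^ 2) := by
          rw [Real.sqrt_sq (by positivity)]
      _ ≤ _ := Real.sqrt_le_sqrt hkey
  have hpow : Real.sqrt (((2 : ℝ) ^ k) ^ (d₀ + 1)) ≤
      (1 + 4 * D / (β * r)) ^ (((d₀ : ℝ) + 1) / 2) := by
    rw [Real.sqrt_eq_rpow, ← Real.rpow_natCast ((2:ℝ)^k) (d₀ + 1),
      ← Real.rpow_mul hbase]
    have hexp : ((d₀ + 1 : ℕ) : ℝ) * (1/2) = ((d₀ : ℝ) + 1) / 2 := by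
      push_cast; ring
    rw [hexp]
    apply Real.rpow_le_rpow hbase hk2' (by positivity)
  calc ((S.card : ℝ)) ≤ _ := hsqrt
    _ ≤ (1 + 4 * D / (β * r)) ^ (((d₀ : ℝ) + 1) / 2) *
        Real.sqrt (2 * (Nβ : ℝ) + 2 * (n : ℝ)) := by
        apply mul_le_mul_of_nonneg_right hpow (Real.sqrt_nonneg _)
end

section
/- Let x_0, x_1, …, x_n ∈ ℝ^d, let r > 0, α ≥ 1, η > 0, β > 0 and p ∈ (0,1), let ρ : [α, ∞) → (0, ∞) be a monotonically decreasing function, and let N_β = |{(i,j) : 1 ≤ i < j ≤ n, ‖x_i − x_j‖₂ ≤ βr}|. Suppose the finite set {x_0, x_1, …, x_n} (with the Euclidean metric) has doubling dimension at most d_0 + 1, i.e., every subset Y of it can be covered by at most 2^{d_0+1} subsets each of diameter at most half the diameter of Y. Then Σ_{i : ‖x_i − x_0‖₂ ≥ αr} p^{1/ρ(‖x_i − x_0‖₂ / r)} ≤ p^{1/ρ(α)} · (1 + 4(α+η)/β)^{(d_0+1)/2} · √(2N_β + 2n) + p^{1/ρ(α+η)} · n. -/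
open Finset

lemma iter_cover {E : Type*} [PseudoEMetricSpace E] {K : ℕ} (X : Set E)
    (hdbl : ∀ Y : Set E, Y ⊆ X → ∃ f : Fin K → Set E,
      Y ⊆ ⋃ i, f i ∧ ∀ i, EMetric.diam (f i) ≤ EMetric.diam Y / 2)
    (Y : Set E) (hY : Y ⊆ X) (t : ℕ) :
    ∃ f : Fin (K ^ t) → Set E, Y ⊆ ⋃ i, f i ∧
      ∀ i, EMetric.diam (f i) ≤ EMetric.diam Y / 2 ^ t := by
  induction t with
  | zero =>
    exact ⟨fun _ => Y, Set.subset_iUnion (fun _ : Fin (K^0) => Y) ⟨0, by norm_num⟩,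
      fun i => by simp⟩
  | succ t ih =>
    obtain ⟨f, hcov, hdiam⟩ := ih
    choose g hgcov hgdiam using fun i => hdbl (f i ∩ Y) ((Set.inter_subset_right).trans hY)
    refine ⟨fun m => (fun q : Fin (K^t) × Fin K => g q.1 q.2)
      (finProdFinEquiv.symm (Fin.cast (pow_succ K t) m)), ?_, ?_⟩
    · intro y hy
      obtain ⟨s, ⟨i, rfl⟩, hs⟩ := hcov hy
      obtain ⟨s, ⟨j, rfl⟩, hj⟩ := hgcov i ⟨hs, hy⟩
      refine Set.mem_iUnion.2 ⟨Fin.cast (pow_succ K t).symm (finProdFinEquiv (i, j)), ?_⟩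
      simp [hj]
    · intro m
      set q := finProdFinEquiv.symm (Fin.cast (pow_succ K t) m)
      calc EMetric.diam (g q.1 q.2) ≤ EMetric.diam (f q.1 ∩ Y) / 2 := hgdiam q.1 q.2
        _ ≤ (EMetric.diam Y / 2 ^ t) / 2 := by
            gcongr
            exact (EMetric.diam_mono Set.inter_subset_left).trans (hdiam q.1)
        _ = EMetric.diam Y / 2 ^ (t + 1) := by
            rw [pow_succ, div_eq_mul_inv, div_eq_mul_inv, div_eq_mul_inv,
              ENNReal.mul_inv (Or.inl (pow_ne_zero _ two_ne_zero)) (Or.inr two_ne_zero),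
              mul_assoc]

/-- Doubling-dimension version of Lemma 3: if `{x₀, x₁, …, xₙ}` has doubling
dimension at most `d₀ + 1`, then for a decreasing positive exponent `ρ` on `[α,∞)`
and `p ∈ (0,1)`,
`Σ_{i : ‖x_i − x₀‖ ≥ αr} p^{1/ρ(‖x_i − x₀‖/r)}
  ≤ p^{1/ρ(α)} (1 + 4(α+η)/β)^{(d₀+1)/2} √(2N_β + 2n) + p^{1/ρ(α+η)} n`. -/
theorem doubling_lsh_sum_bound {d n : ℕ}
    (x₀ : EuclideanSpace ℝ (Fin d)) (x : Fin n → EuclideanSpace ℝ (Fin d))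
    (r α η β p : ℝ) (hr : 0 < r) (hα : 1 ≤ α) (hη : 0 < η) (hβ : 0 < β)
    (hp0 : 0 < p) (hp1 : p < 1)
    (ρ : ℝ → ℝ) (hρpos : ∀ s, α ≤ s → 0 < ρ s) (hρdec : AntitoneOn ρ (Set.Ici α))
    (d₀ : ℕ)
    (hdbl : ∀ Y : Set (EuclideanSpace ℝ (Fin d)), Y ⊆ insert x₀ (Set.range x) →
      ∃ f : Fin (2 ^ (d₀ + 1)) → Set (EuclideanSpace ℝ (Fin d)),
        Y ⊆ ⋃ i, f i ∧ ∀ i, EMetric.diam (f i) ≤ EMetric.diam Y / 2)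
    (Nβ : ℕ)
    (hNβ : Nβ = (Finset.univ.filter fun ij : Fin n × Fin n =>
        ij.1 < ij.2 ∧ dist (x ij.1) (x ij.2) ≤ β * r).card) :
    ∑ i ∈ Finset.univ.filter fun i : Fin n => α * r ≤ dist (x i) x₀,
        p ^ ((1 : ℝ) / ρ (dist (x i) x₀ / r)) ≤
      p ^ ((1 : ℝ) / ρ α) * (1 + 4 * (α + η) / β) ^ (((d₀ : ℝ) + 1) / 2) *
          Real.sqrt (2 * (Nβ : ℝ) + 2 * (n : ℝ)) +
        p ^ ((1 : ℝ) / ρ (α + η)) * (n : ℝ) := by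
  have hαη : (0:ℝ) < α + η := by linarith
  set A : Finset (Fin n) := Finset.univ.filter fun i => α * r ≤ dist (x i) x₀ with hA
  set S : Finset (Fin n) := A.filter fun i => dist (x i) x₀ < (α + η) * r with hS
  set F : Finset (Fin n) := A.filter fun i => ¬ dist (x i) x₀ < (α + η) * r with hF
  -- pointwise bounds
  have hterm_near : ∀ i ∈ S, p ^ ((1:ℝ) / ρ (dist (x i) x₀ / r)) ≤ p ^ ((1:ℝ) / ρ α) := by
    intro i hi
    have hid : α ≤ dist (x i) x₀ / r := by
      rw [le_div_iff₀ hr]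
      exact (Finset.mem_filter.1 (Finset.mem_filter.1 hi).1).2
    have h1 : ρ (dist (x i) x₀ / r) ≤ ρ α :=
      hρdec Set.self_mem_Ici hid hid
    apply Real.rpow_le_rpow_of_exponent_ge hp0 hp1.le
    exact one_div_le_one_div_of_le (hρpos _ hid) h1
  have hterm_far : ∀ i ∈ F, p ^ ((1:ℝ) / ρ (dist (x i) x₀ / r)) ≤ p ^ ((1:ℝ) / ρ (α + η)) := by
    intro i hi
    have hge : (α + η) * r ≤ dist (x i) x₀ := not_lt.1 (Finset.mem_filter.1 hi).2
    have hid : α + η ≤ dist (x i) x₀ / r := by rw [le_div_iff₀ hr]; exact hge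
    have hαd : α ≤ dist (x i) x₀ / r := by linarith
    have h1 : ρ (dist (x i) x₀ / r) ≤ ρ (α + η) :=
      hρdec (by simp; linarith) hαd hid
    apply Real.rpow_le_rpow_of_exponent_ge hp0 hp1.le
    exact one_div_le_one_div_of_le (hρpos _ hαd) h1
  -- covering
  have ex : ∃ t : ℕ, 2 * (α + η) / β ≤ (2:ℝ) ^ t :=
    (pow_unbounded_of_one_lt _ one_lt_two).imp fun t h => h.le
  obtain ⟨t, ht, ht2⟩ : ∃ t : ℕ, 2 * (α + η) / β ≤ (2:ℝ) ^ t ∧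
      (2:ℝ) ^ t ≤ 1 + 4 * (α + η) / β := by
    refine ⟨Nat.find ex, Nat.find_spec ex, ?_⟩
    rcases Nat.eq_zero_or_pos (Nat.find ex) with h0 | hpos
    · rw [h0]; simp; positivity
    · obtain ⟨s, hs⟩ : ∃ s, Nat.find ex = s + 1 :=
        ⟨Nat.find ex - 1, (Nat.succ_pred_eq_of_pos hpos).symm⟩
      have hmin := Nat.find_min ex (by omega : s < Nat.find ex)
      push_neg at hmin
      have h2 : (2:ℝ) ^ (s+1) < 4 * (α + η) / β := by
        rw [pow_succ]
        calc (2:ℝ)^s * 2 < (2 * (α+η)/β) * 2 := by nlinarith [hmin]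
          _ = 4 * (α+η)/β := by ring
      rw [hs]
      linarith
  set Y : Set (EuclideanSpace ℝ (Fin d)) := x '' {i : Fin n | i ∈ S} with hY
  have hYsub : Y ⊆ insert x₀ (Set.range x) := by
    rintro y ⟨i, _, rfl⟩; exact Set.mem_insert_iff.2 (Or.inr ⟨i, rfl⟩)
  have hdiamY : EMetric.diam Y ≤ ENNReal.ofReal (2 * (α + η) * r) := by
    apply EMetric.diam_le
    rintro y ⟨i, hi, rfl⟩ z ⟨j, hj, rfl⟩
    rw [edist_dist]
    apply ENNReal.ofReal_le_ofReal
    have h1 : dist (x i) x₀ < (α + η) * r := (Finset.mem_filter.1 (show i ∈ S from hi)).2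
    have h2 : dist (x j) x₀ < (α + η) * r := (Finset.mem_filter.1 (show j ∈ S from hj)).2
    calc dist (x i) (x j) ≤ dist (x i) x₀ + dist x₀ (x j) := dist_triangle _ _ _
      _ ≤ 2 * (α + η) * r := by rw [dist_comm x₀]; linarith
  obtain ⟨cf, hcov, hdiam⟩ := iter_cover _ hdbl Y hYsub t
  have hKpos : 0 < (2 ^ (d₀ + 1)) ^ t := by positivity
  have hdiam' : ∀ k, EMetric.diam (cf k) ≤ ENNReal.ofReal (β * r) := by
    intro k
    refine (hdiam k).trans ?_
    rw [ENNReal.div_le_iff (pow_ne_zero _ two_ne_zero)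
      (ENNReal.pow_ne_top ENNReal.ofNat_ne_top)]
    refine hdiamY.trans ?_
    have h2 : ((2 : ENNReal)) ^ t = ENNReal.ofReal ((2:ℝ) ^ t) := by
      rw [ENNReal.ofReal_pow (by norm_num)]; norm_num
    rw [h2, ← ENNReal.ofReal_mul (by positivity)]
    apply ENNReal.ofReal_le_ofReal
    have : 2 * (α + η) ≤ (2:ℝ) ^ t * β := by
      rw [div_le_iff₀ hβ] at ht; linarith
    calc 2 * (α + η) * r ≤ ((2:ℝ)^t * β) * r := by nlinarith
      _ = β * r * 2 ^ t := by ring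
  -- assignment of points to cover pieces
  have hgex : ∀ i : Fin n, ∃ k, i ∈ S → x i ∈ cf k := by
    intro i
    by_cases hi : i ∈ S
    · have : x i ∈ Y := ⟨i, hi, rfl⟩
      obtain ⟨k, hk⟩ := Set.mem_iUnion.1 (hcov this)
      exact ⟨k, fun _ => hk⟩
    · exact ⟨⟨0, hKpos⟩, fun c => absurd c hi⟩
  choose g hgg using hgex
  have hg : ∀ i ∈ S, x i ∈ cf (g i) := fun i hi => hgg i hi
  have hclose : ∀ i ∈ S, ∀ j ∈ S, g i = g j → dist (x i) (x j) ≤ β * r := by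
    intro i hi j hj hij
    have h1 : x i ∈ cf (g i) := hg i hi
    have h2 : x j ∈ cf (g i) := hij ▸ hg j hj
    have := (EMetric.edist_le_diam_of_mem h1 h2).trans (hdiam' (g i))
    rw [edist_dist] at this
    exact (ENNReal.ofReal_le_ofReal_iff (by positivity)).1 this
  -- fiber counting
  set m : Fin ((2 ^ (d₀ + 1)) ^ t) → ℕ := fun k => (S.filter fun i => g i = k).card with hm
  have hsumS : S.card = ∑ k, m k :=
    Finset.card_eq_sum_card_fiberwise (fun i _ => Finset.mem_univ (g i))
  set T : Finset (Fin n × Fin n) := (S ×ˢ S).filter fun ij => g ij.1 = g ij.2 with hT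
  have hTsq : ∑ k, (m k) ^ 2 = T.card := by
    have hTb : T = Finset.univ.biUnion fun k =>
        (S.filter fun i => g i = k) ×ˢ (S.filter fun i => g i = k) := by
      ext ij
      simp only [hT, Finset.mem_filter, Finset.mem_product, Finset.mem_biUnion,
        Finset.mem_univ, true_and]
      constructor
      · rintro ⟨⟨h1, h2⟩, h3⟩; exact ⟨g ij.1, ⟨h1, rfl⟩, ⟨h2, h3.symm⟩⟩
      · rintro ⟨k, ⟨h1, hk1⟩, ⟨h2, hk2⟩⟩; exact ⟨⟨h1, h2⟩, by rw [hk1, hk2]⟩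
    rw [hTb, Finset.card_biUnion]
    · apply Finset.sum_congr rfl
      intro k _
      rw [Finset.card_product, sq]
    · intro k _ l _ hkl
      simp only [Finset.disjoint_left]
      rintro ij hij hij'
      simp only [Finset.mem_product, Finset.mem_filter] at hij hij'
      exact hkl (hij.1.2.symm.trans hij'.1.2)
  have hTcard : T.card ≤ 2 * Nβ + S.card := by
    have hsplit : T ⊆ (T.filter fun ij => ij.1 < ij.2) ∪
        ((T.filter fun ij => ij.2 < ij.1) ∪ (T.filter fun ij => ij.1 = ij.2)) := by
      intro ij hij
      rcases lt_trichotomy ij.1 ij.2 with h | h | h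
      · exact Finset.mem_union_left _ (Finset.mem_filter.2 ⟨hij, h⟩)
      · exact Finset.mem_union_right _
          (Finset.mem_union_right _ (Finset.mem_filter.2 ⟨hij, h⟩))
      · exact Finset.mem_union_right _
          (Finset.mem_union_left _ (Finset.mem_filter.2 ⟨hij, h⟩))
    have h1 : (T.filter fun ij => ij.1 < ij.2).card ≤ Nβ := by
      rw [hNβ]
      apply Finset.card_le_card
      intro ij hij
      simp only [Finset.mem_filter, hT, Finset.mem_product, Finset.mem_univ, true_and] at hij ⊢
      exact ⟨hij.2, hclose _ hij.1.1.1 _ hij.1.1.2 hij.1.2⟩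
    have h2 : (T.filter fun ij => ij.2 < ij.1).card ≤ Nβ := by
      rw [hNβ]
      apply Finset.card_le_card_of_injOn (fun ij => (ij.2, ij.1))
      · intro ij hij
        simp only [Finset.mem_coe, Finset.mem_filter, hT, Finset.mem_product, Finset.mem_univ, true_and]
          at hij ⊢
        exact ⟨hij.2, by rw [dist_comm]; exact hclose _ hij.1.1.1 _ hij.1.1.2 hij.1.2⟩
      · rintro ⟨a, b⟩ _ ⟨c, e⟩ _ h
        simp only [Prod.mk.injEq] at h
        simp [h.1, h.2]
    have h3 : (T.filter fun ij => ij.1 = ij.2).card ≤ S.card := by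
      apply Finset.card_le_card_of_injOn (fun ij => ij.1)
      · intro ij hij
        simp only [Finset.mem_coe, Finset.mem_filter, hT, Finset.mem_product] at hij
        exact hij.1.1.1
      · rintro ⟨a, b⟩ ha ⟨c, e⟩ hc h
        simp only [Finset.mem_coe, Finset.mem_filter] at ha hc
        simp only at h
        rw [Prod.mk.injEq]
        exact ⟨h, by rw [← ha.2, ← hc.2, h]⟩
    calc T.card ≤ _ := Finset.card_le_card hsplit
      _ ≤ (T.filter fun ij => ij.1 < ij.2).card +
          ((T.filter fun ij => ij.2 < ij.1).card + (T.filter fun ij => ij.1 = ij.2).card) :=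
        (Finset.card_union_le _ _).trans (by gcongr; exact Finset.card_union_le _ _)
      _ ≤ Nβ + (Nβ + S.card) := by gcongr
      _ = 2 * Nβ + S.card := by ring
  -- Cauchy–Schwarz
  have hCS : S.card ^ 2 ≤ (2 ^ (d₀ + 1)) ^ t * (2 * Nβ + 2 * n) := by
    have h1 : (∑ k, 1 * m k) ^ 2 ≤ (∑ k : Fin ((2 ^ (d₀ + 1)) ^ t), 1 ^ 2) * ∑ k, (m k) ^ 2 :=
      Finset.sum_mul_sq_le_sq_mul_sq Finset.univ (fun _ => 1) m
    simp only [one_mul, one_pow, Finset.sum_const, Finset.card_univ, Fintype.card_fin,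
      smul_eq_mul, mul_one] at h1
    have hScard : S.card ≤ n := (Finset.card_filter_le _ _).trans
      ((Finset.card_filter_le _ _).trans (by simp))
    calc S.card ^ 2 = (∑ k, m k) ^ 2 := by rw [hsumS]
      _ ≤ (2 ^ (d₀ + 1)) ^ t * ∑ k, (m k) ^ 2 := h1
      _ ≤ (2 ^ (d₀ + 1)) ^ t * (2 * Nβ + S.card) := by
          rw [hTsq]; exact Nat.mul_le_mul_left _ hTcard
      _ ≤ (2 ^ (d₀ + 1)) ^ t * (2 * Nβ + 2 * n) := by
          apply Nat.mul_le_mul_left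
          omega
  -- real form of counting bound
  have hKreal : (((2 ^ (d₀ + 1)) ^ t : ℕ):ℝ) ≤ (1 + 4 * (α + η) / β) ^ (d₀ + 1) := by
    have heq : (((2 ^ (d₀ + 1)) ^ t : ℕ):ℝ) = ((2:ℝ) ^ t) ^ (d₀ + 1) := by
      push_cast; rw [← pow_mul, ← pow_mul, Nat.mul_comm]
    rw [heq]
    exact pow_le_pow_left₀ (by positivity) ht2 _
  have hcount : (S.card : ℝ) ≤ (1 + 4 * (α + η) / β) ^ (((d₀:ℝ) + 1) / 2) *
      Real.sqrt (2 * (Nβ:ℝ) + 2 * (n:ℝ)) := by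
    have h1 : (S.card : ℝ) ≤
        Real.sqrt ((((2 ^ (d₀ + 1)) ^ t : ℕ):ℝ) * (2 * Nβ + 2 * n)) := by
      rw [← Real.sqrt_sq (by positivity : (0:ℝ) ≤ (S.card:ℝ))]
      apply Real.sqrt_le_sqrt
      calc ((S.card:ℝ))^2 = ((S.card ^ 2 : ℕ) : ℝ) := by push_cast; ring
        _ ≤ (((2 ^ (d₀ + 1)) ^ t * (2 * Nβ + 2 * n) : ℕ) : ℝ) := by exact_mod_cast hCS
        _ = (((2 ^ (d₀ + 1)) ^ t : ℕ):ℝ) * (2 * Nβ + 2 * n) := by push_cast; ring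
    rw [Real.sqrt_mul (by positivity)] at h1
    refine h1.trans ?_
    gcongr
    have hb : (0:ℝ) ≤ 1 + 4 * (α + η) / β := by positivity
    have h2 : (1 + 4 * (α + η) / β) ^ (((d₀:ℝ) + 1) / 2) =
        Real.sqrt ((1 + 4 * (α + η) / β) ^ (d₀ + 1)) := by
      rw [Real.sqrt_eq_rpow, ← Real.rpow_natCast (1 + 4 * (α + η) / β) (d₀ + 1),
        ← Real.rpow_mul hb]
      push_cast
      ring_nf
    rw [h2]
    exact Real.sqrt_le_sqrt hKreal
  -- assemble
  have hsplit := Finset.sum_filter_add_sum_filter_not A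
    (fun i => dist (x i) x₀ < (α + η) * r) (fun i => p ^ ((1:ℝ) / ρ (dist (x i) x₀ / r)))
  have hpα : (0:ℝ) < p ^ ((1:ℝ) / ρ α) := Real.rpow_pos_of_pos hp0 _
  have hpαη : (0:ℝ) < p ^ ((1:ℝ) / ρ (α + η)) := Real.rpow_pos_of_pos hp0 _
  have hnear : ∑ i ∈ S, p ^ ((1:ℝ) / ρ (dist (x i) x₀ / r)) ≤
      (S.card : ℝ) * p ^ ((1:ℝ) / ρ α) := by
    calc ∑ i ∈ S, p ^ ((1:ℝ) / ρ (dist (x i) x₀ / r)) ≤ ∑ i ∈ S, p ^ ((1:ℝ) / ρ α) :=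
        Finset.sum_le_sum hterm_near
      _ = (S.card : ℝ) * p ^ ((1:ℝ) / ρ α) := by rw [Finset.sum_const, nsmul_eq_mul]
  have hFcard : (F.card : ℝ) ≤ n := by
    exact_mod_cast (Finset.card_filter_le _ _).trans
      ((Finset.card_filter_le _ _).trans (by simp))
  have hfar : ∑ i ∈ F, p ^ ((1:ℝ) / ρ (dist (x i) x₀ / r)) ≤
      p ^ ((1:ℝ) / ρ (α + η)) * n := by
    calc ∑ i ∈ F, p ^ ((1:ℝ) / ρ (dist (x i) x₀ / r)) ≤ ∑ i ∈ F, p ^ ((1:ℝ) / ρ (α + η)) :=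
        Finset.sum_le_sum hterm_far
      _ = (F.card : ℝ) * p ^ ((1:ℝ) / ρ (α + η)) := by rw [Finset.sum_const, nsmul_eq_mul]
      _ ≤ p ^ ((1:ℝ) / ρ (α + η)) * n := by
          rw [mul_comm]; exact mul_le_mul_of_nonneg_left hFcard hpαη.le
  calc ∑ i ∈ A, p ^ ((1:ℝ) / ρ (dist (x i) x₀ / r))
      = ∑ i ∈ S, p ^ ((1:ℝ) / ρ (dist (x i) x₀ / r)) +
        ∑ i ∈ F, p ^ ((1:ℝ) / ρ (dist (x i) x₀ / r)) := hsplit.symm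
    _ ≤ (S.card : ℝ) * p ^ ((1:ℝ) / ρ α) + p ^ ((1:ℝ) / ρ (α + η)) * n :=
        add_le_add hnear hfar
    _ ≤ p ^ ((1:ℝ) / ρ α) * (1 + 4 * (α + η) / β) ^ (((d₀:ℝ) + 1) / 2) *
          Real.sqrt (2 * (Nβ:ℝ) + 2 * (n:ℝ)) + p ^ ((1:ℝ) / ρ (α + η)) * n := by
        have := mul_le_mul_of_nonneg_right hcount hpα.le
        nlinarith [hcount, hpα.le]
end
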